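/- arXiv:1501.02871 — 7 statements merged into one kernel-verified Lean document; each statement's English description precedes it below -/
import Mathlib

section
/- Let A = (a_{ijkl}) be a partially symmetric (2,2)-th order n×n×m×m tensor. Then the optimal value of the conic program min{ A • Z : Z ∈ B_{n,m}, E • Z = 1 } equals p_A^min, the minimum of p_A over Δ_n × Δ_m; moreover the infimum in the conic program is attained. -/
/-- Factorization of the quadruple sum of a rank-one tensor. -/
lemma sum4_factor {n m : ℕ} (x : Fin n → ℝ) (y : Fin m → ℝ) :
    ∑ i, ∑ j, ∑ k, ∑ l, x i * x j * y k * y l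
      = (∑ i, x i) * (∑ j, x j) * ((∑ k, y k) * (∑ l, y l)) := by
  simp only [← Finset.sum_mul, ← Finset.mul_sum]
  ring

/-- The linear functional `Z ↦ A • Z`. -/
noncomputable def dotL {n m : ℕ} (A : Fin n → Fin n → Fin m → Fin m → ℝ) :
    (Fin n → Fin n → Fin m → Fin m → ℝ) →ₗ[ℝ] ℝ where
  toFun Z := ∑ i, ∑ j, ∑ k, ∑ l, A i j k l * Z i j k l
  map_add' Z W := by simp [mul_add, Finset.sum_add_distrib]
  map_smul' c Z := by
    simp only [Pi.smul_apply, smul_eq_mul, RingHom.id_apply, Finset.mul_sum, mul_left_comm]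

lemma dotL_apply {n m : ℕ} (A Z : Fin n → Fin n → Fin m → Fin m → ℝ) :
    dotL A Z = ∑ i, ∑ j, ∑ k, ∑ l, A i j k l * Z i j k l := rfl

/-- Key per-generator inequality. -/
lemma key_gen {n m : ℕ} (A : Fin n → Fin n → Fin m → Fin m → ℝ) (s : ℝ)
    (hs : ∀ x ∈ stdSimplex ℝ (Fin n), ∀ y ∈ stdSimplex ℝ (Fin m),
      s ≤ ∑ i, ∑ j, ∑ k, ∑ l, A i j k l * x i * x j * y k * y l)
    (x : Fin n → ℝ) (y : Fin m → ℝ) (hx : ∀ i, 0 ≤ x i) (hy : ∀ k, 0 ≤ y k) :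
    (∑ i, ∑ j, ∑ k, ∑ l, x i * x j * y k * y l) * s ≤
      ∑ i, ∑ j, ∑ k, ∑ l, A i j k l * (x i * x j * y k * y l) := by
  by_cases hc : (∑ i, x i) = 0
  · have hx0 : ∀ i, x i = 0 := by
      intro i
      have := (Finset.sum_eq_zero_iff_of_nonneg (fun i _ => hx i)).1 hc
      exact this i (Finset.mem_univ i)
    simp [hx0]
  by_cases hd : (∑ k, y k) = 0
  · have hy0 : ∀ k, y k = 0 := by
      intro k
      have := (Finset.sum_eq_zero_iff_of_nonneg (fun k _ => hy k)).1 hd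
      exact this k (Finset.mem_univ k)
    simp [hy0]
  have hcpos : 0 < ∑ i, x i :=
    lt_of_le_of_ne (Finset.sum_nonneg fun i _ => hx i) (Ne.symm hc)
  have hdpos : 0 < ∑ k, y k :=
    lt_of_le_of_ne (Finset.sum_nonneg fun k _ => hy k) (Ne.symm hd)
  set c := ∑ i, x i with hcdef
  set d := ∑ k, y k with hddef
  set x' : Fin n → ℝ := fun i => x i / c with hx'def
  set y' : Fin m → ℝ := fun k => y k / d with hy'def
  have hx' : x' ∈ stdSimplex ℝ (Fin n) := by
    refine ⟨fun i => div_nonneg (hx i) hcpos.le, ?_⟩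
    simp only [hx'def, ← Finset.sum_div]
    exact div_self hc
  have hy' : y' ∈ stdSimplex ℝ (Fin m) := by
    refine ⟨fun k => div_nonneg (hy k) hdpos.le, ?_⟩
    simp only [hy'def, ← Finset.sum_div]
    exact div_self hd
  have hval := hs x' hx' y' hy'
  -- rewrite both sides via homogeneity
  have hA : ∑ i, ∑ j, ∑ k, ∑ l, A i j k l * (x i * x j * y k * y l)
      = (c * c * (d * d)) * ∑ i, ∑ j, ∑ k, ∑ l, A i j k l * x' i * x' j * y' k * y' l := by
    simp only [Finset.mul_sum]
    refine Finset.sum_congr rfl fun i _ => ?_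
    refine Finset.sum_congr rfl fun j _ => ?_
    refine Finset.sum_congr rfl fun k _ => ?_
    refine Finset.sum_congr rfl fun l _ => ?_
    simp only [hx'def, hy'def]
    field_simp
  have hE : ∑ i, ∑ j, ∑ k, ∑ l, x i * x j * y k * y l = c * c * (d * d) := by
    rw [sum4_factor]
  rw [hA, hE]
  have hpos : (0:ℝ) ≤ c * c * (d * d) := by positivity
  exact mul_le_mul_of_nonneg_left hval hpos

/-- The conic program `min{ A • Z : Z ∈ B_{n,m}, E • Z = 1 }` attains
its infimum, and the optimal value equals `p_A^min`, the minimum of the bi-quadratic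
form `p_A` over `Δ_n × Δ_m`. -/
theorem conic_relaxation_exact (n m : ℕ) (hn : 0 < n) (hm : 0 < m)
    (A : Fin n → Fin n → Fin m → Fin m → ℝ)
    (hsym : ∀ i j k l, A i j k l = A j i k l ∧ A j i k l = A j i l k) :
    IsLeast {v : ℝ | ∃ Z ∈ convexHull ℝ {T : Fin n → Fin n → Fin m → Fin m → ℝ |
        ∃ (x : Fin n → ℝ) (y : Fin m → ℝ), (∀ i, 0 ≤ x i) ∧ (∀ k, 0 ≤ y k) ∧
          T = fun i j k l => x i * x j * y k * y l},
        (∑ i, ∑ j, ∑ k, ∑ l, Z i j k l) = 1 ∧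
        v = ∑ i, ∑ j, ∑ k, ∑ l, A i j k l * Z i j k l}
      (sInf {v : ℝ | ∃ x ∈ stdSimplex ℝ (Fin n), ∃ y ∈ stdSimplex ℝ (Fin m),
        v = ∑ i, ∑ j, ∑ k, ∑ l, A i j k l * x i * x j * y k * y l}) := by
  set f : (Fin n → ℝ) → (Fin m → ℝ) → ℝ :=
    fun x y => ∑ i, ∑ j, ∑ k, ∑ l, A i j k l * x i * x j * y k * y l with hf
  set T : Set ℝ := {v : ℝ | ∃ x ∈ stdSimplex ℝ (Fin n), ∃ y ∈ stdSimplex ℝ (Fin m),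
        v = f x y} with hT
  have hTimg : T = (fun p : (Fin n → ℝ) × (Fin m → ℝ) => f p.1 p.2) ''
      (stdSimplex ℝ (Fin n) ×ˢ stdSimplex ℝ (Fin m)) := by
    ext v
    constructor
    · rintro ⟨x, hx, y, hy, rfl⟩
      exact ⟨(x, y), ⟨hx, hy⟩, rfl⟩
    · rintro ⟨⟨x, y⟩, ⟨hx, hy⟩, rfl⟩
      exact ⟨x, hx, y, hy, rfl⟩
  have hcont : Continuous fun p : (Fin n → ℝ) × (Fin m → ℝ) => f p.1 p.2 := by
    simp only [hf]; fun_prop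
  have hcompact : IsCompact T := by
    rw [hTimg]
    exact ((isCompact_stdSimplex ℝ _).prod (isCompact_stdSimplex ℝ _)).image hcont
  have hne : T.Nonempty := by
    haveI : Nonempty (Fin n) := ⟨⟨0, hn⟩⟩
    haveI : Nonempty (Fin m) := ⟨⟨0, hm⟩⟩
    refine ⟨f (Pi.single (Classical.arbitrary (Fin n)) 1)
      (Pi.single (Classical.arbitrary (Fin m)) 1), ?_⟩
    exact ⟨_, single_mem_stdSimplex ℝ _, _, single_mem_stdSimplex ℝ _, rfl⟩
  have hbdd : BddBelow T := hcompact.bddBelow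
  have hmem : sInf T ∈ T := hcompact.sInf_mem hne
  have hs : ∀ x ∈ stdSimplex ℝ (Fin n), ∀ y ∈ stdSimplex ℝ (Fin m), sInf T ≤ f x y :=
    fun x hx y hy => csInf_le hbdd ⟨x, hx, y, hy, rfl⟩
  constructor
  · -- attainment
    obtain ⟨x, hx, y, hy, hval⟩ := hmem
    refine ⟨fun i j k l => x i * x j * y k * y l,
      subset_convexHull ℝ _ ⟨x, y, hx.1, hy.1, rfl⟩, ?_, ?_⟩
    · rw [sum4_factor, hx.2, hy.2]; norm_num
    · rw [hval, hf]
      refine Finset.sum_congr rfl fun i _ => ?_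
      refine Finset.sum_congr rfl fun j _ => ?_
      refine Finset.sum_congr rfl fun k _ => ?_
      refine Finset.sum_congr rfl fun l _ => ?_
      ring
  · -- lower bound
    rintro v ⟨Z, hZ, hE, rfl⟩
    rw [convexHull_eq] at hZ
    obtain ⟨ι, t, w, z, hw0, hw1, hz, hcm⟩ := hZ
    rw [Finset.centerMass_eq_of_sum_1 _ _ hw1] at hcm
    subst hcm
    set E1 : Fin n → Fin n → Fin m → Fin m → ℝ := fun _ _ _ _ => 1 with hE1
    have hdotE : ∀ W : Fin n → Fin n → Fin m → Fin m → ℝ,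
        dotL E1 W = ∑ i, ∑ j, ∑ k, ∑ l, W i j k l := by
      intro W; rw [dotL_apply]; simp [hE1]
    have hEsum : ∑ r ∈ t, w r * dotL E1 (z r) = 1 := by
      rw [← hE, ← hdotE, map_sum]
      simp [smul_eq_mul]
    have hAsum : ∑ i, ∑ j, ∑ k, ∑ l, A i j k l * (∑ r ∈ t, w r • z r) i j k l
        = ∑ r ∈ t, w r * dotL A (z r) := by
      rw [← dotL_apply, map_sum]
      simp [smul_eq_mul]
    rw [hAsum]
    have hterm : ∀ r ∈ t, w r * (dotL E1 (z r) * sInf T) ≤ w r * dotL A (z r) := by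
      intro r hr
      refine mul_le_mul_of_nonneg_left ?_ (hw0 r hr)
      obtain ⟨x, y, hx, hy, hzr⟩ := hz r hr
      rw [hzr, hdotE, dotL_apply]
      exact key_gen A (sInf T) hs x y hx hy
    calc sInf T = ∑ r ∈ t, w r * (dotL E1 (z r) * sInf T) := by
          rw [show ∑ r ∈ t, w r * (dotL E1 (z r) * sInf T)
              = (∑ r ∈ t, w r * dotL E1 (z r)) * sInf T by
            rw [Finset.sum_mul]; exact Finset.sum_congr rfl fun r _ => by ring]
          rw [hEsum, one_mul]
      _ ≤ ∑ r ∈ t, w r * dotL A (z r) := Finset.sum_le_sum hterm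
end

section
/- Let A = (a_{ijkl}) be a partially symmetric (2,2)-th order n×n×m×m tensor. Then strong duality holds between the conic programs: inf{ A • Z : Z ∈ B_{n,m}, E • Z = 1 } = sup{ λ ∈ ℝ : A − λE is copositive }, and the supremum on the right is attained. -/
open Finset

private lemma lin4 {n m : ℕ} (c : Fin n → Fin n → Fin m → Fin m → ℝ) :
    IsLinearMap ℝ (fun Z : Fin n → Fin n → Fin m → Fin m → ℝ =>
      ∑ i, ∑ j, ∑ k, ∑ l, c i j k l * Z i j k l) := by
  constructor
  · intro Z W
    simp [mul_add, Finset.sum_add_distrib]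
  · intro a Z
    simp [Finset.mul_sum, mul_left_comm, smul_eq_mul]

private lemma hull_nonneg {n m : ℕ} (c : Fin n → Fin n → Fin m → Fin m → ℝ)
    {s : Set (Fin n → Fin n → Fin m → Fin m → ℝ)}
    (h : ∀ T ∈ s, 0 ≤ ∑ i, ∑ j, ∑ k, ∑ l, c i j k l * T i j k l)
    {Z : Fin n → Fin n → Fin m → Fin m → ℝ} (hZ : Z ∈ convexHull ℝ s) :
    0 ≤ ∑ i, ∑ j, ∑ k, ∑ l, c i j k l * Z i j k l :=
  convexHull_min h (convex_halfSpace_ge (lin4 c) 0) hZ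

private lemma sum4_prod {n m : ℕ} (x : Fin n → ℝ) (y : Fin m → ℝ) :
    ∑ i, ∑ j, ∑ k, ∑ l, x i * x j * y k * y l
      = (∑ i, x i) * (∑ i, x i) * ((∑ k, y k) * (∑ k, y k)) := by
  rw [Finset.sum_mul_sum, Finset.sum_mul_sum, Finset.sum_mul_sum]
  simp only [Finset.sum_mul, Finset.mul_sum, mul_assoc]
  refine Finset.sum_congr rfl fun i _ => ?_
  rw [Finset.sum_comm]
  refine Finset.sum_congr rfl fun k _ => ?_
  rw [Finset.sum_comm]

private lemma div_mul_cancel4 (a p q r s t u : ℝ) (ht : t ≠ 0) (hu : u ≠ 0) :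
    a * (p / t * (q / t) * (r / u) * (s / u)) * (t * t * (u * u)) = a * p * q * r * s := by
  field_simp

private lemma sum4_sub {n m : ℕ} (A : Fin n → Fin n → Fin m → Fin m → ℝ) (c : ℝ)
    (x : Fin n → ℝ) (y : Fin m → ℝ) :
    ∑ i, ∑ j, ∑ k, ∑ l, (A i j k l - c) * x i * x j * y k * y l
      = (∑ i, ∑ j, ∑ k, ∑ l, A i j k l * x i * x j * y k * y l)
        - c * ((∑ i, x i) * (∑ i, x i) * ((∑ k, y k) * (∑ k, y k))) := by
  rw [← sum4_prod x y]
  simp only [Finset.mul_sum, ← Finset.sum_sub_distrib]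
  exact Finset.sum_congr rfl fun i _ => Finset.sum_congr rfl fun j _ =>
    Finset.sum_congr rfl fun k _ => Finset.sum_congr rfl fun l _ => by ring

/-- Strong duality between the primal conic program
`inf{ A • Z : Z ∈ B_{n,m}, E • Z = 1 }` and the dual
`sup{ λ : A − λE copositive }`: the two optimal values coincide and the
supremum in the dual is attained. -/
theorem conic_strong_duality (n m : ℕ) (hn : 0 < n) (hm : 0 < m)
    (A : Fin n → Fin n → Fin m → Fin m → ℝ)
    (hsym : ∀ i j k l, A i j k l = A j i k l ∧ A j i k l = A j i l k) :
    IsGreatest {lam : ℝ | ∀ (x : Fin n → ℝ) (y : Fin m → ℝ),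
        (∀ i, 0 ≤ x i) → (∀ k, 0 ≤ y k) →
        0 ≤ ∑ i, ∑ j, ∑ k, ∑ l, (A i j k l - lam) * x i * x j * y k * y l}
      (sInf {v : ℝ | ∃ Z ∈ convexHull ℝ {T : Fin n → Fin n → Fin m → Fin m → ℝ |
          ∃ (x : Fin n → ℝ) (y : Fin m → ℝ), (∀ i, 0 ≤ x i) ∧ (∀ k, 0 ≤ y k) ∧
            T = fun i j k l => x i * x j * y k * y l},
          (∑ i, ∑ j, ∑ k, ∑ l, Z i j k l) = 1 ∧
          v = ∑ i, ∑ j, ∑ k, ∑ l, A i j k l * Z i j k l}) := by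
  classical
  set Sgen : Set (Fin n → Fin n → Fin m → Fin m → ℝ) :=
    {T : Fin n → Fin n → Fin m → Fin m → ℝ |
      ∃ (x : Fin n → ℝ) (y : Fin m → ℝ), (∀ i, 0 ≤ x i) ∧ (∀ k, 0 ≤ y k) ∧
        T = fun i j k l => x i * x j * y k * y l} with hSgen
  set S : Set ℝ := {v : ℝ | ∃ Z ∈ convexHull ℝ Sgen,
      (∑ i, ∑ j, ∑ k, ∑ l, Z i j k l) = 1 ∧
      v = ∑ i, ∑ j, ∑ k, ∑ l, A i j k l * Z i j k l} with hS
  -- membership helper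
  have hmemS : ∀ (x : Fin n → ℝ) (y : Fin m → ℝ), (∀ i, 0 ≤ x i) → (∀ k, 0 ≤ y k) →
      (∑ i, x i) * (∑ i, x i) * ((∑ k, y k) * (∑ k, y k)) = 1 →
      (∑ i, ∑ j, ∑ k, ∑ l, A i j k l * (x i * x j * y k * y l)) ∈ S := by
    intro x y hx hy h1
    refine ⟨fun i j k l => x i * x j * y k * y l,
      subset_convexHull ℝ _ ⟨x, y, hx, hy, rfl⟩, ?_, rfl⟩
    show (∑ i, ∑ j, ∑ k, ∑ l, x i * x j * y k * y l) = 1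
    rw [sum4_prod]; exact h1
  -- nonemptiness
  have hne : S.Nonempty := by
    set x₀ : Fin n → ℝ := fun i => if i = ⟨0, hn⟩ then 1 else 0 with hx₀
    set y₀ : Fin m → ℝ := fun k => if k = ⟨0, hm⟩ then 1 else 0 with hy₀
    have hx₀n : ∀ i, 0 ≤ x₀ i := by intro i; rw [hx₀]; dsimp; split <;> norm_num
    have hy₀n : ∀ k, 0 ≤ y₀ k := by intro k; rw [hy₀]; dsimp; split <;> norm_num
    have hx₀s : (∑ i, x₀ i) = 1 := by simp [hx₀]
    have hy₀s : (∑ k, y₀ k) = 1 := by simp [hy₀]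
    exact ⟨_, hmemS x₀ y₀ hx₀n hy₀n (by rw [hx₀s, hy₀s]; ring)⟩
  -- bound
  set M : ℝ := ∑ i, ∑ j, ∑ k, ∑ l, |A i j k l| with hM
  have hMabs : ∀ i j k l, |A i j k l| ≤ M := by
    intro i j k l
    calc |A i j k l| ≤ ∑ l', |A i j k l'| :=
          Finset.single_le_sum (f := fun l' => |A i j k l'|)
            (fun _ _ => abs_nonneg _) (Finset.mem_univ l)
      _ ≤ ∑ k', ∑ l', |A i j k' l'| :=
          Finset.single_le_sum (f := fun k' => ∑ l', |A i j k' l'|)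
            (fun _ _ => Finset.sum_nonneg fun _ _ => abs_nonneg _) (Finset.mem_univ k)
      _ ≤ ∑ j', ∑ k', ∑ l', |A i j' k' l'| :=
          Finset.single_le_sum (f := fun j' => ∑ k', ∑ l', |A i j' k' l'|)
            (fun _ _ => Finset.sum_nonneg fun _ _ => Finset.sum_nonneg fun _ _ => abs_nonneg _)
            (Finset.mem_univ j)
      _ ≤ M :=
          Finset.single_le_sum (f := fun i' => ∑ j', ∑ k', ∑ l', |A i' j' k' l'|)
            (fun _ _ => Finset.sum_nonneg fun _ _ => Finset.sum_nonneg fun _ _ =>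
              Finset.sum_nonneg fun _ _ => abs_nonneg _) (Finset.mem_univ i)
  have hbdd : BddBelow S := by
    refine ⟨-M, fun v hv => ?_⟩
    obtain ⟨Z, hZ, h1, hveq⟩ := hv
    have h0 : 0 ≤ ∑ i, ∑ j, ∑ k, ∑ l, (A i j k l + M) * Z i j k l := by
      refine hull_nonneg _ ?_ hZ
      rintro T ⟨x, y, hx, hy, rfl⟩
      dsimp only
      refine Finset.sum_nonneg fun i _ => Finset.sum_nonneg fun j _ =>
        Finset.sum_nonneg fun k _ => Finset.sum_nonneg fun l _ => ?_
      have h1 : 0 ≤ A i j k l + M := by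
        have h2 := hMabs i j k l
        have h3 := neg_abs_le (A i j k l)
        linarith
      have h4 : 0 ≤ x i * x j * y k * y l :=
        mul_nonneg (mul_nonneg (mul_nonneg (hx i) (hx j)) (hy k)) (hy l)
      exact mul_nonneg h1 h4
    have hexp : (∑ i, ∑ j, ∑ k, ∑ l, (A i j k l + M) * Z i j k l)
        = (∑ i, ∑ j, ∑ k, ∑ l, A i j k l * Z i j k l)
          + M * ∑ i, ∑ j, ∑ k, ∑ l, Z i j k l := by
      simp only [add_mul, Finset.sum_add_distrib, Finset.mul_sum]
    rw [hexp, h1, ← hveq] at h0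
    linarith
  constructor
  · -- sInf S is dual feasible
    intro x y hx hy
    by_cases hxz : (∑ i, x i) = 0
    · have hx0 : ∀ i, x i = 0 := fun i =>
        (Finset.sum_eq_zero_iff_of_nonneg (fun i _ => hx i)).mp hxz i (Finset.mem_univ i)
      simp [hx0]
    by_cases hyz : (∑ k, y k) = 0
    · have hy0 : ∀ k, y k = 0 := fun k =>
        (Finset.sum_eq_zero_iff_of_nonneg (fun k _ => hy k)).mp hyz k (Finset.mem_univ k)
      simp [hy0]
    have hxpos : 0 < ∑ i, x i :=
      lt_of_le_of_ne (Finset.sum_nonneg fun i _ => hx i) (Ne.symm hxz)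
    have hypos : 0 < ∑ k, y k :=
      lt_of_le_of_ne (Finset.sum_nonneg fun k _ => hy k) (Ne.symm hyz)
    set t : ℝ := ∑ i, x i with ht
    set u : ℝ := ∑ k, y k with hu
    have hx' : ∀ i, 0 ≤ x i / t := fun i => div_nonneg (hx i) hxpos.le
    have hy' : ∀ k, 0 ≤ y k / u := fun k => div_nonneg (hy k) hypos.le
    have hsx : (∑ i, x i / t) = 1 := by
      rw [← Finset.sum_div, ← ht]; exact div_self hxz
    have hsy : (∑ k, y k / u) = 1 := by
      rw [← Finset.sum_div, ← hu]; exact div_self hyz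
    have hv := hmemS (fun i => x i / t) (fun k => y k / u)
      hx' hy' (by rw [hsx, hsy]; ring)
    have hle := csInf_le hbdd hv
    have hkey : (∑ i, ∑ j, ∑ k, ∑ l,
          A i j k l * (x i / t * (x j / t) * (y k / u) * (y l / u)))
          * (t * t * (u * u))
        = ∑ i, ∑ j, ∑ k, ∑ l, A i j k l * x i * x j * y k * y l := by
      simp only [Finset.sum_mul]
      refine Finset.sum_congr rfl fun i _ => Finset.sum_congr rfl fun j _ =>
        Finset.sum_congr rfl fun k _ => Finset.sum_congr rfl fun l _ => ?_
      exact div_mul_cancel4 _ _ _ _ _ _ _ hxz hyz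
    rw [sum4_sub]
    have hmul := mul_le_mul_of_nonneg_right hle
      (le_of_lt (by positivity : (0:ℝ) < t * t * (u * u)))
    rw [hkey] at hmul
    linarith
  · -- sInf S is an upper bound
    intro lam hlam
    refine le_csInf hne ?_
    intro v hv
    obtain ⟨Z, hZ, h1, hveq⟩ := hv
    have h0 : 0 ≤ ∑ i, ∑ j, ∑ k, ∑ l, (A i j k l - lam) * Z i j k l := by
      refine hull_nonneg _ ?_ hZ
      rintro T ⟨x, y, hx, hy, rfl⟩
      dsimp only
      have h := hlam x y hx hy
      simpa [mul_assoc] using h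
    have hexp : (∑ i, ∑ j, ∑ k, ∑ l, (A i j k l - lam) * Z i j k l)
        = (∑ i, ∑ j, ∑ k, ∑ l, A i j k l * Z i j k l)
          - lam * ∑ i, ∑ j, ∑ k, ∑ l, Z i j k l := by
      simp only [sub_mul, Finset.sum_sub_distrib, Finset.mul_sum]
    rw [hexp, h1, ← hveq] at h0
    linarith
end

section
/- Let A = (a_{ijkl}) be a partially symmetric (2,2)-th order n×n×m×m tensor and suppose the bi-quadratic form p_A is positive on Δ_n × Δ_m, i.e., p_A(x,y) > 0 for all (x,y) ∈ Δ_n × Δ_m. Then there exist natural numbers R and S such that for all integers r ≥ R and s ≥ S, the polynomial p_A(x,y) (Σ_{i=1}^n x_i)^r (Σ_{j=1}^m y_j)^s, viewed as a polynomial in the variables x_1,…,x_n, y_1,…,y_m, has only nonnegative coefficients. -/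
set_option linter.unusedSectionVars false

open MvPolynomial Finset

section Helpers
variable {σ τ : Type*} [Fintype σ] [DecidableEq σ] [DecidableEq τ]

lemma prodMonomial (s : Finset σ) (f : σ → (τ →₀ ℕ)) :
    (∏ i ∈ s, monomial (f i) (1:ℝ)) = monomial (∑ i ∈ s, f i) (1:ℝ) := by
  induction s using Finset.cons_induction with
  | empty => simp
  | cons a s ha ih => rw [Finset.prod_cons, Finset.sum_cons, ih, monomial_mul, mul_one]

lemma powExpand (e : σ → τ) (r : ℕ) :
    ((∑ i : σ, X (e i) : MvPolynomial τ ℝ)) ^ r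
      = ∑ k ∈ piAntidiag (univ : Finset σ) r,
          (Nat.multinomial univ k : ℝ) • monomial (∑ i : σ, Finsupp.single (e i) (k i)) (1:ℝ) := by
  rw [Finset.sum_pow_eq_sum_piAntidiag]
  refine Finset.sum_congr rfl fun k _ => ?_
  have : ∀ i : σ, (X (e i) : MvPolynomial τ ℝ) ^ k i = monomial (Finsupp.single (e i) (k i)) 1 := by
    intro i; rw [X_pow_eq_monomial]
  rw [Finset.prod_congr rfl (fun i _ => this i), prodMonomial, smul_eq_C_mul]
  simp

lemma sumSingleApply (e : σ → τ) (he : Function.Injective e) (k : σ → ℕ) (t : σ) :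
    (∑ i : σ, Finsupp.single (e i) (k i)) (e t) = k t := by
  rw [Finsupp.finset_sum_apply]
  rw [Finset.sum_eq_single t]
  · simp
  · intro b _ hb
    rw [Finsupp.single_apply, if_neg (fun h => hb (he h))]
  · simp

lemma sumSingleApply' (e : σ → τ) (k : σ → ℕ) (u : τ) (hu : ∀ i, e i ≠ u) :
    (∑ i : σ, Finsupp.single (e i) (k i)) u = 0 := by
  rw [Finsupp.finset_sum_apply]
  exact Finset.sum_eq_zero fun i _ => by rw [Finsupp.single_apply, if_neg (hu i)]

section PP
variable {n m : ℕ}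

noncomputable abbrev Dx (kx : Fin n → ℕ) : (Fin n ⊕ Fin m) →₀ ℕ :=
  ∑ i : Fin n, Finsupp.single (Sum.inl i) (kx i)

noncomputable abbrev Dy (ky : Fin m → ℕ) : (Fin n ⊕ Fin m) →₀ ℕ :=
  ∑ j : Fin m, Finsupp.single (Sum.inr j) (ky j)

lemma Dx_inl (kx : Fin n → ℕ) (t : Fin n) : (Dx (m := m) kx) (Sum.inl t) = kx t :=
  sumSingleApply Sum.inl Sum.inl_injective kx t

lemma Dx_inr (kx : Fin n → ℕ) (t : Fin m) : (Dx (m := m) kx) (Sum.inr t) = 0 :=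
  sumSingleApply' Sum.inl kx _ (by simp)

lemma Dy_inr (ky : Fin m → ℕ) (t : Fin m) : (Dy (n := n) ky) (Sum.inr t) = ky t :=
  sumSingleApply Sum.inr Sum.inr_injective ky t

lemma Dy_inl (ky : Fin m → ℕ) (t : Fin n) : (Dy (n := n) ky) (Sum.inl t) = 0 :=
  sumSingleApply' Sum.inr ky _ (by simp)

lemma key_iff (γ : (Fin n ⊕ Fin m) →₀ ℕ) (kx : Fin n → ℕ) (ky : Fin m → ℕ) :
    Dx kx + Dy ky = γ ↔ (kx = fun t => γ (Sum.inl t)) ∧ (ky = fun t => γ (Sum.inr t)) := by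
  constructor
  · intro h
    constructor
    · funext t
      have := congrArg (fun f => f (Sum.inl t)) h
      simpa [Finsupp.add_apply, Dx_inl, Dy_inl] using this
    · funext t
      have := congrArg (fun f => f (Sum.inr t)) h
      simpa [Finsupp.add_apply, Dx_inr, Dy_inr] using this
  · rintro ⟨rfl, rfl⟩
    ext u
    cases u with
    | inl t => simp [Finsupp.add_apply, Dx_inl, Dy_inl]
    | inr t => simp [Finsupp.add_apply, Dx_inr, Dy_inr]

lemma coeffPP (r s : ℕ) (γ : (Fin n ⊕ Fin m) →₀ ℕ) :
    coeff γ ((∑ i : Fin n, X (Sum.inl i) : MvPolynomial (Fin n ⊕ Fin m) ℝ) ^ r *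
        (∑ j : Fin m, X (Sum.inr j)) ^ s)
      = if (∑ t, γ (Sum.inl t)) = r ∧ (∑ t, γ (Sum.inr t)) = s then
          (Nat.multinomial univ (fun t => γ (Sum.inl t)) : ℝ) *
            (Nat.multinomial univ (fun t => γ (Sum.inr t)) : ℝ)
        else 0 := by
  classical
  rw [powExpand Sum.inl r, powExpand Sum.inr s, Finset.sum_mul_sum, MvPolynomial.coeff_sum]
  simp_rw [MvPolynomial.coeff_sum, smul_mul_assoc, mul_smul_comm, coeff_smul, monomial_mul,
    one_mul, coeff_monomial, smul_eq_mul]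
  set cx : Fin n → ℕ := fun t => γ (Sum.inl t) with hcx
  set cy : Fin m → ℕ := fun t => γ (Sum.inr t) with hcy
  by_cases hC : (∑ t, γ (Sum.inl t)) = r ∧ (∑ t, γ (Sum.inr t)) = s
  · rw [if_pos hC]
    have hcxm : cx ∈ piAntidiag (univ : Finset (Fin n)) r := by
      rw [mem_piAntidiag]; exact ⟨hC.1, fun i _ => mem_univ i⟩
    have hcym : cy ∈ piAntidiag (univ : Finset (Fin m)) s := by
      rw [mem_piAntidiag]; exact ⟨hC.2, fun i _ => mem_univ i⟩
    rw [Finset.sum_eq_single_of_mem cx hcxm]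
    · rw [Finset.sum_eq_single_of_mem cy hcym]
      · rw [if_pos ((key_iff γ cx cy).mpr ⟨rfl, rfl⟩), mul_one]
      · intro ky _ hky
        rw [if_neg, mul_zero, mul_zero]
        intro h
        exact hky ((key_iff γ cx ky).mp h).2
    · intro kx _ hkx
      rw [Finset.sum_eq_zero]
      intro ky _
      rw [if_neg, mul_zero, mul_zero]
      intro h
      exact hkx ((key_iff γ kx ky).mp h).1
  · rw [if_neg hC]
    refine Finset.sum_eq_zero fun kx hkx => Finset.sum_eq_zero fun ky hky => ?_
    rw [if_neg, mul_zero, mul_zero]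
    intro h
    obtain ⟨h1, h2⟩ := (key_iff γ kx ky).mp h
    rw [mem_piAntidiag] at hkx hky
    exact hC ⟨h1 ▸ hkx.1, h2 ▸ hky.1⟩

end PP

section Step
variable {σ : Type*} [Fintype σ] [DecidableEq σ]

/-- decrement a multi-index at position `i`. -/
def dec (α : σ → ℕ) (i : σ) : σ → ℕ := Function.update α i (α i - 1)

lemma dec_apply (α : σ → ℕ) (i t : σ) :
    dec α i t = α t - (if t = i then 1 else 0) := by
  unfold dec
  rcases eq_or_ne t i with rfl | h
  · simp
  · simp [Function.update_of_ne h, h]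

lemma sum_dec (α : σ → ℕ) (i : σ) (hi : α i ≠ 0) :
    ∑ t, dec α i t = (∑ t, α t) - 1 := by
  classical
  rw [← Finset.add_sum_erase _ _ (mem_univ i), ← Finset.add_sum_erase _ _ (mem_univ i)]
  have h1 : dec α i i = α i - 1 := by simp [dec]
  have h2 : ∀ t ∈ (univ : Finset σ).erase i, dec α i t = α t := by
    intro t ht
    rw [dec_apply, if_neg (Finset.mem_erase.mp ht).1, Nat.sub_zero]
  rw [h1, Finset.sum_congr rfl h2]
  have hx : ∑ x ∈ (univ:Finset σ).erase i, α x = ((univ:Finset σ).erase i).sum α := rfl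
  rw [hx]
  omega

lemma prod_factorial_dec (α : σ → ℕ) (i : σ) (hi : α i ≠ 0) :
    ∏ t, Nat.factorial (α t) = α i * ∏ t, Nat.factorial (dec α i t) := by
  classical
  rw [← Finset.mul_prod_erase _ _ (mem_univ i), ← Finset.mul_prod_erase _ (fun t => Nat.factorial (dec α i t)) (mem_univ i)]
  have h1 : dec α i i = α i - 1 := by simp [dec]
  have h2 : ∀ t ∈ (univ : Finset σ).erase i, Nat.factorial (dec α i t) = Nat.factorial (α t) := by
    intro t ht
    rw [dec_apply, if_neg (Finset.mem_erase.mp ht).1, Nat.sub_zero]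
  rw [h1, Finset.prod_congr rfl h2, ← mul_assoc, Nat.mul_factorial_pred hi]

lemma mult_step_nat (α : σ → ℕ) (i : σ) (hi : α i ≠ 0) :
    (∑ t, α t) * Nat.multinomial univ (dec α i) = Nat.multinomial univ α * α i := by
  have hs : (∑ t, α t) ≠ 0 := by
    intro h
    exact hi (by simpa using (Finset.sum_eq_zero_iff.mp h) i (mem_univ i))
  apply Nat.eq_of_mul_eq_mul_left (Nat.pos_of_ne_zero (show (∏ t, Nat.factorial (α t)) ≠ 0 from
    Finset.prod_ne_zero_iff.mpr fun t _ => Nat.factorial_ne_zero _))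
  calc (∏ t, Nat.factorial (α t)) * ((∑ t, α t) * Nat.multinomial univ (dec α i))
      = (∑ t, α t) * (α i * ((∏ t, Nat.factorial (dec α i t)) * Nat.multinomial univ (dec α i))) := by
        rw [prod_factorial_dec α i hi]; ring
    _ = (∑ t, α t) * (α i * Nat.factorial (∑ t, dec α i t)) := by rw [Nat.multinomial_spec]
    _ = α i * ((∑ t, α t) * Nat.factorial ((∑ t, α t) - 1)) := by rw [sum_dec α i hi]; ring
    _ = α i * Nat.factorial (∑ t, α t) := by rw [Nat.mul_factorial_pred hs]
    _ = (∏ t, Nat.factorial (α t)) * Nat.multinomial univ α * α i := by rw [Nat.multinomial_spec]; ring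
  ring

end Step

section Step2
variable {σ : Type*} [Fintype σ] [DecidableEq σ]

/-- the count appearing as a coefficient factor -/
noncomputable def cnt (α : σ → ℕ) (u v : σ) : ℝ :=
  if α u ≠ 0 then (if dec α u v ≠ 0 then (Nat.multinomial univ (dec (dec α u) v) : ℝ) else 0)
  else 0

/-- the "falling factorial" value -/
noncomputable def Vv (α : σ → ℕ) (u v : σ) : ℝ :=
  (α u : ℝ) * ((α v : ℝ) - if u = v then 1 else 0)

lemma cnt_nonneg (α : σ → ℕ) (u v : σ) : 0 ≤ cnt α u v := by
  unfold cnt; split_ifs <;> positivity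

lemma Vv_nonneg (α : σ → ℕ) (u v : σ) : 0 ≤ Vv α u v := by
  unfold Vv
  rcases eq_or_ne u v with rfl | h
  · rw [if_pos rfl]
    rcases Nat.eq_zero_or_pos (α u) with h0 | h0
    · simp [h0]
    · have : (1:ℝ) ≤ (α u : ℝ) := by exact_mod_cast h0
      nlinarith
  · rw [if_neg h, sub_zero]; positivity

lemma Vv_symm (α : σ → ℕ) (u v : σ) : Vv α u v = Vv α v u := by
  unfold Vv
  rcases eq_or_ne u v with rfl | h
  · rfl
  · rw [if_neg h, if_neg (Ne.symm h)]; ring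

lemma Vv_le (α : σ → ℕ) (N : ℕ) (h : ∑ t, α t = N) (u v : σ) :
    Vv α u v ≤ (N : ℝ) * N := by
  have hu : α u ≤ N := h ▸ Finset.single_le_sum (fun t _ => Nat.zero_le (α t)) (mem_univ u)
  have hv : α v ≤ N := h ▸ Finset.single_le_sum (fun t _ => Nat.zero_le (α t)) (mem_univ v)
  have hu' : (α u : ℝ) ≤ N := by exact_mod_cast hu
  have hv' : (α v : ℝ) ≤ N := by exact_mod_cast hv
  unfold Vv
  have h1 : (α v : ℝ) - (if u = v then 1 else 0) ≤ (N : ℝ) := by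
    split_ifs <;> linarith
  have h2 : (0:ℝ) ≤ (α v : ℝ) - (if u = v then 1 else 0) ∨ (α u : ℝ) = 0 := by
    rcases Nat.eq_zero_or_pos (α u) with h0 | h0
    · exact Or.inr (by exact_mod_cast h0)
    · left
      split_ifs with he
      · subst he
        have : (1:ℝ) ≤ (α u : ℝ) := by exact_mod_cast h0
        linarith
      · rw [sub_zero]; positivity
  rcases h2 with h2 | h2
  · calc (α u : ℝ) * ((α v : ℝ) - if u = v then 1 else 0) ≤ (N:ℝ) * ((α v : ℝ) - if u = v then 1 else 0) :=
        mul_le_mul_of_nonneg_right hu' h2 |>.trans_eq rfl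
      _ ≤ (N:ℝ) * N := by
        apply mul_le_mul_of_nonneg_left h1 (by positivity)
  · rw [h2, zero_mul]; positivity

lemma prod_diff_bound (α : σ → ℕ) (N : ℕ) (h : ∑ t, α t = N) (u v : σ) :
    0 ≤ (α u : ℝ) * α v - Vv α u v ∧ (α u : ℝ) * α v - Vv α u v ≤ N := by
  have hu : (α u : ℝ) ≤ N := by
    exact_mod_cast h ▸ Finset.single_le_sum (fun t _ => Nat.zero_le (α t)) (mem_univ u)
  have hval : (α u : ℝ) * α v - Vv α u v = (if u = v then 1 else 0) * α u := by
    unfold Vv; split_ifs <;> ring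
  rw [hval]
  constructor
  · split_ifs <;> simp
  · split_ifs with he
    · rw [one_mul]; exact hu
    · rw [zero_mul]; positivity

lemma mult_step_real (α : σ → ℕ) (N : ℕ) (h : ∑ t, α t = N + 1) (i : σ) :
    ((N : ℝ) + 1) * (if α i ≠ 0 then (Nat.multinomial univ (dec α i) : ℝ) else 0)
      = (Nat.multinomial univ α : ℝ) * α i := by
  by_cases hi : α i = 0
  · simp [hi]
  · rw [if_pos hi]
    have := mult_step_nat α i hi
    rw [h] at this
    have := congrArg (fun x : ℕ => (x : ℝ)) this
    push_cast at this
    linarith [this]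

lemma double_step (α : σ → ℕ) (N : ℕ) (h : ∑ t, α t = N + 2) (u v : σ) :
    (((N:ℝ) + 2) * ((N:ℝ) + 1)) * cnt α u v
      = (Nat.multinomial univ α : ℝ) * Vv α u v := by
  by_cases h1 : α u = 0
  · unfold cnt Vv
    rw [if_neg (by simpa using h1)]
    simp [h1]
  · by_cases h2 : dec α u v = 0
    · unfold cnt Vv
      rw [if_pos h1, if_neg (by simpa using h2)]
      have hz : (α v : ℝ) - (if u = v then 1 else 0) = 0 := by
        rw [dec_apply] at h2
        rcases eq_or_ne u v with rfl | hne
        · rw [if_pos rfl] at *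
          have : α u = 1 := by omega
          rw [this]; norm_num
        · rw [if_neg hne]
          rw [if_neg (Ne.symm hne)] at h2
          have : α v = 0 := by omega
          rw [this]; norm_num
      rw [hz, mul_zero, mul_zero, mul_zero]
    · unfold cnt
      rw [if_pos h1, if_pos h2]
      have hsd : ∑ t, dec α u t = N + 1 := by rw [sum_dec α u h1, h]; omega
      have E1 : (N + 1) * Nat.multinomial univ (dec (dec α u) v)
          = Nat.multinomial univ (dec α u) * dec α u v := by
        have := mult_step_nat (dec α u) v h2
        rwa [hsd] at this
      have E2 : (N + 2) * Nat.multinomial univ (dec α u) = Nat.multinomial univ α * α u := by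
        have := mult_step_nat α u h1
        rwa [h] at this
      have key : (N + 2) * ((N + 1) * Nat.multinomial univ (dec (dec α u) v))
          = Nat.multinomial univ α * α u * dec α u v := by
        rw [E1, ← mul_assoc, E2]
      have keyR := congrArg (fun x : ℕ => (x : ℝ)) key
      push_cast at keyR
      have hdv : (dec α u v : ℝ) = (α v : ℝ) - (if u = v then 1 else 0) := by
        rw [dec_apply]
        rcases eq_or_ne u v with rfl | hne
        · rw [if_pos rfl, if_pos rfl, Nat.cast_sub (Nat.one_le_iff_ne_zero.mpr h1)]
          norm_num
        · rw [if_neg (Ne.symm hne), if_neg hne]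
          norm_num
      unfold Vv
      rw [← hdv]
      nlinarith [keyR]

end Step2

section Term
variable {n m : ℕ}

lemma sub_single_apply (ν : (Fin n ⊕ Fin m) →₀ ℕ) (w u : Fin n ⊕ Fin m) :
    (ν - Finsupp.single w 1 : (Fin n ⊕ Fin m) →₀ ℕ) u = ν u - (if u = w then 1 else 0) := by
  rw [Finsupp.tsub_apply, Finsupp.single_apply]
  rcases eq_or_ne w u with rfl | h
  · simp
  · rw [if_neg h, if_neg (Ne.symm h)]

lemma term_coeff (a : ℝ) (i j : Fin n) (k l : Fin m) (r s : ℕ) (μ : (Fin n ⊕ Fin m) →₀ ℕ) :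
    coeff μ (C a * X (Sum.inl i) * X (Sum.inl j) * X (Sum.inr k) * X (Sum.inr l) *
        (∑ i : Fin n, (X (Sum.inl i) : MvPolynomial (Fin n ⊕ Fin m) ℝ)) ^ r *
        (∑ j : Fin m, X (Sum.inr j)) ^ s)
      = a * ((if (∑ t, μ (Sum.inl t)) = r + 2 then 1 else 0) * cnt (fun t => μ (Sum.inl t)) j i)
          * ((if (∑ t, μ (Sum.inr t)) = s + 2 then 1 else 0) *
              cnt (fun t => μ (Sum.inr t)) l k) := by
  classical
  have hre : (C a * X (Sum.inl i) * X (Sum.inl j) * X (Sum.inr k) * X (Sum.inr l) *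
        (∑ i : Fin n, (X (Sum.inl i) : MvPolynomial (Fin n ⊕ Fin m) ℝ)) ^ r *
        (∑ j : Fin m, X (Sum.inr j)) ^ s)
      = C a * ((∑ i : Fin n, (X (Sum.inl i) : MvPolynomial (Fin n ⊕ Fin m) ℝ)) ^ r *
          (∑ j : Fin m, X (Sum.inr j)) ^ s * X (Sum.inl i) * X (Sum.inl j) *
          X (Sum.inr k) * X (Sum.inr l)) := by ring
  rw [hre, coeff_C_mul, coeff_mul_X', coeff_mul_X', coeff_mul_X', coeff_mul_X', coeffPP]
  by_cases h1 : μ (Sum.inr l) = 0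
  · rw [if_neg (by simp [Finsupp.mem_support_iff, h1])]
    simp [cnt, h1]
  rw [if_pos (Finsupp.mem_support_iff.mpr h1)]
  have e1 : ∀ t : Fin m, (μ - Finsupp.single (Sum.inr l) 1 : (Fin n ⊕ Fin m) →₀ ℕ) (Sum.inr t)
      = dec (fun t => μ (Sum.inr t)) l t := by
    intro t; rw [sub_single_apply, dec_apply]; simp
  by_cases h2 : dec (fun t => μ (Sum.inr t)) l k = 0
  · rw [if_neg (by simp [Finsupp.mem_support_iff, e1 k, h2])]
    simp [cnt, h1, h2]
  rw [if_pos (Finsupp.mem_support_iff.mpr (by rw [e1 k]; exact h2))]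
  have e2 : ∀ t : Fin n,
      (μ - Finsupp.single (Sum.inr l) 1 - Finsupp.single (Sum.inr k) 1 :
        (Fin n ⊕ Fin m) →₀ ℕ) (Sum.inl t)
      = μ (Sum.inl t) := by
    intro t; rw [sub_single_apply, sub_single_apply]; simp
  by_cases h3 : μ (Sum.inl j) = 0
  · rw [if_neg (by simp [Finsupp.mem_support_iff, e2 j, h3])]
    simp [cnt, h3]
  rw [if_pos (Finsupp.mem_support_iff.mpr (by rw [e2 j]; exact h3))]
  have e3 : ∀ t : Fin n,
      (μ - Finsupp.single (Sum.inr l) 1 - Finsupp.single (Sum.inr k) 1 -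
        Finsupp.single (Sum.inl j) 1 : (Fin n ⊕ Fin m) →₀ ℕ) (Sum.inl t)
      = dec (fun t => μ (Sum.inl t)) j t := by
    intro t; rw [sub_single_apply, sub_single_apply, sub_single_apply, dec_apply]; simp
  by_cases h4 : dec (fun t => μ (Sum.inl t)) j i = 0
  · rw [if_neg (by simp [Finsupp.mem_support_iff, e3 i, h4])]
    simp [cnt, h3, h4]
  rw [if_pos (Finsupp.mem_support_iff.mpr (by rw [e3 i]; exact h4))]
  have e4x : ∀ t : Fin n,
      (μ - Finsupp.single (Sum.inr l) 1 - Finsupp.single (Sum.inr k) 1 -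
        Finsupp.single (Sum.inl j) 1 - Finsupp.single (Sum.inl i) 1 :
          (Fin n ⊕ Fin m) →₀ ℕ) (Sum.inl t)
      = dec (dec (fun t => μ (Sum.inl t)) j) i t := by
    intro t
    rw [sub_single_apply, sub_single_apply, sub_single_apply, sub_single_apply,
      dec_apply, dec_apply]
    simp
  have e4y : ∀ t : Fin m,
      (μ - Finsupp.single (Sum.inr l) 1 - Finsupp.single (Sum.inr k) 1 -
        Finsupp.single (Sum.inl j) 1 - Finsupp.single (Sum.inl i) 1 :
          (Fin n ⊕ Fin m) →₀ ℕ) (Sum.inr t)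
      = dec (dec (fun t => μ (Sum.inr t)) l) k t := by
    intro t
    rw [sub_single_apply, sub_single_apply, sub_single_apply, sub_single_apply,
      dec_apply, dec_apply]
    simp
  have hfx : (fun t => (μ - Finsupp.single (Sum.inr l) 1 - Finsupp.single (Sum.inr k) 1 -
        Finsupp.single (Sum.inl j) 1 - Finsupp.single (Sum.inl i) 1 :
          (Fin n ⊕ Fin m) →₀ ℕ) (Sum.inl t))
      = dec (dec (fun t => μ (Sum.inl t)) j) i := funext e4x
  have hfy : (fun t => (μ - Finsupp.single (Sum.inr l) 1 - Finsupp.single (Sum.inr k) 1 -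
        Finsupp.single (Sum.inl j) 1 - Finsupp.single (Sum.inl i) 1 :
          (Fin n ⊕ Fin m) →₀ ℕ) (Sum.inr t))
      = dec (dec (fun t => μ (Sum.inr t)) l) k := funext e4y
  have hjx : 1 ≤ ∑ t, dec (fun t => μ (Sum.inl t)) j t :=
    Nat.one_le_iff_ne_zero.mpr fun h => h4 (by
      simpa using (Finset.sum_eq_zero_iff.mp h) i (mem_univ i))
  have hjy : 1 ≤ ∑ t, dec (fun t => μ (Sum.inr t)) l t :=
    Nat.one_le_iff_ne_zero.mpr fun h => h2 (by
      simpa using (Finset.sum_eq_zero_iff.mp h) k (mem_univ k))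
  have hsx2 : ∑ t, dec (fun t => μ (Sum.inl t)) j t = (∑ t, μ (Sum.inl t)) - 1 :=
    sum_dec _ j h3
  have hsy2 : ∑ t, dec (fun t => μ (Sum.inr t)) l t = (∑ t, μ (Sum.inr t)) - 1 :=
    sum_dec _ l h1
  have hsumx : ∑ t, dec (dec (fun t => μ (Sum.inl t)) j) i t
      = (∑ t, μ (Sum.inl t)) - 2 := by
    rw [sum_dec _ i h4, hsx2]; omega
  have hsumy : ∑ t, dec (dec (fun t => μ (Sum.inr t)) l) k t
      = (∑ t, μ (Sum.inr t)) - 2 := by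
    rw [sum_dec _ k h2, hsy2]; omega
  have hiffx : ((∑ t, dec (dec (fun t => μ (Sum.inl t)) j) i t) = r)
      ↔ ((∑ t, μ (Sum.inl t)) = r + 2) := by
    rw [hsumx]
    have h2x : 2 ≤ ∑ t, μ (Sum.inl t) := by omega
    omega
  have hiffy : ((∑ t, dec (dec (fun t => μ (Sum.inr t)) l) k t) = s)
      ↔ ((∑ t, μ (Sum.inr t)) = s + 2) := by
    rw [hsumy]
    have h2y : 2 ≤ ∑ t, μ (Sum.inr t) := by omega
    omega
  rw [hfx, hfy]
  simp only [hiffx, hiffy]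
  by_cases H1 : (∑ t, μ (Sum.inl t)) = r + 2 <;> by_cases H2 : (∑ t, μ (Sum.inr t)) = s + 2 <;>
    simp [H1, H2, cnt, h1, h2, h3, h4] <;> ring
end Term

lemma abs_prod_bound (Gx Vx Gy Vy Rr Ss : ℝ) (h1 : 0 ≤ Gx - Vx) (h2 : Gx - Vx ≤ Rr)
    (h3 : 0 ≤ Gy - Vy) (h4 : Gy - Vy ≤ Ss) (h5 : 0 ≤ Vx) (h6 : Vx ≤ Rr ^ 2)
    (h7 : 0 ≤ Gy) (h8 : Gy ≤ Ss ^ 2) (h9 : 0 ≤ Vy) :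
    |Vx * Vy - Gx * Gy| ≤ Rr * Ss ^ 2 + Rr ^ 2 * Ss := by
  rw [abs_le]
  constructor <;> nlinarith


end Helpers

/-- The bi-quadratic form `p_A` as a polynomial in the variables `x_1,…,x_n,y_1,…,y_m`. -/
noncomputable def biQuadPoly {n m : ℕ} (A : Fin n → Fin n → Fin m → Fin m → ℝ) :
    MvPolynomial (Fin n ⊕ Fin m) ℝ :=
  ∑ i, ∑ j, ∑ k, ∑ l, C (A i j k l) *
    X (Sum.inl i) * X (Sum.inl j) * X (Sum.inr k) * X (Sum.inr l)

set_option maxHeartbeats 2000000 in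
/-- **Pólya-type theorem.** If the bi-quadratic form `p_A` of a partially
symmetric tensor `A` is positive on `Δ_n × Δ_m`, then for all sufficiently large `r` and `s`
the polynomial `p_A(x,y)·(Σ_i x_i)^r·(Σ_j y_j)^s` has only nonnegative coefficients. -/
theorem polya_biquadratic (n m : ℕ) (hn : 0 < n) (hm : 0 < m)
    (A : Fin n → Fin n → Fin m → Fin m → ℝ)
    (hsym : ∀ i j k l, A i j k l = A j i k l ∧ A j i k l = A j i l k)
    (hpos : ∀ x ∈ stdSimplex ℝ (Fin n), ∀ y ∈ stdSimplex ℝ (Fin m),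
      0 < ∑ i, ∑ j, ∑ k, ∑ l, A i j k l * x i * x j * y k * y l) :
    ∃ R S : ℕ, ∀ r s : ℕ, R ≤ r → S ≤ s → ∀ μ : (Fin n ⊕ Fin m) →₀ ℕ,
      0 ≤ (biQuadPoly A * (∑ i, X (Sum.inl i)) ^ r *
        (∑ j : Fin m, X (Sum.inr j)) ^ s).coeff μ := by
  classical
  -- minimum of the bi-quadratic form on the product of simplices
  set f : (Fin n → ℝ) × (Fin m → ℝ) → ℝ :=
    fun p => ∑ i, ∑ j, ∑ k, ∑ l, A i j k l * p.1 i * p.1 j * p.2 k * p.2 l with hf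
  have hcont : Continuous f := by fun_prop
  have hKc : IsCompact ((stdSimplex ℝ (Fin n)) ×ˢ (stdSimplex ℝ (Fin m))) :=
    (isCompact_stdSimplex (𝕜 := ℝ) (ι := Fin n)).prod (isCompact_stdSimplex (𝕜 := ℝ) (ι := Fin m))
  have hne : ((stdSimplex ℝ (Fin n)) ×ˢ (stdSimplex ℝ (Fin m))).Nonempty := by
    refine ⟨(fun _ => (n:ℝ)⁻¹, fun _ => (m:ℝ)⁻¹), ⟨⟨fun _ => by positivity, ?_⟩,
      ⟨fun _ => by positivity, ?_⟩⟩⟩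
    · simp only [Finset.sum_const, card_univ, Fintype.card_fin, nsmul_eq_mul]
      field_simp
    · simp only [Finset.sum_const, card_univ, Fintype.card_fin, nsmul_eq_mul]
      field_simp
  obtain ⟨p0, hp0, hmin⟩ := hKc.exists_isMinOn hne hcont.continuousOn
  set ε : ℝ := f p0 with hε
  have hεpos : 0 < ε := hpos p0.1 (Set.mem_prod.mp hp0).1 p0.2 (Set.mem_prod.mp hp0).2
  set M : ℝ := ∑ i, ∑ j, ∑ k, ∑ l, |A i j k l| with hM
  have hMnn : 0 ≤ M := by
    refine Finset.sum_nonneg fun i _ => Finset.sum_nonneg fun j _ =>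
      Finset.sum_nonneg fun k _ => Finset.sum_nonneg fun l _ => abs_nonneg _
  obtain ⟨N, hN⟩ := exists_nat_gt (2 * M / ε)
  refine ⟨N, N, fun r s hr hs μ => ?_⟩
  -- expand the coefficient as a quadruple sum
  have hexp : (biQuadPoly A * (∑ i, X (Sum.inl i)) ^ r *
        (∑ j : Fin m, X (Sum.inr j)) ^ s).coeff μ
      = ∑ i, ∑ j, ∑ k, ∑ l, A i j k l *
          ((if (∑ t, μ (Sum.inl t)) = r + 2 then 1 else 0) *
            cnt (fun t => μ (Sum.inl t)) j i) *
          ((if (∑ t, μ (Sum.inr t)) = s + 2 then 1 else 0) *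
            cnt (fun t => μ (Sum.inr t)) l k) := by
    unfold biQuadPoly
    simp only [Finset.sum_mul, MvPolynomial.coeff_sum]
    exact Finset.sum_congr rfl fun i _ => Finset.sum_congr rfl fun j _ =>
      Finset.sum_congr rfl fun k _ => Finset.sum_congr rfl fun l _ =>
        term_coeff (A i j k l) i j k l r s μ
  rw [hexp]
  by_cases H1 : (∑ t, μ (Sum.inl t)) = r + 2
  swap
  · refine le_of_eq (Eq.symm ?_)
    refine Finset.sum_eq_zero fun i _ => Finset.sum_eq_zero fun j _ =>
      Finset.sum_eq_zero fun k _ => Finset.sum_eq_zero fun l _ => by simp [H1]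
  by_cases H2 : (∑ t, μ (Sum.inr t)) = s + 2
  swap
  · refine le_of_eq (Eq.symm ?_)
    refine Finset.sum_eq_zero fun i _ => Finset.sum_eq_zero fun j _ =>
      Finset.sum_eq_zero fun k _ => Finset.sum_eq_zero fun l _ => by simp [H2]
  simp only [H1, H2, if_pos, one_mul]
  -- now the real work
  set α : Fin n → ℕ := fun t => μ (Sum.inl t) with hα
  set β : Fin m → ℕ := fun t => μ (Sum.inr t) with hβ
  set x : Fin n → ℝ := fun t => (α t : ℝ) / ((r:ℝ) + 2) with hx
  set y : Fin m → ℝ := fun t => (β t : ℝ) / ((s:ℝ) + 2) with hy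
  have hrpos : (0:ℝ) < (r:ℝ) + 2 := by positivity
  have hspos : (0:ℝ) < (s:ℝ) + 2 := by positivity
  have hxmem : x ∈ stdSimplex ℝ (Fin n) := by
    constructor
    · intro t; positivity
    · rw [hx]
      rw [← Finset.sum_div]
      rw [div_eq_one_iff_eq (ne_of_gt hrpos)]
      rw [← Nat.cast_sum, H1]
      push_cast; ring
  have hymem : y ∈ stdSimplex ℝ (Fin m) := by
    constructor
    · intro t; positivity
    · rw [hy, ← Finset.sum_div, div_eq_one_iff_eq (ne_of_gt hspos), ← Nat.cast_sum, H2]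
      push_cast; ring
  have hfxy : ε ≤ f (x, y) := isMinOn_iff.mp hmin (x, y) (Set.mem_prod.mpr ⟨hxmem, hymem⟩)
  -- bounds on α and β values
  have hαle : ∀ t, (α t : ℝ) ≤ (r:ℝ) + 2 := by
    intro t
    have : α t ≤ r + 2 := H1 ▸ Finset.single_le_sum (fun u _ => Nat.zero_le (α u)) (mem_univ t)
    exact_mod_cast this
  have hβle : ∀ t, (β t : ℝ) ≤ (s:ℝ) + 2 := by
    intro t
    have : β t ≤ s + 2 := H2 ▸ Finset.single_le_sum (fun u _ => Nat.zero_le (β u)) (mem_univ t)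
    exact_mod_cast this
  set B : ℝ := ((r:ℝ) + 2) * ((s:ℝ) + 2) ^ 2 + ((r:ℝ) + 2) ^ 2 * ((s:ℝ) + 2) with hB
  -- Sval and its positivity
  set Sval : ℝ := ∑ i, ∑ j, ∑ k, ∑ l, A i j k l * Vv α j i * Vv β l k with hSval
  have hdiff : |Sval - ((r:ℝ) + 2) ^ 2 * ((s:ℝ) + 2) ^ 2 * f (x, y)| ≤ M * B := by
    have hG : ((r:ℝ) + 2) ^ 2 * ((s:ℝ) + 2) ^ 2 * f (x, y)
        = ∑ i, ∑ j, ∑ k, ∑ l, A i j k l * ((α j : ℝ) * (α i : ℝ) * ((β l : ℝ) * (β k : ℝ))) := by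
      rw [hf]
      simp only [Finset.mul_sum]
      refine Finset.sum_congr rfl fun i _ => Finset.sum_congr rfl fun j _ =>
        Finset.sum_congr rfl fun k _ => Finset.sum_congr rfl fun l _ => ?_
      rw [hx, hy]
      field_simp
    rw [hSval, hG]
    simp only [← Finset.sum_sub_distrib]
    have habs : ∀ i j k l, |A i j k l * Vv α j i * Vv β l k -
        A i j k l * ((α j : ℝ) * (α i : ℝ) * ((β l : ℝ) * (β k : ℝ)))| ≤ |A i j k l| * B := by
      intro i j k l
      have h1 := prod_diff_bound α (r + 2) H1 j i
      have h2 := prod_diff_bound β (s + 2) H2 l k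
      have h3 := Vv_le α (r + 2) H1 j i
      have h4 := Vv_nonneg α j i
      have h5 := Vv_nonneg β l k
      have hGy1 : (0:ℝ) ≤ (β l : ℝ) * (β k : ℝ) :=
        mul_nonneg (Nat.cast_nonneg _) (Nat.cast_nonneg _)
      have hGy2 : (β l : ℝ) * (β k : ℝ) ≤ ((s:ℝ) + 2) ^ 2 := by
        rw [sq]
        exact mul_le_mul (hβle l) (hβle k) (Nat.cast_nonneg _) (by positivity)
      have key : |Vv α j i * Vv β l k - (α j : ℝ) * (α i : ℝ) * ((β l : ℝ) * (β k : ℝ))|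
          ≤ B := by
        rw [hB]
        refine abs_prod_bound _ _ _ _ _ _ h1.1 ?_ h2.1 ?_ h4 ?_ hGy1 hGy2 h5
        · exact_mod_cast h1.2
        · exact_mod_cast h2.2
        · have : Vv α j i ≤ ((r:ℝ)+2) * ((r:ℝ)+2) := by exact_mod_cast h3
          nlinarith [this]
      calc |A i j k l * Vv α j i * Vv β l k -
            A i j k l * ((α j : ℝ) * (α i : ℝ) * ((β l : ℝ) * (β k : ℝ)))|
          = |A i j k l| * |Vv α j i * Vv β l k -
              (α j : ℝ) * (α i : ℝ) * ((β l : ℝ) * (β k : ℝ))| := by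
            rw [← abs_mul]; congr 1; ring
        _ ≤ |A i j k l| * B := by
            exact mul_le_mul_of_nonneg_left key (abs_nonneg _)
    calc |∑ i, ∑ j, ∑ k, ∑ l, (A i j k l * Vv α j i * Vv β l k -
            A i j k l * ((α j : ℝ) * (α i : ℝ) * ((β l : ℝ) * (β k : ℝ))))|
        ≤ ∑ i, ∑ j, ∑ k, ∑ l, |A i j k l * Vv α j i * Vv β l k -
            A i j k l * ((α j : ℝ) * (α i : ℝ) * ((β l : ℝ) * (β k : ℝ)))| := by
          refine (Finset.abs_sum_le_sum_abs _ _).trans (Finset.sum_le_sum fun i _ => ?_)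
          refine (Finset.abs_sum_le_sum_abs _ _).trans (Finset.sum_le_sum fun j _ => ?_)
          refine (Finset.abs_sum_le_sum_abs _ _).trans (Finset.sum_le_sum fun k _ => ?_)
          exact Finset.abs_sum_le_sum_abs _ _
      _ ≤ ∑ i, ∑ j, ∑ k, ∑ l, |A i j k l| * B := by
          refine Finset.sum_le_sum fun i _ => Finset.sum_le_sum fun j _ =>
            Finset.sum_le_sum fun k _ => Finset.sum_le_sum fun l _ => habs i j k l
      _ = M * B := by rw [hM]; simp only [Finset.sum_mul]
  have hMB : M * B < ((r:ℝ) + 2) ^ 2 * ((s:ℝ) + 2) ^ 2 * ε := by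
    have hrN : (2 * M / ε) < (r:ℝ) + 2 := by
      have : (N:ℝ) ≤ (r:ℝ) := by exact_mod_cast hr
      linarith
    have hsN : (2 * M / ε) < (s:ℝ) + 2 := by
      have : (N:ℝ) ≤ (s:ℝ) := by exact_mod_cast hs
      linarith
    have hM1 : 2 * M < ε * ((r:ℝ) + 2) := by
      rw [div_lt_iff₀ hεpos] at hrN; linarith
    have hM2 : 2 * M < ε * ((s:ℝ) + 2) := by
      rw [div_lt_iff₀ hεpos] at hsN; linarith
    rw [hB]
    have k1 := mul_lt_mul_of_pos_left hM1 (mul_pos (mul_pos hrpos hspos) hspos)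
    have k2 := mul_lt_mul_of_pos_left hM2 (mul_pos (mul_pos hrpos hrpos) hspos)
    nlinarith [k1, k2]
  have hSpos : 0 < Sval := by
    have h1 : ((r:ℝ) + 2) ^ 2 * ((s:ℝ) + 2) ^ 2 * ε
        ≤ ((r:ℝ) + 2) ^ 2 * ((s:ℝ) + 2) ^ 2 * f (x, y) := by
      apply mul_le_mul_of_nonneg_left hfxy (by positivity)
    have h2 := neg_le_of_abs_le hdiff
    have h3 : -(M*B) ≤ Sval - ((r:ℝ) + 2) ^ 2 * ((s:ℝ) + 2) ^ 2 * f (x, y) := h2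
    nlinarith [hMB, h1, h3]
  -- relate the coefficient sum to Sval
  set D : ℝ := (((r:ℝ) + 2) * ((r:ℝ) + 1)) * (((s:ℝ) + 2) * ((s:ℝ) + 1)) with hD
  have hDpos : 0 < D := by rw [hD]; positivity
  set Mx : ℝ := (Nat.multinomial univ α : ℝ) with hMx
  set My : ℝ := (Nat.multinomial univ β : ℝ) with hMy
  have hkey : D * (∑ i, ∑ j, ∑ k, ∑ l, A i j k l * cnt α j i * cnt β l k)
      = Mx * My * Sval := by
    rw [hSval]
    simp only [Finset.mul_sum]
    refine Finset.sum_congr rfl fun i _ => Finset.sum_congr rfl fun j _ =>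
      Finset.sum_congr rfl fun k _ => Finset.sum_congr rfl fun l _ => ?_
    have e1 := double_step α r H1 j i
    have e2 := double_step β s H2 l k
    rw [hD]
    calc (((r:ℝ) + 2) * ((r:ℝ) + 1)) * (((s:ℝ) + 2) * ((s:ℝ) + 1)) *
          (A i j k l * cnt α j i * cnt β l k)
        = A i j k l * ((((r:ℝ) + 2) * ((r:ℝ) + 1)) * cnt α j i) *
            ((((s:ℝ) + 2) * ((s:ℝ) + 1)) * cnt β l k) := by push_cast; ring
      _ = A i j k l * ((Nat.multinomial univ α : ℝ) * Vv α j i) *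
            ((Nat.multinomial univ β : ℝ) * Vv β l k) := by
          push_cast at e1 e2 ⊢; rw [e1, e2]
      _ = Mx * My * (A i j k l * Vv α j i * Vv β l k) := by rw [hMx, hMy]; ring
  have hfinal : 0 ≤ D * (∑ i, ∑ j, ∑ k, ∑ l, A i j k l * cnt α j i * cnt β l k) := by
    rw [hkey]
    have : (0:ℝ) ≤ Mx := by rw [hMx]; positivity
    have : (0:ℝ) ≤ My := by rw [hMy]; positivity
    positivity
  nlinarith [hfinal, hDpos, mul_pos hDpos hDpos]
end

section
/- Let G = (g_{ijkl}) be a partially symmetric (2,2)-th order n×n×m×m tensor, let s, r be nonnegative integers, and let ξ ∈ I(n,s+2), ζ ∈ I(m,r+2). Then Q̄_{ξζ}(G) = [c(ξ)c(ζ) / ((s+2)(s+1)(r+2)(r+1))] · ( Σ_{i,j=1}^n Σ_{k,l=1}^m g_{ijkl} ξ_i ξ_j ζ_k ζ_l − Σ_{i=1}^n ξ_i (Σ_{k,l=1}^m g_{iikl} ζ_k ζ_l) − Σ_{k=1}^m ζ_k (Σ_{i,j=1}^n g_{ijkk} ξ_i ξ_j) + Σ_{i=1}^n Σ_{k=1}^m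 g_{iikk} ξ_i ζ_k ). -/
open Finset


set_option linter.unusedVariables false

/-- The multinomial-type coefficient `c(α) = |α|!/(α_1!⋯α_n!)` for `α ∈ ℤ^n` with all
entries nonnegative, and `c(α) = 0` otherwise. -/
noncomputable def multCoeff {n : ℕ} (α : Fin n → ℤ) : ℝ :=
  if ∀ i, 0 ≤ α i then
    ((∑ i, (α i).toNat).factorial : ℝ) / ∏ i, ((α i).toNat.factorial : ℝ)
  else 0

/-- `Q̄_{ξζ}(G) = Σ_{i,j,k,l} g_{ijkl} c(ξ − e_i − e_j) c(ζ − e_k − e_l)`. -/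
noncomputable def Qbar {n m : ℕ} (G : Fin n → Fin n → Fin m → Fin m → ℝ)
    (ξ : Fin n → ℕ) (ζ : Fin m → ℕ) : ℝ :=
  ∑ i, ∑ j, ∑ k, ∑ l, G i j k l *
    multCoeff (fun a => (ξ a : ℤ) - (if a = i then 1 else 0) - (if a = j then 1 else 0)) *
    multCoeff (fun b => (ζ b : ℤ) - (if b = k then 1 else 0) - (if b = l then 1 else 0))

open Finset in
lemma multCoeff_sub_one {n : ℕ} (ξ : Fin n → ℕ) (S : ℕ) (hξ : ∑ a, ξ a = S + 1) (i : Fin n) :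
    multCoeff (fun a => (ξ a : ℤ) - (if a = i then 1 else 0)) * ((S : ℝ) + 1) =
    multCoeff (fun a => (ξ a : ℤ)) * (ξ i : ℝ) := by
  rcases Nat.eq_zero_or_pos (ξ i) with h0 | hpos
  · have hne : ¬ ∀ a, (0:ℤ) ≤ (ξ a : ℤ) - (if a = i then 1 else 0) := by
      intro h; have := h i; simp [h0] at this
    simp only [multCoeff, if_neg hne, zero_mul, h0, Nat.cast_zero, mul_zero]
  · have hnonneg : ∀ a, (0:ℤ) ≤ (ξ a : ℤ) - (if a = i then 1 else 0) := by
      intro a; split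
      · next h => subst h; omega
      · simp
    have hnonneg' : ∀ a, (0:ℤ) ≤ (ξ a : ℤ) := fun a => by positivity
    have htoNat : ∀ a, ((ξ a : ℤ) - (if a = i then 1 else 0)).toNat
        = if a = i then ξ a - 1 else ξ a := by
      intro a; split <;> omega
    have hsum : ∑ a, ((ξ a : ℤ) - (if a = i then 1 else 0)).toNat = S := by
      simp only [htoNat]
      have h1 : ∑ a, (if a = i then ξ a - 1 else ξ a)
          = (ξ i - 1) + ∑ a ∈ univ.erase i, ξ a := by
        rw [← Finset.add_sum_erase _ _ (mem_univ i), if_pos rfl]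
        exact congrArg _ (Finset.sum_congr rfl fun a ha => if_neg (Finset.ne_of_mem_erase ha))
      have h2 : ξ i + ∑ a ∈ univ.erase i, ξ a = S + 1 := by
        rw [Finset.add_sum_erase _ _ (mem_univ i)]; exact hξ
      omega
    have hprod : ∏ a, (((ξ a : ℤ) - (if a = i then 1 else 0)).toNat.factorial : ℝ)
        = ((ξ i - 1).factorial : ℝ) * ∏ a ∈ univ.erase i, ((ξ a).factorial : ℝ) := by
      simp only [htoNat]
      rw [← Finset.mul_prod_erase _ _ (mem_univ i), if_pos rfl]
      congr 1
      exact Finset.prod_congr rfl fun a ha => by rw [if_neg (Finset.ne_of_mem_erase ha)]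
    have hprod' : ∏ a, (((ξ a : ℤ)).toNat.factorial : ℝ)
        = ((ξ i).factorial : ℝ) * ∏ a ∈ univ.erase i, ((ξ a).factorial : ℝ) := by
      simp only [Int.toNat_natCast]
      rw [← Finset.mul_prod_erase _ _ (mem_univ i)]
    rw [multCoeff, if_pos hnonneg, multCoeff, if_pos hnonneg', hsum, hprod]
    simp only [Int.toNat_natCast] at hprod' ⊢
    rw [hprod', hξ]
    have hfac : ((ξ i).factorial : ℝ) = (ξ i : ℝ) * ((ξ i - 1).factorial : ℝ) := by
      rw [← Nat.cast_mul, Nat.mul_factorial_pred hpos.ne']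
    have hfacS : ((S+1).factorial : ℝ) = ((S:ℝ)+1) * (S.factorial : ℝ) := by
      push_cast [Nat.factorial_succ]; ring
    have p1 : ((ξ i - 1).factorial : ℝ) ≠ 0 := Nat.cast_ne_zero.2 (Nat.factorial_ne_zero _)
    have p2 : ∏ a ∈ univ.erase i, ((ξ a).factorial : ℝ) ≠ 0 :=
      Finset.prod_ne_zero_iff.2 fun a _ => Nat.cast_ne_zero.2 (Nat.factorial_ne_zero _)
    have p3 : (ξ i : ℝ) ≠ 0 := Nat.cast_ne_zero.2 hpos.ne'
    rw [hfac, hfacS]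
    field_simp

open Finset in
lemma multCoeff_sub_two {n : ℕ} (ξ : Fin n → ℕ) (S : ℕ) (hξ : ∑ a, ξ a = S + 2) (i j : Fin n) :
    multCoeff (fun a => (ξ a : ℤ) - (if a = i then 1 else 0) - (if a = j then 1 else 0))
        * (((S : ℝ) + 2) * ((S : ℝ) + 1)) =
    multCoeff (fun a => (ξ a : ℤ)) *
      ((ξ i : ℝ) * (ξ j : ℝ) - if i = j then (ξ i : ℝ) else 0) := by
  rcases Nat.eq_zero_or_pos (ξ j) with h0 | hpos
  · have hne : ¬ ∀ a, (0:ℤ) ≤ (ξ a : ℤ) - (if a = i then 1 else 0) - (if a = j then 1 else 0) := by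
      intro h; have := h j; simp [h0] at this; split at this <;> omega
    have hz : ((ξ i : ℝ) * (ξ j : ℝ) - if i = j then (ξ i : ℝ) else 0) = 0 := by
      split
      · next h => subst h; simp [h0]
      · simp [h0]
    simp only [multCoeff, if_neg hne, zero_mul, hz, mul_zero]
  · set ξ' : Fin n → ℕ := fun a => ξ a - (if a = j then 1 else 0) with hξ'def
    have hsum' : ∑ a, ξ' a = S + 1 := by
      have h1 : ∑ a, ξ' a = (ξ j - 1) + ∑ a ∈ univ.erase j, ξ a := by
        rw [← Finset.add_sum_erase _ _ (mem_univ j)]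
        simp only [hξ'def, if_pos rfl]
        exact congrArg _ (Finset.sum_congr rfl fun a ha => by
          rw [if_neg (Finset.ne_of_mem_erase ha), Nat.sub_zero])
      have h2 : ξ j + ∑ a ∈ univ.erase j, ξ a = S + 2 := by
        rw [Finset.add_sum_erase _ _ (mem_univ j)]; exact hξ
      omega
    have hfun : (fun a => (ξ a : ℤ) - (if a = i then 1 else 0) - (if a = j then 1 else 0))
        = (fun a => (ξ' a : ℤ) - (if a = i then 1 else 0)) := by
      funext a
      simp only [hξ'def]
      rcases eq_or_ne a j with rfl | haj
      · rcases eq_or_ne a i with rfl | hai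
        · simp only [if_pos rfl, if_true, ite_true, eq_self_iff_true]; omega
        · simp only [if_neg hai, if_pos rfl, if_true, ite_true, eq_self_iff_true]; omega
      · simp only [if_neg haj]
        rcases eq_or_ne a i with rfl | hai
        · simp only [if_pos rfl, if_true, ite_true, eq_self_iff_true]; omega
        · simp only [if_neg hai]; omega
    have hfun' : (fun a => (ξ' a : ℤ)) = (fun a => (ξ a : ℤ) - (if a = j then 1 else 0)) := by
      funext a
      simp only [hξ'def]
      rcases eq_or_ne a j with rfl | haj
      · simp only [if_pos rfl, if_true, ite_true, eq_self_iff_true]; omega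
      · simp only [if_neg haj]; omega
    have step1 := multCoeff_sub_one ξ' S hsum' i
    have step2 := multCoeff_sub_one ξ (S+1) hξ j
    rw [hfun'] at step1
    push_cast at step2
    have hξ'i : (ξ' i : ℝ) = (ξ i : ℝ) - (if i = j then 1 else 0) := by
      simp only [hξ'def]
      split
      · next h => subst h; push_cast [Nat.cast_sub hpos]; simp
      · simp
    rw [hfun]
    calc multCoeff (fun a => (ξ' a : ℤ) - (if a = i then 1 else 0)) * (((S:ℝ)+2) * ((S:ℝ)+1))
        = (multCoeff (fun a => (ξ' a : ℤ) - (if a = i then 1 else 0)) * ((S:ℝ)+1)) * ((S:ℝ)+2) := by ring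
      _ = (multCoeff (fun a => (ξ a : ℤ) - (if a = j then 1 else 0)) * ((S:ℝ)+1+1)) * (ξ' i : ℝ) := by
            rw [step1]; ring
      _ = multCoeff (fun a => (ξ a : ℤ)) * ((ξ i : ℝ) * (ξ j : ℝ) - if i = j then (ξ i : ℝ) else 0) := by
            rw [step2, hξ'i]
            split <;> [skip; skip]
            · next h => subst h; ring
            · ring


/-- **Lemma 1.** Closed formula for `Q̄_{ξζ}(G)` when `G` is partially
symmetric, `ξ ∈ I(n,s+2)` and `ζ ∈ I(m,r+2)`. -/
theorem Qbar_formula (n m : ℕ) (hn : 0 < n) (hm : 0 < m) (s r : ℕ)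
    (G : Fin n → Fin n → Fin m → Fin m → ℝ)
    (hsym : ∀ i j k l, G i j k l = G j i k l ∧ G j i k l = G j i l k)
    (ξ : Fin n → ℕ) (hξ : ∑ i, ξ i = s + 2)
    (ζ : Fin m → ℕ) (hζ : ∑ k, ζ k = r + 2) :
    Qbar G ξ ζ =
      multCoeff (fun a => (ξ a : ℤ)) * multCoeff (fun b => (ζ b : ℤ)) /
          (((s : ℝ) + 2) * ((s : ℝ) + 1) * ((r : ℝ) + 2) * ((r : ℝ) + 1)) *
        ((∑ i, ∑ j, ∑ k, ∑ l, G i j k l * (ξ i : ℝ) * (ξ j : ℝ) * (ζ k : ℝ) * (ζ l : ℝ))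
          - (∑ i, (ξ i : ℝ) * ∑ k, ∑ l, G i i k l * (ζ k : ℝ) * (ζ l : ℝ))
          - (∑ k, (ζ k : ℝ) * ∑ i, ∑ j, G i j k k * (ξ i : ℝ) * (ξ j : ℝ))
          + ∑ i, ∑ k, G i i k k * (ξ i : ℝ) * (ζ k : ℝ)) := by
  have hDs : ((s:ℝ)+2) * ((s:ℝ)+1) ≠ 0 := by positivity
  have hDr : ((r:ℝ)+2) * ((r:ℝ)+1) ≠ 0 := by positivity
  set Cξ := multCoeff (fun a => (ξ a : ℤ)) with hCξ
  set Cζ := multCoeff (fun b => (ζ b : ℤ)) with hCζ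
  have hx : ∀ i j, multCoeff (fun a => (ξ a : ℤ) - (if a = i then 1 else 0) - (if a = j then 1 else 0))
      = Cξ * ((ξ i : ℝ) * (ξ j : ℝ) - if i = j then (ξ i : ℝ) else 0) / (((s:ℝ)+2) * ((s:ℝ)+1)) :=
    fun i j => eq_div_of_mul_eq hDs (multCoeff_sub_two ξ s hξ i j)
  have hz : ∀ k l, multCoeff (fun b => (ζ b : ℤ) - (if b = k then 1 else 0) - (if b = l then 1 else 0))
      = Cζ * ((ζ k : ℝ) * (ζ l : ℝ) - if k = l then (ζ k : ℝ) else 0) / (((r:ℝ)+2) * ((r:ℝ)+1)) :=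
    fun k l => eq_div_of_mul_eq hDr (multCoeff_sub_two ζ r hζ k l)
  have key : Qbar G ξ ζ = Cξ * Cζ / (((s:ℝ)+2) * ((s:ℝ)+1) * ((r:ℝ)+2) * ((r:ℝ)+1)) *
      ∑ i, ∑ j, ∑ k, ∑ l, G i j k l *
        ((ξ i : ℝ) * (ξ j : ℝ) - if i = j then (ξ i : ℝ) else 0) *
        ((ζ k : ℝ) * (ζ l : ℝ) - if k = l then (ζ k : ℝ) else 0) := by
    unfold Qbar
    simp only [Finset.mul_sum]
    refine Finset.sum_congr rfl fun i _ => Finset.sum_congr rfl fun j _ =>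
      Finset.sum_congr rfl fun k _ => Finset.sum_congr rfl fun l _ => ?_
    rw [hx i j, hz k l]
    field_simp
  rw [key]
  congr 1
  -- expand the product and collapse the diagonal sums
  have expand : ∀ i j k l, G i j k l *
        ((ξ i : ℝ) * (ξ j : ℝ) - if i = j then (ξ i : ℝ) else 0) *
        ((ζ k : ℝ) * (ζ l : ℝ) - if k = l then (ζ k : ℝ) else 0)
      = G i j k l * (ξ i : ℝ) * (ξ j : ℝ) * (ζ k : ℝ) * (ζ l : ℝ)
        - (if i = j then G i j k l * (ξ i : ℝ) * (ζ k : ℝ) * (ζ l : ℝ) else 0)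
        - (if k = l then G i j k l * (ξ i : ℝ) * (ξ j : ℝ) * (ζ k : ℝ) else 0)
        + (if i = j then (if k = l then G i j k l * (ξ i : ℝ) * (ζ k : ℝ) else 0) else 0) := by
    intro i j k l
    rcases eq_or_ne i j with rfl | hij
    · rcases eq_or_ne k l with rfl | hkl
      · simp only [if_pos rfl, if_true, ite_true, eq_self_iff_true]; ring
      · simp only [if_pos rfl, if_true, ite_true, eq_self_iff_true, if_neg hkl]; ring
    · rcases eq_or_ne k l with rfl | hkl
      · simp only [if_neg hij, if_pos rfl, if_true, ite_true, eq_self_iff_true]; ring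
      · simp only [if_neg hij, if_neg hkl]; ring
  simp only [expand, Finset.sum_add_distrib, Finset.sum_sub_distrib,
    Finset.sum_ite_irrel, Finset.sum_const_zero, Finset.sum_ite_eq, Finset.mem_univ,
    if_true, ite_true]
  have hB : (∑ i, (ξ i : ℝ) * ∑ k, ∑ l, G i i k l * (ζ k : ℝ) * (ζ l : ℝ))
      = ∑ i, ∑ k, ∑ l, G i i k l * (ξ i : ℝ) * (ζ k : ℝ) * (ζ l : ℝ) := by
    refine Finset.sum_congr rfl fun i _ => ?_
    rw [Finset.mul_sum]
    refine Finset.sum_congr rfl fun k _ => ?_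
    rw [Finset.mul_sum]
    exact Finset.sum_congr rfl fun l _ => by ring
  have hC : (∑ k, (ζ k : ℝ) * ∑ i, ∑ j, G i j k k * (ξ i : ℝ) * (ξ j : ℝ))
      = ∑ i, ∑ j, ∑ k, G i j k k * (ξ i : ℝ) * (ξ j : ℝ) * (ζ k : ℝ) := by
    have h1 : (∑ k, (ζ k : ℝ) * ∑ i, ∑ j, G i j k k * (ξ i : ℝ) * (ξ j : ℝ))
        = ∑ k, ∑ i, ∑ j, G i j k k * (ξ i : ℝ) * (ξ j : ℝ) * (ζ k : ℝ) := by
      refine Finset.sum_congr rfl fun k _ => ?_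
      rw [Finset.mul_sum]
      refine Finset.sum_congr rfl fun i _ => ?_
      rw [Finset.mul_sum]
      exact Finset.sum_congr rfl fun j _ => by ring
    rw [h1, Finset.sum_comm]
    exact Finset.sum_congr rfl fun i _ => Finset.sum_comm
  rw [hB, hC]
end

section
/- Let A = (a_{ijkl}) be a partially symmetric (2,2)-th order n×n×m×m tensor and let s, r be nonnegative integers. Then p_Δ^{(s,r)} − p_A^min ≤ [(s+r+4)/((s+2)(r+2))] (p_A^max − p_A^min), where p_Δ^{(s,r)} = min{ p_A(x,y) : x ∈ Δ_n(s), y ∈ Δ_m(r) }. -/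
open Finset

section GridAux

/-! ### Auxiliary definitions and lemmas -/

noncomputable def cntR {k n : ℕ} (f : Fin k → Fin n) (i : Fin n) : ℝ :=
  ((univ.filter fun t => f t = i).card : ℝ)

noncomputable def Pform {n m : ℕ} (A : Fin n → Fin n → Fin m → Fin m → ℝ)
    (x : Fin n → ℝ) (y : Fin m → ℝ) : ℝ :=
  ∑ i, ∑ j, ∑ k, ∑ l, A i j k l * x i * x j * y k * y l

lemma cnt_eq {k n : ℕ} (f : Fin k → Fin n) (i : Fin n) :
    cntR f i = ∑ t : Fin k, (if f t = i then (1:ℝ) else 0) := by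
  rw [cntR, Finset.card_filter]
  push_cast
  rfl

lemma ind1 {n : ℕ} (x : Fin n → ℝ) (i : Fin n) :
    ∑ c, x c * (if c = i then (1:ℝ) else 0) = x i := by
  simp [mul_ite, Finset.sum_ite_eq']

lemma ind2 {n : ℕ} (x : Fin n → ℝ) (i j : Fin n) :
    ∑ c, x c * (if c = i then (1:ℝ) else 0) * (if c = j then 1 else 0)
      = if i = j then x i else 0 := by
  have h : ∀ c : Fin n, x c * (if c = i then (1:ℝ) else 0) * (if c = j then 1 else 0)
      = if c = i then (if i = j then x i else 0) else 0 := by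
    intro c
    by_cases hc : c = i
    · subst hc
      by_cases hij : c = j <;> simp [hij]
    · simp [hc]
  rw [Finset.sum_congr rfl (fun c _ => h c)]
  simp [Finset.sum_ite_eq']

lemma moment (k n : ℕ) (x : Fin n → ℝ) (hx : ∑ i, x i = 1) (i j : Fin n) :
    ∑ f : Fin k → Fin n, (∏ t, x (f t)) * cntR f i * cntR f j
      = ((k:ℝ)*((k:ℝ)-1)) * (x i * x j) + (if i = j then (k:ℝ) * x i else 0) := by
  have key : ∀ a b : Fin k,
      (∑ f : Fin k → Fin n, ∏ t, (x (f t) * (if t = a then (if f t = i then 1 else 0) else 1)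
          * (if t = b then (if f t = j then 1 else 0) else 1)))
      = (if a = b then (if i = j then x i else 0) else x i * x j) := by
    intro a b
    have hps := Fintype.prod_sum (κ := fun _ : Fin k => Fin n)
      (f := fun t c => x c * (if t = a then (if c = i then (1:ℝ) else 0) else 1)
          * (if t = b then (if c = j then 1 else 0) else 1))
    rw [← hps]
    by_cases hab : a = b
    · subst hab
      have h : ∀ t : Fin k, (∑ c, x c * (if t = a then (if c = i then (1:ℝ) else 0) else 1)
          * (if t = a then (if c = j then 1 else 0) else 1))
          = (if t = a then (if i = j then x i else 0) else 1) := by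
        intro t
        by_cases h : t = a
        · simp only [h, if_pos rfl]
          exact ind2 x i j
        · simp [h, hx]
      rw [Finset.prod_congr rfl (fun t _ => h t),
        Finset.prod_ite_eq' univ a (fun _ => if i = j then x i else 0)]
      simp
    · have h : ∀ t : Fin k, (∑ c, x c * (if t = a then (if c = i then (1:ℝ) else 0) else 1)
          * (if t = b then (if c = j then 1 else 0) else 1))
          = (if t = a then x i else 1) * (if t = b then x j else 1) := by
        intro t
        by_cases h1 : t = a <;> by_cases h2 : t = b
        · exact absurd (h1 ▸ h2.symm ▸ rfl : a = b) hab
        · subst h1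
          simp only [if_pos rfl, if_neg h2, mul_one]
          exact ind1 x i
        · subst h2
          simp only [if_pos rfl, if_neg h1, mul_one, one_mul]
          exact ind1 x j
        · simp [h1, h2, hx]
      rw [Finset.prod_congr rfl (fun t _ => h t), Finset.prod_mul_distrib,
        Finset.prod_ite_eq' univ a (fun _ => x i), Finset.prod_ite_eq' univ b (fun _ => x j)]
      simp [hab]
  have expand : ∀ f : Fin k → Fin n,
      (∏ t, x (f t)) * cntR f i * cntR f j
      = ∑ a : Fin k, ∑ b : Fin k, ∏ t, (x (f t) * (if t = a then (if f t = i then 1 else 0) else 1)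
          * (if t = b then (if f t = j then 1 else 0) else 1)) := by
    intro f
    have pt : ∀ a b : Fin k,
        (∏ t, (x (f t) * (if t = a then (if f t = i then (1:ℝ) else 0) else 1)
          * (if t = b then (if f t = j then 1 else 0) else 1)))
        = (∏ t, x (f t)) * (if f a = i then 1 else 0) * (if f b = j then 1 else 0) := by
      intro a b
      rw [Finset.prod_mul_distrib, Finset.prod_mul_distrib,
        Finset.prod_ite_eq' univ a (fun t => if f t = i then (1:ℝ) else 0),
        Finset.prod_ite_eq' univ b (fun t => if f t = j then (1:ℝ) else 0)]
      simp
    rw [cnt_eq, cnt_eq, mul_assoc, Finset.sum_mul_sum, Finset.mul_sum]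
    refine Finset.sum_congr rfl fun a _ => ?_
    rw [Finset.mul_sum]
    refine Finset.sum_congr rfl fun b _ => ?_
    rw [pt a b]
    ring
  rw [Finset.sum_congr rfl (fun f _ => expand f), Finset.sum_comm]
  have swap2 : ∀ a : Fin k, ∑ f : Fin k → Fin n, ∑ b : Fin k,
      (∏ t, (x (f t) * (if t = a then (if f t = i then (1:ℝ) else 0) else 1)
          * (if t = b then (if f t = j then 1 else 0) else 1)))
      = ∑ b : Fin k, (if a = b then (if i = j then x i else 0) else x i * x j) := by
    intro a
    rw [Finset.sum_comm]
    exact Finset.sum_congr rfl fun b _ => key a b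
  rw [Finset.sum_congr rfl (fun a _ => swap2 a)]
  set u : ℝ := if i = j then x i else 0 with hu
  have inner : ∀ a : Fin k, (∑ b : Fin k, if a = b then u else x i * x j)
      = (k:ℝ) * (x i * x j) + (u - x i * x j) := by
    intro a
    have h : ∀ b : Fin k, (if a = b then u else x i * x j)
        = x i * x j + (if a = b then u - x i * x j else 0) := by
      intro b; by_cases h : a = b <;> simp [h]
    rw [Finset.sum_congr rfl (fun b _ => h b), Finset.sum_add_distrib,
      Finset.sum_ite_eq univ a (fun _ => u - x i * x j)]
    simp
  rw [Finset.sum_congr rfl (fun a _ => inner a), Finset.sum_const]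
  have hku : (if i = j then (k:ℝ) * x i else 0) = (k:ℝ) * u := by
    by_cases h : i = j <;> simp [hu, h]
  rw [hku]
  simp only [Finset.card_univ, Fintype.card_fin, nsmul_eq_mul]
  ring

lemma Pform_cont {n m : ℕ} (A : Fin n → Fin n → Fin m → Fin m → ℝ) :
    Continuous (fun p : (Fin n → ℝ) × (Fin m → ℝ) => Pform A p.1 p.2) := by
  unfold Pform
  fun_prop

lemma Sset_eq {n m : ℕ} (A : Fin n → Fin n → Fin m → Fin m → ℝ) :
    {v : ℝ | ∃ x ∈ stdSimplex ℝ (Fin n), ∃ y ∈ stdSimplex ℝ (Fin m),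
        v = ∑ i, ∑ j, ∑ k, ∑ l, A i j k l * x i * x j * y k * y l}
    = (fun p : (Fin n → ℝ) × (Fin m → ℝ) => Pform A p.1 p.2) ''
        (stdSimplex ℝ (Fin n) ×ˢ stdSimplex ℝ (Fin m)) := by
  ext v
  constructor
  · rintro ⟨x, hx, y, hy, rfl⟩
    exact ⟨(x, y), ⟨hx, hy⟩, rfl⟩
  · rintro ⟨⟨x, y⟩, ⟨hx, hy⟩, rfl⟩
    exact ⟨x, hx, y, hy, rfl⟩

lemma Sset_compact {n m : ℕ} (A : Fin n → Fin n → Fin m → Fin m → ℝ) :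
    IsCompact {v : ℝ | ∃ x ∈ stdSimplex ℝ (Fin n), ∃ y ∈ stdSimplex ℝ (Fin m),
        v = ∑ i, ∑ j, ∑ k, ∑ l, A i j k l * x i * x j * y k * y l} := by
  rw [Sset_eq]
  exact ((isCompact_stdSimplex ℝ _).prod (isCompact_stdSimplex ℝ _)).image (Pform_cont A)

lemma Pform_single_left {n m : ℕ} (A : Fin n → Fin n → Fin m → Fin m → ℝ)
    (i : Fin n) (y : Fin m → ℝ) :
    Pform A (fun j => if i = j then 1 else 0) y = ∑ k, ∑ l, A i i k l * y k * y l := by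
  unfold Pform
  simp [ite_mul, mul_ite, Finset.sum_ite_eq, mul_assoc]

lemma Pform_single_right {n m : ℕ} (A : Fin n → Fin n → Fin m → Fin m → ℝ)
    (k : Fin m) (x : Fin n → ℝ) :
    Pform A x (fun l => if k = l then 1 else 0) = ∑ i, ∑ j, A i j k k * x i * x j := by
  unfold Pform
  simp [ite_mul, mul_ite, Finset.sum_ite_eq, mul_assoc]

lemma Pform_single_both {n m : ℕ} (A : Fin n → Fin n → Fin m → Fin m → ℝ)
    (i : Fin n) (k : Fin m) :
    Pform A (fun j => if i = j then 1 else 0) (fun l => if k = l then 1 else 0) = A i i k k := by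
  unfold Pform
  simp [ite_mul, mul_ite, Finset.sum_ite_eq, mul_assoc]

lemma weight_sum {n : ℕ} (k : ℕ) (x : Fin n → ℝ) (hx : ∑ i, x i = 1) :
    ∑ f : Fin k → Fin n, (∏ t, x (f t)) = 1 := by
  rw [← Fintype.sum_pow x k, hx, one_pow]

lemma cnt_sum {n : ℕ} (k : ℕ) (f : Fin k → Fin n) :
    ∑ i, cntR f i = k := by
  have h := Finset.card_eq_sum_card_fiberwise
    (f := f) (s := univ) (t := univ) (fun t _ => Finset.mem_univ (f t))
  simp only [Finset.card_univ, Fintype.card_fin] at h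
  unfold cntR
  exact_mod_cast h.symm

lemma grid_mem {n : ℕ} (k : ℕ) (hk : 0 < k) (f : Fin k → Fin n) :
    (fun i => cntR f i / k) ∈ stdSimplex ℝ (Fin n) := by
  constructor
  · intro i
    have : (0:ℝ) ≤ cntR f i := by unfold cntR; positivity
    positivity
  · rw [← Finset.sum_div, cnt_sum]
    field_simp

lemma swap_w {ι α : Type*} [Fintype ι] [Fintype α] (w : ι → ℝ) (B : α → ℝ) (F : ι → α → ℝ) :
    ∑ f, w f * ∑ a, B a * F f a = ∑ a, B a * ∑ f, w f * F f a := by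
  simp only [Finset.mul_sum]
  rw [Finset.sum_comm]
  exact Finset.sum_congr rfl fun a _ => Finset.sum_congr rfl fun f _ => by ring

lemma factor {n m : ℕ} (k l : ℕ) (A : Fin n → Fin n → Fin m → Fin m → ℝ)
    (x : Fin n → ℝ) (y : Fin m → ℝ) :
    ∑ f : Fin k → Fin n, ∑ g : Fin l → Fin m,
      ((∏ t, x (f t)) * (∏ t, y (g t))) *
        (∑ i, ∑ j, ∑ p, ∑ q, A i j p q * cntR f i * cntR f j * cntR g p * cntR g q)
    = ∑ i, ∑ j, ∑ p, ∑ q, A i j p q *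
        (∑ f : Fin k → Fin n, (∏ t, x (f t)) * cntR f i * cntR f j) *
        (∑ g : Fin l → Fin m, (∏ t, y (g t)) * cntR g p * cntR g q) := by
  classical
  set B : (Fin n × Fin n) × Fin m × Fin m → ℝ := fun z => A z.1.1 z.1.2 z.2.1 z.2.2 with hB
  have hnest : ∀ (F : Fin n → Fin n → Fin m → Fin m → ℝ),
      (∑ i, ∑ j, ∑ p, ∑ q, F i j p q)
        = ∑ z : (Fin n × Fin n) × Fin m × Fin m, F z.1.1 z.1.2 z.2.1 z.2.2 := by
    intro F
    simp only [Fintype.sum_prod_type]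
  have hQ : ∀ (f : Fin k → Fin n) (g : Fin l → Fin m),
      (∑ i, ∑ j, ∑ p, ∑ q, A i j p q * cntR f i * cntR f j * cntR g p * cntR g q)
        = ∑ z : (Fin n × Fin n) × Fin m × Fin m,
            B z * (cntR f z.1.1 * cntR f z.1.2) * (cntR g z.2.1 * cntR g z.2.2) := by
    intro f g
    rw [hnest (fun i j p q => A i j p q * cntR f i * cntR f j * cntR g p * cntR g q)]
    exact Finset.sum_congr rfl fun z _ => by simp [hB]; ring
  calc
    ∑ f : Fin k → Fin n, ∑ g : Fin l → Fin m,
      ((∏ t, x (f t)) * (∏ t, y (g t))) *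
        (∑ i, ∑ j, ∑ p, ∑ q, A i j p q * cntR f i * cntR f j * cntR g p * cntR g q)
      = ∑ f : Fin k → Fin n, (∏ t, x (f t)) * ∑ g : Fin l → Fin m, (∏ t, y (g t)) *
          (∑ z : (Fin n × Fin n) × Fin m × Fin m,
            (B z * (cntR f z.1.1 * cntR f z.1.2)) * (cntR g z.2.1 * cntR g z.2.2)) := by
        refine Finset.sum_congr rfl fun f _ => ?_
        rw [Finset.mul_sum]
        refine Finset.sum_congr rfl fun g _ => ?_
        rw [hQ f g]
        ring
    _ = ∑ f : Fin k → Fin n, (∏ t, x (f t)) *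
          (∑ z : (Fin n × Fin n) × Fin m × Fin m,
            (B z * (cntR f z.1.1 * cntR f z.1.2)) *
              (∑ g : Fin l → Fin m, (∏ t, y (g t)) * (cntR g z.2.1 * cntR g z.2.2))) := by
        refine Finset.sum_congr rfl fun f _ => ?_
        rw [swap_w (fun g : Fin l → Fin m => (∏ t, y (g t)))
          (fun z : (Fin n × Fin n) × Fin m × Fin m => B z * (cntR f z.1.1 * cntR f z.1.2))
          (fun g z => cntR g z.2.1 * cntR g z.2.2)]
    _ = ∑ z : (Fin n × Fin n) × Fin m × Fin m,
          (B z * (∑ g : Fin l → Fin m, (∏ t, y (g t)) * (cntR g z.2.1 * cntR g z.2.2))) *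
            (∑ f : Fin k → Fin n, (∏ t, x (f t)) * (cntR f z.1.1 * cntR f z.1.2)) := by
        rw [← swap_w (fun f : Fin k → Fin n => (∏ t, x (f t)))
          (fun z : (Fin n × Fin n) × Fin m × Fin m =>
            B z * (∑ g : Fin l → Fin m, (∏ t, y (g t)) * (cntR g z.2.1 * cntR g z.2.2)))
          (fun f z => cntR f z.1.1 * cntR f z.1.2)]
        refine Finset.sum_congr rfl fun f _ => ?_
        rw [Finset.mul_sum, Finset.mul_sum]
        refine Finset.sum_congr rfl fun z _ => by ring
    _ = ∑ i, ∑ j, ∑ p, ∑ q, A i j p q *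
        (∑ f : Fin k → Fin n, (∏ t, x (f t)) * cntR f i * cntR f j) *
        (∑ g : Fin l → Fin m, (∏ t, y (g t)) * cntR g p * cntR g q) := by
        rw [hnest (fun i j p q => A i j p q *
          (∑ f : Fin k → Fin n, (∏ t, x (f t)) * cntR f i * cntR f j) *
          (∑ g : Fin l → Fin m, (∏ t, y (g t)) * cntR g p * cntR g q))]
        refine Finset.sum_congr rfl fun z _ => ?_
        have h1 : ∀ f : Fin k → Fin n, (∏ t, x (f t)) * (cntR f z.1.1 * cntR f z.1.2)
            = (∏ t, x (f t)) * cntR f z.1.1 * cntR f z.1.2 := fun f => by ring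
        have h2 : ∀ g : Fin l → Fin m, (∏ t, y (g t)) * (cntR g z.2.1 * cntR g z.2.2)
            = (∏ t, y (g t)) * cntR g z.2.1 * cntR g z.2.2 := fun g => by ring
        rw [Finset.sum_congr rfl fun f _ => h1 f, Finset.sum_congr rfl fun g _ => h2 g]
        ring

lemma sum_ite_const {α : Type*} [Fintype α] (c : Prop) [Decidable c] (f : α → ℝ) :
    (∑ a, if c then f a else 0) = if c then ∑ a, f a else 0 := by
  split <;> simp

lemma sc4 {α β : Type*} [Fintype α] [Fintype β] (F G : α → α → β → β → ℝ)
    (h : ∀ i j p q, F i j p q = G i j p q) :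
    ∑ i, ∑ j, ∑ p, ∑ q, F i j p q = ∑ i, ∑ j, ∑ p, ∑ q, G i j p q :=
  Finset.sum_congr rfl fun i _ => Finset.sum_congr rfl fun j _ =>
    Finset.sum_congr rfl fun p _ => Finset.sum_congr rfl fun q _ => h i j p q

lemma sc3 {α β γ : Type*} [Fintype α] [Fintype β] [Fintype γ] (F G : α → β → γ → ℝ)
    (h : ∀ i j p, F i j p = G i j p) :
    ∑ i, ∑ j, ∑ p, F i j p = ∑ i, ∑ j, ∑ p, G i j p :=
  Finset.sum_congr rfl fun i _ => Finset.sum_congr rfl fun j _ =>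
    Finset.sum_congr rfl fun p _ => h i j p

lemma sc2 {α β : Type*} [Fintype α] [Fintype β] (F G : α → β → ℝ)
    (h : ∀ i p, F i p = G i p) :
    ∑ i, ∑ p, F i p = ∑ i, ∑ p, G i p :=
  Finset.sum_congr rfl fun i _ => Finset.sum_congr rfl fun p _ => h i p

lemma collapse {n m : ℕ} (A : Fin n → Fin n → Fin m → Fin m → ℝ)
    (x : Fin n → ℝ) (y : Fin m → ℝ) (c1 c2 K L : ℝ) :
    ∑ i, ∑ j, ∑ p, ∑ q, A i j p q *
        (c1 * (x i * x j) + (if i = j then K * x i else 0)) *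
        (c2 * (y p * y q) + (if p = q then L * y p else 0))
    = c1 * c2 * (∑ i, ∑ j, ∑ p, ∑ q, A i j p q * x i * x j * y p * y q)
      + c1 * L * (∑ i, ∑ j, ∑ p, A i j p p * x i * x j * y p)
      + K * c2 * (∑ i, ∑ p, ∑ q, A i i p q * x i * y p * y q)
      + K * L * (∑ i, ∑ p, A i i p p * x i * y p) := by
  simp only [mul_add, add_mul, mul_ite, ite_mul, mul_zero, zero_mul, Finset.sum_add_distrib,
    sum_ite_const, Finset.sum_ite_eq, Finset.mem_univ, if_true, Finset.mul_sum]
  ring_nf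
  rw [sc4 (fun i j p q => A i j p q * c1 * x i * x j * c2 * y p * y q)
        (fun i j p q => c1 * c2 * A i j p q * x i * x j * y p * y q) (fun i j p q => by ring),
      sc3 (fun i p q => c2 * A i i p q * K * x i * y p * y q)
        (fun i p q => c2 * K * A i i p q * x i * y p * y q) (fun i p q => by ring),
      sc3 (fun i j p => c1 * A i j p p * x i * x j * L * y p)
        (fun i j p => c1 * L * A i j p p * x i * x j * y p) (fun i j p => by ring),
      sc2 (fun i p => K * L * A i i p p * x i * y p)
        (fun i p => K * L * A i i p p * x i * y p) (fun i p => by ring)]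
  ring

end GridAux

set_option maxHeartbeats 1000000 in
/-- **second half of Theorem 5.** The approximation quality bound
`p_Δ^{(s,r)} − p_A^min ≤ (s+r+4)/((s+2)(r+2)) · (p_A^max − p_A^min)`, where
`p_Δ^{(s,r)}` is the minimum of `p_A` over the rational grid `Δ_n(s) × Δ_m(r)`. -/
theorem grid_min_sub_pmin_bound (n m : ℕ) (hn : 0 < n) (hm : 0 < m) (s r : ℕ)
    (A : Fin n → Fin n → Fin m → Fin m → ℝ)
    (hsym : ∀ i j k l, A i j k l = A j i k l ∧ A j i k l = A j i l k) :
    sInf {v : ℝ | ∃ x ∈ stdSimplex ℝ (Fin n), ∃ y ∈ stdSimplex ℝ (Fin m),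
        (∀ i, ∃ t : ℕ, ((s : ℝ) + 2) * x i = t) ∧
        (∀ k, ∃ t : ℕ, ((r : ℝ) + 2) * y k = t) ∧
        v = ∑ i, ∑ j, ∑ k, ∑ l, A i j k l * x i * x j * y k * y l} -
      sInf {v : ℝ | ∃ x ∈ stdSimplex ℝ (Fin n), ∃ y ∈ stdSimplex ℝ (Fin m),
        v = ∑ i, ∑ j, ∑ k, ∑ l, A i j k l * x i * x j * y k * y l} ≤
    (((s : ℝ) + (r : ℝ) + 4) / (((s : ℝ) + 2) * ((r : ℝ) + 2))) *
      (sSup {v : ℝ | ∃ x ∈ stdSimplex ℝ (Fin n), ∃ y ∈ stdSimplex ℝ (Fin m),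
          v = ∑ i, ∑ j, ∑ k, ∑ l, A i j k l * x i * x j * y k * y l} -
        sInf {v : ℝ | ∃ x ∈ stdSimplex ℝ (Fin n), ∃ y ∈ stdSimplex ℝ (Fin m),
          v = ∑ i, ∑ j, ∑ k, ∑ l, A i j k l * x i * x j * y k * y l}) := by
  classical
  set S : Set ℝ := {v : ℝ | ∃ x ∈ stdSimplex ℝ (Fin n), ∃ y ∈ stdSimplex ℝ (Fin m),
      v = ∑ i, ∑ j, ∑ k, ∑ l, A i j k l * x i * x j * y k * y l} with hS
  set G : Set ℝ := {v : ℝ | ∃ x ∈ stdSimplex ℝ (Fin n), ∃ y ∈ stdSimplex ℝ (Fin m),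
      (∀ i, ∃ t : ℕ, ((s : ℝ) + 2) * x i = t) ∧
      (∀ k, ∃ t : ℕ, ((r : ℝ) + 2) * y k = t) ∧
      v = ∑ i, ∑ j, ∑ k, ∑ l, A i j k l * x i * x j * y k * y l} with hG
  -- basic properties of S
  have hScompact : IsCompact S := Sset_compact A
  have hSBddBelow : BddBelow S := hScompact.bddBelow
  have hSBddAbove : BddAbove S := hScompact.bddAbove
  have hmemS : ∀ x ∈ stdSimplex ℝ (Fin n), ∀ y ∈ stdSimplex ℝ (Fin m), Pform A x y ∈ S := by
    intro x hx y hy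
    exact ⟨x, hx, y, hy, rfl⟩
  have hGsubS : G ⊆ S := by
    rintro v ⟨x, hx, y, hy, _, _, rfl⟩
    exact ⟨x, hx, y, hy, rfl⟩
  have hGBddBelow : BddBelow G := hSBddBelow.mono hGsubS
  -- a point of S
  have hSne : S.Nonempty := by
    refine ⟨Pform A (fun j => if (⟨0, hn⟩ : Fin n) = j then 1 else 0)
      (fun l => if (⟨0, hm⟩ : Fin m) = l then 1 else 0),
      hmemS _ (ite_eq_mem_stdSimplex ℝ _) _ (ite_eq_mem_stdSimplex ℝ _)⟩
  set pmin : ℝ := sInf S with hpmin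
  set pmax : ℝ := sSup S with hpmax
  have hmin_mem : pmin ∈ S := hScompact.sInf_mem hSne
  obtain ⟨x, hx, y, hy, hxy⟩ := hmin_mem
  have hub : ∀ x' ∈ stdSimplex ℝ (Fin n), ∀ y' ∈ stdSimplex ℝ (Fin m),
      Pform A x' y' ≤ pmax := fun x' hx' y' hy' =>
    le_csSup hSBddAbove (hmemS x' hx' y' hy')
  have hminmax : pmin ≤ pmax := csInf_le_csSup hSne hSBddBelow hSBddAbove
  -- grid parameters
  set k : ℕ := s + 2 with hk
  set l : ℕ := r + 2 with hl
  have hkpos : 0 < k := by omega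
  have hlpos : 0 < l := by omega
  set K : ℝ := (k : ℝ) with hK
  set L : ℝ := (l : ℝ) with hL
  have hK2 : (2:ℝ) ≤ K := by rw [hK, hk]; push_cast; linarith [Nat.cast_nonneg (α := ℝ) s]
  have hL2 : (2:ℝ) ≤ L := by rw [hL, hl]; push_cast; linarith [Nat.cast_nonneg (α := ℝ) r]
  have hKs : K = (s:ℝ) + 2 := by rw [hK, hk]; push_cast; ring
  have hLr : L = (r:ℝ) + 2 := by rw [hL, hl]; push_cast; ring
  have hKne : K ≠ 0 := by linarith
  have hLne : L ≠ 0 := by linarith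
  -- grid points
  set xh : (Fin k → Fin n) → (Fin n → ℝ) := fun f => (fun i => cntR f i / K) with hxh
  set yh : (Fin l → Fin m) → (Fin m → ℝ) := fun g => (fun p => cntR g p / L) with hyh
  have hxhmem : ∀ f, xh f ∈ stdSimplex ℝ (Fin n) := fun f => grid_mem k hkpos f
  have hyhmem : ∀ g, yh g ∈ stdSimplex ℝ (Fin m) := fun g => grid_mem l hlpos g
  have hxhgrid : ∀ f, ∀ i, ∃ t : ℕ, ((s : ℝ) + 2) * xh f i = t := by
    intro f i
    refine ⟨(univ.filter fun t => f t = i).card, ?_⟩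
    rw [hxh]
    simp only
    rw [← hKs, mul_div_cancel₀ _ hKne]
    rfl
  have hyhgrid : ∀ g, ∀ p, ∃ t : ℕ, ((r : ℝ) + 2) * yh g p = t := by
    intro g p
    refine ⟨(univ.filter fun t => g t = p).card, ?_⟩
    rw [hyh]
    simp only
    rw [← hLr, mul_div_cancel₀ _ hLne]
    rfl
  have hmemG : ∀ f g, Pform A (xh f) (yh g) ∈ G := by
    intro f g
    exact ⟨xh f, hxhmem f, yh g, hyhmem g, hxhgrid f, hyhgrid g, rfl⟩
  -- weights
  set wx : (Fin k → Fin n) → ℝ := fun f => ∏ t, x (f t) with hwx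
  set wy : (Fin l → Fin m) → ℝ := fun g => ∏ t, y (g t) with hwy
  have hwx1 : ∑ f, wx f = 1 := weight_sum k x hx.2
  have hwy1 : ∑ g, wy g = 1 := weight_sum l y hy.2
  have hwxnn : ∀ f, 0 ≤ wx f := fun f => Finset.prod_nonneg fun t _ => hx.1 (f t)
  have hwynn : ∀ g, 0 ≤ wy g := fun g => Finset.prod_nonneg fun t _ => hy.1 (g t)
  -- the expectation
  set E : ℝ := ∑ f : Fin k → Fin n, ∑ g : Fin l → Fin m,
      (wx f * wy g) * Pform A (xh f) (yh g) with hE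
  -- Step 1: sInf G ≤ E
  have hconst : ∀ c : ℝ, ∑ f : Fin k → Fin n, ∑ g : Fin l → Fin m, (wx f * wy g) * c = c := by
    intro c
    have h1 : ∀ f : Fin k → Fin n, ∑ g : Fin l → Fin m, (wx f * wy g) * c = wx f * c := by
      intro f
      have : ∀ g : Fin l → Fin m, (wx f * wy g) * c = wy g * (wx f * c) := fun g => by ring
      rw [Finset.sum_congr rfl fun g _ => this g, ← Finset.sum_mul, hwy1, one_mul]
    rw [Finset.sum_congr rfl fun f _ => h1 f, ← Finset.sum_mul, hwx1, one_mul]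
  have hstep1 : sInf G ≤ E := by
    rw [← hconst (sInf G), hE]
    refine Finset.sum_le_sum fun f _ => Finset.sum_le_sum fun g _ => ?_
    exact mul_le_mul_of_nonneg_left (csInf_le hGBddBelow (hmemG f g))
      (mul_nonneg (hwxnn f) (hwynn g))
  -- Step 2: compute E
  set T2 : ℝ := ∑ i, ∑ p, ∑ q, A i i p q * x i * y p * y q with hT2
  set T3 : ℝ := ∑ i, ∑ j, ∑ p, A i j p p * x i * x j * y p with hT3
  set T4 : ℝ := ∑ i, ∑ p, A i i p p * x i * y p with hT4
  have hEeq : E = ((K*(K-1)) * (L*(L-1)) * pmin + (K*(K-1)) * L * T3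
      + K * (L*(L-1)) * T2 + K * L * T4) / (K^2 * L^2) := by
    have hPQ : ∀ (f : Fin k → Fin n) (g : Fin l → Fin m),
        Pform A (xh f) (yh g)
        = (∑ i, ∑ j, ∑ p, ∑ q, A i j p q * cntR f i * cntR f j * cntR g p * cntR g q)
            / (K^2 * L^2) := by
      intro f g
      rw [Pform, hxh, hyh]
      simp only
      rw [sc4 (fun i j p q => A i j p q * (cntR f i / K) * (cntR f j / K) *
            (cntR g p / L) * (cntR g q / L))
          (fun i j p q => (A i j p q * cntR f i * cntR f j * cntR g p * cntR g q) / (K^2*L^2))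
          (fun i j p q => by
            rw [eq_div_iff (mul_ne_zero (pow_ne_zero 2 hKne) (pow_ne_zero 2 hLne))]
            field_simp)]
      simp only [← Finset.sum_div]
    have hEQ : E = (∑ f : Fin k → Fin n, ∑ g : Fin l → Fin m, (wx f * wy g) *
        (∑ i, ∑ j, ∑ p, ∑ q, A i j p q * cntR f i * cntR f j * cntR g p * cntR g q))
          / (K^2 * L^2) := by
      rw [hE]
      rw [Finset.sum_congr rfl fun f _ => Finset.sum_congr rfl fun g _ => by
        rw [hPQ f g, ← mul_div_assoc]]
      simp only [← Finset.sum_div]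
    rw [hEQ, factor k l A x y]
    rw [sc4 (fun i j p q => A i j p q *
          (∑ f : Fin k → Fin n, (∏ t, x (f t)) * cntR f i * cntR f j) *
          (∑ g : Fin l → Fin m, (∏ t, y (g t)) * cntR g p * cntR g q))
        (fun i j p q => A i j p q *
          ((K*(K-1)) * (x i * x j) + (if i = j then K * x i else 0)) *
          ((L*(L-1)) * (y p * y q) + (if p = q then L * y p else 0)))
        (fun i j p q => by beta_reduce; rw [moment k n x hx.2 i j, moment l m y hy.2 p q])]
    rw [collapse A x y (K*(K-1)) (L*(L-1)) K L]
    rw [← hxy, ← hT2, ← hT3, ← hT4]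
  -- Step 3: bound T2 T3 T4 by pmax
  have hT2le : T2 ≤ pmax := by
    have hpt : ∀ i : Fin n, ∑ p, ∑ q, A i i p q * x i * y p * y q
        = x i * Pform A (fun j => if i = j then 1 else 0) y := by
      intro i
      rw [Pform_single_left, Finset.mul_sum]
      refine Finset.sum_congr rfl fun p _ => ?_
      rw [Finset.mul_sum]
      exact Finset.sum_congr rfl fun q _ => by ring
    rw [hT2, Finset.sum_congr rfl fun i _ => hpt i]
    calc ∑ i, x i * Pform A (fun j => if i = j then 1 else 0) y
        ≤ ∑ i, x i * pmax := by
          refine Finset.sum_le_sum fun i _ => ?_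
          exact mul_le_mul_of_nonneg_left
            (hub _ (ite_eq_mem_stdSimplex ℝ i) _ hy) (hx.1 i)
      _ = pmax := by rw [← Finset.sum_mul, hx.2, one_mul]
  have hT3le : T3 ≤ pmax := by
    have hpt : ∀ p : Fin m, ∑ i, ∑ j, A i j p p * x i * x j * y p
        = y p * Pform A x (fun q => if p = q then 1 else 0) := by
      intro p
      rw [Pform_single_right, Finset.mul_sum]
      refine Finset.sum_congr rfl fun i _ => ?_
      rw [Finset.mul_sum]
      exact Finset.sum_congr rfl fun j _ => by ring
    have hswap : T3 = ∑ p, ∑ i, ∑ j, A i j p p * x i * x j * y p := by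
      rw [hT3]
      calc ∑ i, ∑ j, ∑ p, A i j p p * x i * x j * y p
          = ∑ i, ∑ p, ∑ j, A i j p p * x i * x j * y p :=
            Finset.sum_congr rfl fun i _ => Finset.sum_comm
        _ = ∑ p, ∑ i, ∑ j, A i j p p * x i * x j * y p := Finset.sum_comm
    rw [hswap, Finset.sum_congr rfl fun p _ => hpt p]
    calc ∑ p, y p * Pform A x (fun q => if p = q then 1 else 0)
        ≤ ∑ p, y p * pmax := by
          refine Finset.sum_le_sum fun p _ => ?_
          exact mul_le_mul_of_nonneg_left
            (hub _ hx _ (ite_eq_mem_stdSimplex ℝ p)) (hy.1 p)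
      _ = pmax := by rw [← Finset.sum_mul, hy.2, one_mul]
  have hT4le : T4 ≤ pmax := by
    have hpt : ∀ i : Fin n, ∑ p, A i i p p * x i * y p ≤ x i * pmax := by
      intro i
      have : ∀ p : Fin m, A i i p p * x i * y p = x i * (y p * Pform A
          (fun j => if i = j then 1 else 0) (fun q => if p = q then 1 else 0)) := by
        intro p
        rw [Pform_single_both]
        ring
      rw [Finset.sum_congr rfl fun p _ => this p, ← Finset.mul_sum]
      refine mul_le_mul_of_nonneg_left ?_ (hx.1 i)
      calc ∑ p, y p * Pform A (fun j => if i = j then 1 else 0)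
              (fun q => if p = q then 1 else 0)
          ≤ ∑ p, y p * pmax := by
            refine Finset.sum_le_sum fun p _ => ?_
            exact mul_le_mul_of_nonneg_left
              (hub _ (ite_eq_mem_stdSimplex ℝ i) _ (ite_eq_mem_stdSimplex ℝ p)) (hy.1 p)
        _ = pmax := by rw [← Finset.sum_mul, hy.2, one_mul]
    calc T4 ≤ ∑ i, x i * pmax := Finset.sum_le_sum fun i _ => hpt i
      _ = pmax := by rw [← Finset.sum_mul, hx.2, one_mul]
  -- Step 4: final arithmetic
  have hKLpos : (0:ℝ) < K^2 * L^2 := by positivity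
  have hnum : (K*(K-1)) * (L*(L-1)) * pmin + (K*(K-1)) * L * T3
      + K * (L*(L-1)) * T2 + K * L * T4
      ≤ pmin * (K^2*L^2) + (K+L) * (K*L) * (pmax - pmin) := by
    have h3 : (K*(K-1)) * L * (pmax - T3) ≥ 0 :=
      mul_nonneg (mul_nonneg (mul_nonneg (by linarith) (by linarith)) (by linarith))
        (by linarith)
    have h2 : K * (L*(L-1)) * (pmax - T2) ≥ 0 :=
      mul_nonneg (mul_nonneg (by linarith) (mul_nonneg (by linarith) (by linarith)))
        (by linarith)
    have h4 : K * L * (pmax - T4) ≥ 0 :=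
      mul_nonneg (mul_nonneg (by linarith) (by linarith)) (by linarith)
    have hD : K * L * (pmax - pmin) ≥ 0 :=
      mul_nonneg (mul_nonneg (by linarith) (by linarith)) (by linarith)
    nlinarith [h3, h2, h4, hD]
  have hfinal : sInf G - pmin ≤ ((K+L)/(K*L)) * (pmax - pmin) := by
    have hE_le : E ≤ pmin + ((K+L)/(K*L)) * (pmax - pmin) := by
      rw [hEeq, div_le_iff₀ hKLpos]
      have hC : ((K+L)/(K*L)) * (pmax - pmin) * (K^2*L^2)
          = (K+L) * (K*L) * (pmax - pmin) := by
        field_simp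
      calc (K*(K-1)) * (L*(L-1)) * pmin + (K*(K-1)) * L * T3
          + K * (L*(L-1)) * T2 + K * L * T4
          ≤ pmin * (K^2*L^2) + (K+L) * (K*L) * (pmax - pmin) := hnum
        _ = (pmin + ((K+L)/(K*L)) * (pmax - pmin)) * (K^2*L^2) := by
            have hexp : (pmin + ((K+L)/(K*L)) * (pmax - pmin)) * (K^2*L^2)
                = pmin * (K^2*L^2) + ((K+L)/(K*L)) * (pmax - pmin) * (K^2*L^2) := by ring
            rw [hexp, hC]
    linarith [hstep1]
  -- translate coefficient
  have hcoef : ((s : ℝ) + (r : ℝ) + 4) / (((s : ℝ) + 2) * ((r : ℝ) + 2))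
      = (K+L)/(K*L) := by
    rw [hKs, hLr]
    ring
  rw [hcoef]
  exact hfinal
end

section
/- Let A be a partially symmetric multi-quadratic tensor with d blocks of sizes n_1,…,n_d, and let r_1,…,r_d be nonnegative integers. Then p_A^min − p_C^{(r_1,…,r_d)} ≤ [τ(r_1,…,r_d;d) / ∏_{i=1}^d (r_i+1)] (p_A^max − p_A^min), where p_C^{(r_1,…,r_d)} = sup{λ ∈ ℝ : A − λE ∈ C^{r_1,…,r_d}} and τ(r_1,…,r_d;d) = Σ_{ν ∈ {0,1}^d, d−|ν| odd} ∏_{k=1}^d (r_k+2)^{ν_k}. -/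
open MvPolynomial

/-- The multi-quadratic form `p_A` of a multi-quadratic tensor with `d` blocks. -/
def multiQuadForm {d : ℕ} {nn : Fin d → ℕ}
    (A : ((k : Fin d) → Fin (nn k)) → ((k : Fin d) → Fin (nn k)) → ℝ)
    (x : (k : Fin d) → Fin (nn k) → ℝ) : ℝ :=
  ∑ i : (k : Fin d) → Fin (nn k), ∑ j : (k : Fin d) → Fin (nn k),
    A i j * ∏ k, (x k (i k) * x k (j k))

/-- The polynomial `p_G(x^{(1)},…,x^{(d)}) · ∏_k (Σ_i x^{(k)}_i)^{r_k}`,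
viewed as a multivariate polynomial in all the variables `x^{(k)}_i`. -/
noncomputable def multiQuadPoly {d : ℕ} {nn : Fin d → ℕ}
    (G : ((k : Fin d) → Fin (nn k)) → ((k : Fin d) → Fin (nn k)) → ℝ)
    (r : Fin d → ℕ) : MvPolynomial ((k : Fin d) × Fin (nn k)) ℝ :=
  (∑ i : (k : Fin d) → Fin (nn k), ∑ j : (k : Fin d) → Fin (nn k),
      C (G i j) * ∏ k, (X ⟨k, i k⟩ * X ⟨k, j k⟩)) *
    ∏ k, (∑ a : Fin (nn k), X (⟨k, a⟩ : (k : Fin d) × Fin (nn k))) ^ (r k)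

/-- `τ(r_1,…,r_d; d) = Σ_{ν ∈ {0,1}^d, d−|ν| odd} ∏_k (r_k+2)^{ν_k}`,
with subsets of `{1,…,d}` playing the role of `ν ∈ {0,1}^d`. -/
def tauCoeff {d : ℕ} (r : Fin d → ℕ) : ℝ :=
  ∑ S ∈ (Finset.univ : Finset (Fin d)).powerset.filter (fun S => Odd (d - S.card)),
    ∏ k ∈ S, ((r k : ℝ) + 2)


section Cnt
/-- number of ways in one block, as a multinomial coefficient (or 0 if infeasible). -/
def cntN (n : ℕ) (β : Fin n → ℕ) (i j : Fin n) : ℕ :=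
  if ∀ a, (if i = a then 1 else 0) + (if j = a then 1 else 0) ≤ β a
  then Nat.multinomial Finset.univ
    (fun a => β a - ((if i = a then 1 else 0) + (if j = a then 1 else 0)))
  else 0

/-- the key factorial identity in ℝ. -/
lemma cntN_mul_factorial (n r : ℕ) (β : Fin n → ℕ) (hβ : ∑ a, β a = r + 2) (i j : Fin n) :
    (cntN n β i j : ℝ) * ∏ a, (β a).factorial =
      (r.factorial : ℝ) * (β i) * ((β j : ℝ) - if i = j then 1 else 0) := by
  classical
  unfold cntN
  set e : Fin n → ℕ := fun a => (if i = a then 1 else 0) + (if j = a then 1 else 0) with he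
  by_cases hfe : ∀ a, e a ≤ β a
  · rw [if_pos hfe]
    set t : Fin n → ℕ := fun a => β a - e a with ht
    have hsumt : ∑ a, t a = r := by
      have : ∑ a, t a + ∑ a, e a = ∑ a, β a := by
        rw [← Finset.sum_add_distrib]
        exact Finset.sum_congr rfl fun a _ => Nat.sub_add_cancel (hfe a)
      have hse : ∑ a, e a = 2 := by
        simp [he, Finset.sum_add_distrib, Finset.sum_ite_eq]
      omega
    have hspec : ((∏ a, (t a).factorial : ℕ) : ℝ) * (Nat.multinomial Finset.univ t : ℝ)
        = (r.factorial : ℝ) := by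
      rw [← Nat.cast_mul, Nat.multinomial_spec, hsumt]
    -- ∏ β! = ∏ t! * (β i * (β j - δ))
    have hprod : (∏ a, ((β a).factorial : ℝ))
        = (∏ a, ((t a).factorial : ℝ)) * ((β i : ℝ) * ((β j : ℝ) - if i = j then 1 else 0)) := by
      by_cases hij : i = j
      · subst hij
        have h2 : 2 ≤ β i := by have := hfe i; simp [he] at this; omega
        rw [if_pos rfl]
        rw [← Finset.prod_erase_mul _ _ (Finset.mem_univ i),
            ← Finset.prod_erase_mul _ _ (Finset.mem_univ i)]
        have hti : t i = β i - 2 := by simp [ht, he]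
        have hta : ∀ a, a ≠ i → t a = β a := by intro a ha; simp [ht, he, ha.symm]
        have hfac : ((β i).factorial : ℝ) = ((t i).factorial : ℝ) * ((β i : ℝ) * ((β i : ℝ) - 1)) := by
          obtain ⟨b, hb⟩ : ∃ b, β i = b + 2 := ⟨β i - 2, by omega⟩
          rw [hb, hti, hb]
          push_cast [Nat.factorial_succ]
          ring
        have hrest : ∏ a ∈ Finset.univ.erase i, ((β a).factorial : ℝ)
            = ∏ a ∈ Finset.univ.erase i, ((t a).factorial : ℝ) :=
          Finset.prod_congr rfl fun a ha => by rw [hta a (Finset.mem_erase.1 ha).1]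
        rw [hfac, hrest]
        ring
      · rw [if_neg hij]
        have hji : j ≠ i := Ne.symm hij
        have h1i : 1 ≤ β i := by have := hfe i; simp [he, hji] at this; omega
        have h1j : 1 ≤ β j := by have := hfe j; simp [he, hij] at this; omega
        have hti : t i = β i - 1 := by simp [ht, he, hji]
        have htj : t j = β j - 1 := by simp [ht, he, hij]
        have hta : ∀ a, a ≠ i → a ≠ j → t a = β a := by
          intro a hai haj; simp [ht, he, Ne.symm hai, Ne.symm haj]
        rw [← Finset.prod_erase_mul _ _ (Finset.mem_univ i),
            ← Finset.prod_erase_mul _ (fun a => ((t a).factorial : ℝ)) (Finset.mem_univ i)]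
        have hjmem : j ∈ Finset.univ.erase i := Finset.mem_erase.2 ⟨Ne.symm hij, Finset.mem_univ j⟩
        rw [← Finset.prod_erase_mul _ _ hjmem, ← Finset.prod_erase_mul _ (fun a => ((t a).factorial : ℝ)) hjmem]
        have hfi : ((β i).factorial : ℝ) = ((t i).factorial : ℝ) * (β i : ℝ) := by
          obtain ⟨b, hb⟩ : ∃ b, β i = b + 1 := ⟨β i - 1, by omega⟩
          rw [hb, hti, hb]; push_cast [Nat.factorial_succ]; ring
        have hfj : ((β j).factorial : ℝ) = ((t j).factorial : ℝ) * (β j : ℝ) := by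
          obtain ⟨b, hb⟩ : ∃ b, β j = b + 1 := ⟨β j - 1, by omega⟩
          rw [hb, htj, hb]; push_cast [Nat.factorial_succ]; ring
        have hrest : ∏ a ∈ (Finset.univ.erase i).erase j, ((β a).factorial : ℝ)
            = ∏ a ∈ (Finset.univ.erase i).erase j, ((t a).factorial : ℝ) :=
          Finset.prod_congr rfl fun a ha => by
            rw [hta a (Finset.mem_erase.1 (Finset.mem_erase.1 ha).2).1 (Finset.mem_erase.1 ha).1]
        rw [hfi, hfj, hrest]
        ring
    push_cast
    push_cast at hprod hspec
    rw [hprod, ← mul_assoc, mul_comm _ (∏ a, ((t a).factorial:ℝ)), hspec]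
    ring
  · rw [if_neg hfe]
    push_neg at hfe
    obtain ⟨a, ha⟩ := hfe
    by_cases hai : i = a
    · by_cases haj : j = a
      · subst hai
        have hij : i = j := haj.symm
        rw [if_pos hij, ← hij]
        simp [he, haj] at ha
        have : β i = 0 ∨ β i = 1 := by omega
        rcases this with h | h <;> simp [h]
      · subst hai
        simp [he, haj] at ha
        have h0 : β i = 0 := by omega
        simp [h0]
    · by_cases haj : j = a
      · subst haj
        have hij : ¬ i = j := fun h => hai (h ▸ rfl)
        simp [he, hai] at ha
        have h0 : β j = 0 := by omega
        simp [h0, hij]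
      · simp only [he, if_neg hai, if_neg haj] at ha
        omega
end Cnt

section Block
/-- sum over one block of the antidiagonal collapses to `cntN`. -/
lemma block_sum (n rk : ℕ) (β : Fin n → ℕ) (hβ : ∑ a, β a = rk + 2) (i j : Fin n) :
    ∑ g ∈ Finset.piAntidiag Finset.univ rk,
      (if (∀ a, (if i = a then 1 else 0) + (if j = a then 1 else 0) + g a = β a)
        then (Nat.multinomial Finset.univ g : ℝ) else 0)
    = (cntN n β i j : ℝ) := by
  classical
  set e : Fin n → ℕ := fun a => (if i = a then 1 else 0) + (if j = a then 1 else 0) with he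
  by_cases hfe : ∀ a, e a ≤ β a
  · set t : Fin n → ℕ := fun a => β a - e a with ht
    have hcond : ∀ g : Fin n → ℕ, (∀ a, e a + g a = β a) ↔ g = t := by
      intro g
      constructor
      · intro h; funext a; have := h a; have := hfe a; simp only [ht]; omega
      · rintro rfl a; have := hfe a; simp only [ht]; omega
    have hrw : ∀ g : Fin n → ℕ,
        (if (∀ a, e a + g a = β a) then (Nat.multinomial Finset.univ g : ℝ) else 0)
        = (if g = t then (Nat.multinomial Finset.univ g : ℝ) else 0) := by
      intro g; rw [if_congr (hcond g) rfl rfl]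
    rw [Finset.sum_congr rfl (fun g _ => hrw g), Finset.sum_ite_eq' (Finset.piAntidiag Finset.univ rk) t]
    have hse : ∑ a, e a = 2 := by simp [he, Finset.sum_add_distrib, Finset.sum_ite_eq]
    have hsumt : ∑ a, t a = rk := by
      have : ∑ a, t a + ∑ a, e a = ∑ a, β a := by
        rw [← Finset.sum_add_distrib]
        exact Finset.sum_congr rfl fun a _ => Nat.sub_add_cancel (hfe a)
      omega
    have hmem : t ∈ Finset.piAntidiag Finset.univ rk :=
      Finset.mem_piAntidiag.2 ⟨hsumt, fun _ _ => Finset.mem_univ _⟩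
    rw [if_pos hmem]
    unfold cntN
    rw [if_pos hfe]
  · have hall : ∀ g ∈ Finset.piAntidiag Finset.univ rk,
        (if (∀ a, e a + g a = β a) then (Nat.multinomial Finset.univ g : ℝ) else 0) = 0 := by
      intro g _
      rw [if_neg]
      intro h
      exact hfe fun a => by have := h a; omega
    rw [Finset.sum_congr rfl hall, Finset.sum_const, smul_zero]
    unfold cntN
    rw [if_neg hfe, Nat.cast_zero]
end Block

section Aux
variable {d : ℕ} {nn : Fin d → ℕ}

/-- product of monomials with coefficient 1 -/
lemma prod_monomial_one {κ σ : Type*} (s : Finset κ) (ν : κ → (σ →₀ ℕ)) :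
    ∏ k ∈ s, (monomial (ν k) (1:ℝ)) = monomial (∑ k ∈ s, ν k) 1 := by
  induction s using Finset.cons_induction with
  | empty => simp [monomial_zero']
  | cons a s ha ih => rw [Finset.prod_cons, ih, monomial_mul, Finset.sum_cons, one_mul]

/-- the exponent finsupp of one term -/
noncomputable def expOf (i j : (k : Fin d) → Fin (nn k)) (γ : (k : Fin d) → Fin (nn k) → ℕ) :
    ((k : Fin d) × Fin (nn k)) →₀ ℕ :=
  Finsupp.equivFunOnFinite.symm
    (fun p => (if i p.1 = p.2 then 1 else 0) + (if j p.1 = p.2 then 1 else 0) + γ p.1 p.2)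

lemma expOf_apply (i j : (k : Fin d) → Fin (nn k)) (γ : (k : Fin d) → Fin (nn k) → ℕ)
    (k : Fin d) (a : Fin (nn k)) :
    expOf i j γ ⟨k, a⟩ =
      (if i k = a then 1 else 0) + (if j k = a then 1 else 0) + γ k a := rfl

lemma expOf_eq_sum (i j : (k : Fin d) → Fin (nn k)) (γ : (k : Fin d) → Fin (nn k) → ℕ) :
    expOf i j γ = ∑ k : Fin d, (Finsupp.single ⟨k, i k⟩ 1 + Finsupp.single ⟨k, j k⟩ 1
      + ∑ a : Fin (nn k), Finsupp.single (⟨k, a⟩ : (k : Fin d) × Fin (nn k)) (γ k a)) := by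
  ext ⟨k₀, a₀⟩
  rw [Finset.sum_apply']
  simp only [Finsupp.add_apply, Finsupp.single_apply, Finset.sum_apply']
  rw [Finset.sum_eq_single k₀]
  · simp only [expOf_apply, Sigma.mk.inj_iff, heq_eq_eq, true_and]
    congr 1
    rw [Finset.sum_eq_single a₀] <;> simp +contextual [eq_comm]
  · intro k hk hne
    simp [Sigma.mk.inj_iff, hne, Finset.sum_eq_zero]
  · simp

lemma multiQuadPoly_eq (G : ((k : Fin d) → Fin (nn k)) → ((k : Fin d) → Fin (nn k)) → ℝ)
    (r : Fin d → ℕ) :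
    multiQuadPoly G r = ∑ i : (k : Fin d) → Fin (nn k), ∑ j : (k : Fin d) → Fin (nn k),
      ∑ γ ∈ Fintype.piFinset (fun k => Finset.piAntidiag Finset.univ (r k)),
        monomial (expOf i j γ) (G i j * ∏ k, (Nat.multinomial Finset.univ (γ k) : ℝ)) := by
  unfold multiQuadPoly
  simp_rw [Finset.sum_pow_eq_sum_piAntidiag, Finset.prod_univ_sum, Finset.sum_mul, Finset.mul_sum]
  refine Finset.sum_congr rfl fun i _ => Finset.sum_congr rfl fun j _ =>
    Finset.sum_congr rfl fun γ hγ => ?_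
  have h1 : ∀ k : Fin d, (X (⟨k, i k⟩ : (k : Fin d) × Fin (nn k)) * X ⟨k, j k⟩ : MvPolynomial _ ℝ)
      = monomial (Finsupp.single ⟨k, i k⟩ 1 + Finsupp.single ⟨k, j k⟩ 1) 1 := by
    intro k; rw [X, X, monomial_mul, one_mul]
  have h2 : ∀ k : Fin d, (∏ a : Fin (nn k), (X (⟨k, a⟩ : (k : Fin d) × Fin (nn k)) : MvPolynomial _ ℝ) ^ (γ k a))
      = monomial (∑ a : Fin (nn k), Finsupp.single (⟨k, a⟩ : (k : Fin d) × Fin (nn k)) (γ k a)) 1 := by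
    intro k
    simp_rw [X_pow_eq_monomial]
    exact prod_monomial_one _ _
  simp_rw [h1, h2, prod_monomial_one, Finset.prod_mul_distrib, prod_monomial_one]
  have hcast : (∏ x : Fin d, ((Nat.multinomial Finset.univ (γ x) : ℕ) :
      MvPolynomial ((k : Fin d) × Fin (nn k)) ℝ))
      = C (∏ x : Fin d, ((Nat.multinomial Finset.univ (γ x) : ℕ) : ℝ)) := by
    rw [map_prod]; simp
  have he : (∑ k : Fin d, ((Finsupp.single (⟨k, i k⟩ : (k : Fin d) × Fin (nn k)) 1
        + Finsupp.single ⟨k, j k⟩ 1)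
      + ∑ a : Fin (nn k), Finsupp.single (⟨k, a⟩ : (k : Fin d) × Fin (nn k)) (γ k a)))
      = (∑ k : Fin d, (Finsupp.single (⟨k, i k⟩ : (k : Fin d) × Fin (nn k)) 1
          + Finsupp.single ⟨k, j k⟩ 1))
        + ∑ k : Fin d, ∑ a : Fin (nn k), Finsupp.single (⟨k, a⟩ : (k : Fin d) × Fin (nn k)) (γ k a) :=
    Finset.sum_add_distrib
  rw [expOf_eq_sum, he, hcast, C_mul_monomial, mul_one, C_mul_monomial, monomial_mul, mul_one,
    mul_comm (G i j)]


lemma coeff_multiQuadPoly (G : ((k : Fin d) → Fin (nn k)) → ((k : Fin d) → Fin (nn k)) → ℝ)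
    (r : Fin d → ℕ) (μ : ((k : Fin d) × Fin (nn k)) →₀ ℕ) :
    coeff μ (multiQuadPoly G r) = ∑ i : (k : Fin d) → Fin (nn k), ∑ j : (k : Fin d) → Fin (nn k),
      ∑ γ ∈ Fintype.piFinset (fun k => Finset.piAntidiag Finset.univ (r k)),
        (if expOf i j γ = μ then G i j * ∏ k, (Nat.multinomial Finset.univ (γ k) : ℝ) else 0) := by
  rw [multiQuadPoly_eq]
  simp_rw [coeff_sum, coeff_monomial]

lemma sum_expOf_block (i j : (k : Fin d) → Fin (nn k)) (γ : (k : Fin d) → Fin (nn k) → ℕ)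
    (r : Fin d → ℕ) (hγ : γ ∈ Fintype.piFinset (fun k => Finset.piAntidiag Finset.univ (r k)))
    (k : Fin d) : ∑ a : Fin (nn k), expOf i j γ ⟨k, a⟩ = r k + 2 := by
  rw [Fintype.mem_piFinset] at hγ
  have := (Finset.mem_piAntidiag.1 (hγ k)).1
  simp_rw [expOf_apply, Finset.sum_add_distrib, this]
  simp [Finset.sum_ite_eq]
  ring

end Aux

section Coeff
variable {d : ℕ} {nn : Fin d → ℕ}

lemma coeff_bad (G : ((k : Fin d) → Fin (nn k)) → ((k : Fin d) → Fin (nn k)) → ℝ)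
    (r : Fin d → ℕ) (μ : ((k : Fin d) × Fin (nn k)) →₀ ℕ)
    (hμ : ∃ k, ∑ a : Fin (nn k), μ ⟨k, a⟩ ≠ r k + 2) :
    coeff μ (multiQuadPoly G r) = 0 := by
  obtain ⟨k₀, hk₀⟩ := hμ
  rw [coeff_multiQuadPoly]
  refine Finset.sum_eq_zero fun i _ => Finset.sum_eq_zero fun j _ => Finset.sum_eq_zero fun γ hγ => ?_
  rw [if_neg]
  intro h
  exact hk₀ (by rw [← h]; exact sum_expOf_block i j γ r hγ k₀)

lemma coeff_good (G : ((k : Fin d) → Fin (nn k)) → ((k : Fin d) → Fin (nn k)) → ℝ)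
    (r : Fin d → ℕ) (μ : ((k : Fin d) × Fin (nn k)) →₀ ℕ)
    (hμ : ∀ k, ∑ a : Fin (nn k), μ ⟨k, a⟩ = r k + 2) :
    coeff μ (multiQuadPoly G r) = ∑ i : (k : Fin d) → Fin (nn k), ∑ j : (k : Fin d) → Fin (nn k),
      G i j * ∏ k, (cntN (nn k) (fun a => μ ⟨k, a⟩) (i k) (j k) : ℝ) := by
  rw [coeff_multiQuadPoly]
  refine Finset.sum_congr rfl fun i _ => Finset.sum_congr rfl fun j _ => ?_
  have hcond : ∀ γ : (k : Fin d) → Fin (nn k) → ℕ, (expOf i j γ = μ) ↔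
      ∀ k, (∀ a, (if i k = a then 1 else 0) + (if j k = a then 1 else 0) + γ k a = μ ⟨k, a⟩) := by
    intro γ
    constructor
    · intro h k a; rw [← h]; rfl
    · intro h
      ext ⟨k, a⟩
      rw [expOf_apply]
      exact h k a
  have hterm : ∀ γ : (k : Fin d) → Fin (nn k) → ℕ,
      (if expOf i j γ = μ then G i j * ∏ k, (Nat.multinomial Finset.univ (γ k) : ℝ) else 0)
      = G i j * ∏ k, (if (∀ a, (if i k = a then 1 else 0) + (if j k = a then 1 else 0) + γ k a = μ ⟨k, a⟩)
          then (Nat.multinomial Finset.univ (γ k) : ℝ) else 0) := by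
    intro γ
    rw [if_congr (hcond γ) rfl rfl]
    by_cases h : ∀ k, (∀ a, (if i k = a then 1 else 0) + (if j k = a then 1 else 0) + γ k a = μ ⟨k, a⟩)
    · rw [if_pos h]
      congr 1
      exact (Finset.prod_congr rfl fun k _ => if_pos (h k)).symm
    · rw [if_neg h]
      obtain ⟨k₀, hk₀⟩ := not_forall.1 h
      have hz : (∏ k : Fin d, if ∀ a : Fin (nn k),
          ((if i k = a then 1 else 0) + if j k = a then 1 else 0) + γ k a = μ ⟨k, a⟩
          then ((Nat.multinomial Finset.univ (γ k) : ℕ) : ℝ) else 0) = 0 :=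
        Finset.prod_eq_zero (Finset.mem_univ k₀) (if_neg hk₀)
      rw [hz, mul_zero]
  rw [Finset.sum_congr rfl fun γ _ => hterm γ, ← Finset.mul_sum,
    ← Finset.prod_univ_sum (fun k => Finset.univ.piAntidiag (r k))
      (fun k g => if (∀ a, (if i k = a then 1 else 0) + (if j k = a then 1 else 0) + g a = μ ⟨k, a⟩)
        then (Nat.multinomial Finset.univ g : ℝ) else 0)]
  congr 1
  exact Finset.prod_congr rfl fun k _ => block_sum (nn k) (r k) (fun a => μ ⟨k, a⟩) (hμ k) (i k) (j k)

end Coeff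


lemma prod_if_mem {α M : Type*} [Fintype α] [DecidableEq α] [CommMonoid M]
    (T : Finset α) (f g : α → M) :
    ∏ k, (if k ∈ T then f k else g k) = (∏ k ∈ T, f k) * ∏ k ∈ Finset.univ \ T, g k := by
  rw [← Finset.prod_filter_mul_prod_filter_not Finset.univ (· ∈ T)]
  congr 1
  · exact Finset.prod_congr (Finset.filter_univ_mem T) fun k hk => if_pos hk
  · exact Finset.prod_congr (by rw [Finset.sdiff_eq_filter]) fun k hk =>
      if_neg (Finset.mem_sdiff.1 hk).2

section GT
variable {d : ℕ} {nn : Fin d → ℕ}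

lemma multiQuadForm_smul (A : ((k : Fin d) → Fin (nn k)) → ((k : Fin d) → Fin (nn k)) → ℝ)
    (c : Fin d → ℝ) (x : (k : Fin d) → Fin (nn k) → ℝ) :
    multiQuadForm A (fun k a => c k * x k a) = (∏ k, (c k)^2) * multiQuadForm A x := by
  unfold multiQuadForm
  rw [Finset.mul_sum]
  refine Finset.sum_congr rfl fun i _ => ?_
  rw [Finset.mul_sum]
  refine Finset.sum_congr rfl fun j _ => ?_
  have h : (∏ k, (c k * x k (i k) * (c k * x k (j k)))) =
      (∏ k, (c k)^2) * ∏ k, (x k (i k) * x k (j k)) := by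
    rw [← Finset.prod_mul_distrib]
    exact Finset.prod_congr rfl fun k _ => by ring
  rw [h]; ring

lemma sum_prod_eq_prod_sum (x : (k : Fin d) → Fin (nn k) → ℝ) :
    ∑ i : (k : Fin d) → Fin (nn k), ∏ k, x k (i k) = ∏ k, ∑ a, x k a := by
  rw [Finset.prod_univ_sum]
  rw [Fintype.piFinset_univ]

lemma multiQuadForm_sub_const (A : ((k : Fin d) → Fin (nn k)) → ((k : Fin d) → Fin (nn k)) → ℝ)
    (lam : ℝ) (x : (k : Fin d) → Fin (nn k) → ℝ) (hx : ∀ k, ∑ a, x k a = 1) :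
    multiQuadForm (fun i j => A i j - lam) x = multiQuadForm A x - lam := by
  unfold multiQuadForm
  simp_rw [sub_mul, Finset.sum_sub_distrib]
  congr 1
  have h : ∀ i j : (k : Fin d) → Fin (nn k), (∏ k, (x k (i k) * x k (j k)))
      = (∏ k, x k (i k)) * ∏ k, x k (j k) := fun i j => Finset.prod_mul_distrib
  calc ∑ i : (k : Fin d) → Fin (nn k), ∑ j : (k : Fin d) → Fin (nn k),
        lam * ∏ k, (x k (i k) * x k (j k))
      = lam * ((∑ i : (k : Fin d) → Fin (nn k), ∏ k, x k (i k)) *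
          (∑ j : (k : Fin d) → Fin (nn k), ∏ k, x k (j k))) := by
        rw [Finset.sum_mul_sum, Finset.mul_sum]
        exact Finset.sum_congr rfl fun i _ => by
          rw [Finset.mul_sum]
          exact Finset.sum_congr rfl fun j _ => by rw [h i j]
    _ = lam := by
        rw [sum_prod_eq_prod_sum]
        simp [hx]


/-- the vector `y_{T,v}` equal to the vertex `e_{v_k}` on blocks in `T` and to `b` elsewhere. -/
def yT (b : (k : Fin d) → Fin (nn k) → ℝ) (T : Finset (Fin d)) (v : (k : Fin d) → Fin (nn k)) :
    (k : Fin d) → Fin (nn k) → ℝ :=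
  fun k a => if k ∈ T then (if v k = a then 1 else 0) else b k a

/-- the weight of `v` -/
def wtT (b : (k : Fin d) → Fin (nn k) → ℝ) (v0 : (k : Fin d) → Fin (nn k)) (T : Finset (Fin d))
    (v : (k : Fin d) → Fin (nn k)) : ℝ :=
  ∏ k, (if k ∈ T then b k (v k) else if v k = v0 k then 1 else 0)

lemma sum_double_ind {n : ℕ} (f : Fin n → ℝ) (i j : Fin n) :
    ∑ a, f a * ((if a = i then (1:ℝ) else 0) * (if a = j then 1 else 0)) =
      if i = j then f i else 0 := by
  rw [Finset.sum_eq_single i]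
  · by_cases h : i = j <;> simp [h]
  · intro a _ ha; simp [ha]
  · simp

lemma wtT_nonneg (b : (k : Fin d) → Fin (nn k) → ℝ) (hb : ∀ k a, 0 ≤ b k a)
    (v0 : (k : Fin d) → Fin (nn k)) (T : Finset (Fin d)) (v : (k : Fin d) → Fin (nn k)) :
    0 ≤ wtT b v0 T v := by
  refine Finset.prod_nonneg fun k _ => ?_
  by_cases hk : k ∈ T <;> simp [hk, hb]
  positivity

lemma sum_wtT (b : (k : Fin d) → Fin (nn k) → ℝ) (v0 : (k : Fin d) → Fin (nn k))
    (T : Finset (Fin d)) (s : Fin d → ℝ) (hs : ∀ k, ∑ a, b k a = s k) :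
    ∑ v : (k : Fin d) → Fin (nn k), wtT b v0 T v = ∏ k ∈ T, s k := by
  unfold wtT
  rw [← Fintype.piFinset_univ, ← Finset.prod_univ_sum (fun _ => Finset.univ)
    (fun k a => if k ∈ T then b k a else if a = v0 k then (1:ℝ) else 0)]
  have h : ∀ k : Fin d, (∑ a, if k ∈ T then b k a else if a = v0 k then (1:ℝ) else 0)
      = if k ∈ T then s k else 1 := by
    intro k
    by_cases hk : k ∈ T <;> simp [hk, hs k, Finset.sum_ite_eq']
  rw [Finset.prod_congr rfl fun k _ => h k, prod_if_mem T s (fun _ => (1:ℝ)),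
    Finset.prod_const_one, mul_one]

lemma GT_eq (b : (k : Fin d) → Fin (nn k) → ℝ) (v0 : (k : Fin d) → Fin (nn k))
    (T : Finset (Fin d)) (A' : ((k : Fin d) → Fin (nn k)) → ((k : Fin d) → Fin (nn k)) → ℝ) :
    ∑ v : (k : Fin d) → Fin (nn k), wtT b v0 T v * multiQuadForm A' (yT b T v)
    = ∑ i : (k : Fin d) → Fin (nn k), ∑ j : (k : Fin d) → Fin (nn k), A' i j *
        ∏ k, (if k ∈ T then (if i k = j k then b k (i k) else 0) else b k (i k) * b k (j k)) := by
  unfold multiQuadForm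
  simp_rw [Finset.mul_sum]
  rw [Finset.sum_comm]
  refine Finset.sum_congr rfl fun i _ => ?_
  rw [Finset.sum_comm]
  refine Finset.sum_congr rfl fun j _ => ?_
  set F : (k : Fin d) → Fin (nn k) → ℝ := fun k a =>
    (if k ∈ T then b k a else if a = v0 k then 1 else 0) *
      ((if k ∈ T then (if a = i k then (1:ℝ) else 0) else b k (i k)) *
       (if k ∈ T then (if a = j k then (1:ℝ) else 0) else b k (j k))) with hF
  have key : ∀ v : (k : Fin d) → Fin (nn k),
      wtT b v0 T v * (A' i j * ∏ k, (yT b T v k (i k) * yT b T v k (j k)))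
      = A' i j * ∏ k, F k (v k) := by
    intro v
    have hf : ∀ k : Fin d, F k (v k) =
        (if k ∈ T then b k (v k) else if v k = v0 k then 1 else 0) *
          (yT b T v k (i k) * yT b T v k (j k)) := by
      intro k
      by_cases hk : k ∈ T <;> simp [hF, yT, hk]
    rw [Finset.prod_congr rfl fun k _ => hf k,
      Finset.prod_mul_distrib (f := fun k => (if k ∈ T then b k (v k) else if v k = v0 k then (1:ℝ) else 0))
        (g := fun k => yT b T v k (i k) * yT b T v k (j k))]
    unfold wtT
    ring
  rw [Finset.sum_congr rfl fun v _ => key v, ← Finset.mul_sum]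
  congr 1
  rw [← Fintype.piFinset_univ, ← Finset.prod_univ_sum]
  refine Finset.prod_congr rfl fun k _ => ?_
  by_cases hk : k ∈ T
  · simp only [hF, hk, if_true]
    exact sum_double_ind (b k) (i k) (j k)
  · simp only [hF, hk, if_false, ite_mul, one_mul, zero_mul]
    rw [Finset.sum_ite_eq' Finset.univ (v0 k) (fun _ => b k (i k) * b k (j k))]
    simp
end GT

section Key
variable {d : ℕ} {nn : Fin d → ℕ}

lemma yT_mem_and_val (b : (k : Fin d) → Fin (nn k) → ℝ) (hb : ∀ k a, 0 ≤ b k a)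
    (s : Fin d → ℝ) (hspos : ∀ k, 0 < s k) (hs : ∀ k, ∑ a, b k a = s k)
    (A : ((k : Fin d) → Fin (nn k)) → ((k : Fin d) → Fin (nn k)) → ℝ) (m M lam : ℝ)
    (hbound : ∀ x : (k : Fin d) → Fin (nn k) → ℝ,
      (∀ k, x k ∈ stdSimplex ℝ (Fin (nn k))) → m ≤ multiQuadForm A x ∧ multiQuadForm A x ≤ M)
    (T : Finset (Fin d)) (v : (k : Fin d) → Fin (nn k)) :
    (m - lam) * ∏ k ∈ Finset.univ \ T, (s k)^2
      ≤ multiQuadForm (fun i j => A i j - lam) (yT b T v) ∧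
    multiQuadForm (fun i j => A i j - lam) (yT b T v)
      ≤ (M - lam) * ∏ k ∈ Finset.univ \ T, (s k)^2 := by
  classical
  set c : Fin d → ℝ := fun k => if k ∈ T then 1 else s k with hc
  have hcpos : ∀ k, 0 < c k := by
    intro k; by_cases hk : k ∈ T <;> simp [hc, hk, hspos k]
  set z : (k : Fin d) → Fin (nn k) → ℝ := fun k a => (c k)⁻¹ * yT b T v k a with hz
  have hysum : ∀ k, ∑ a, yT b T v k a = c k := by
    intro k
    by_cases hk : k ∈ T <;> simp [yT, hk, hc, hs k, Finset.sum_ite_eq]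
  have hynn : ∀ k a, 0 ≤ yT b T v k a := by
    intro k a
    by_cases hk : k ∈ T
    · by_cases hv : v k = a <;> simp [yT, hk, hv]
    · simp [yT, hk, hb]
  have hzsum : ∀ k, ∑ a, z k a = 1 := by
    intro k
    rw [hz]
    simp only
    rw [← Finset.mul_sum, hysum k, inv_mul_cancel₀ (hcpos k).ne']
  have hzmem : ∀ k, z k ∈ stdSimplex ℝ (Fin (nn k)) := by
    intro k
    exact ⟨fun a => mul_nonneg (inv_nonneg.2 (hcpos k).le) (hynn k a), hzsum k⟩
  have hyz : yT b T v = fun k a => c k * z k a := by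
    funext k a
    rw [hz]
    simp only
    rw [← mul_assoc, mul_inv_cancel₀ (hcpos k).ne', one_mul]
  have hval : multiQuadForm (fun i j => A i j - lam) (yT b T v)
      = (∏ k ∈ Finset.univ \ T, (s k)^2) * (multiQuadForm A z - lam) := by
    have hthis : ∀ k : Fin d, (c k)^2 = if k ∈ T then 1 else (s k)^2 := by
      intro k; by_cases hk : k ∈ T <;> simp [hc, hk]
    have hcc : (∏ k, (c k)^2) = ∏ k ∈ Finset.univ \ T, (s k)^2 := by
      rw [Finset.prod_congr rfl fun k _ => hthis k,
        prod_if_mem T (fun _ => (1:ℝ)) (fun k => (s k)^2), Finset.prod_const_one, one_mul]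
    rw [hyz, multiQuadForm_smul, multiQuadForm_sub_const A lam z hzsum, hcc]
  have hprodnn : (0:ℝ) ≤ ∏ k ∈ Finset.univ \ T, (s k)^2 :=
    Finset.prod_nonneg fun k _ => sq_nonneg _
  obtain ⟨h1, h2⟩ := hbound z hzmem
  constructor
  · rw [hval, mul_comm]
    exact mul_le_mul_of_nonneg_left (by linarith) hprodnn
  · rw [hval, mul_comm ((M - lam))]
    exact mul_le_mul_of_nonneg_left (by linarith) hprodnn

end Key

section Grand
variable {d : ℕ} {nn : Fin d → ℕ}


lemma key_nonneg (hnn : ∀ k, 0 < nn k)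
    (A : ((k : Fin d) → Fin (nn k)) → ((k : Fin d) → Fin (nn k)) → ℝ)
    (r : Fin d → ℕ) (m M : ℝ)
    (hbound : ∀ x : (k : Fin d) → Fin (nn k) → ℝ,
      (∀ k, x k ∈ stdSimplex ℝ (Fin (nn k))) → m ≤ multiQuadForm A x ∧ multiQuadForm A x ≤ M)
    (b : (k : Fin d) → Fin (nn k) → ℝ) (hb : ∀ k a, 0 ≤ b k a)
    (hsum : ∀ k, ∑ a, b k a = (r k : ℝ) + 2) :
    0 ≤ ∑ i : (k : Fin d) → Fin (nn k), ∑ j : (k : Fin d) → Fin (nn k),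
      (A i j - (m - tauCoeff r / (∏ k, ((r k : ℝ) + 1)) * (M - m))) *
        ∏ k, (b k (i k) * b k (j k) - if i k = j k then b k (i k) else 0) := by
  classical
  set s : Fin d → ℝ := fun k => (r k : ℝ) + 2 with hsdef
  have hspos : ∀ k, 0 < s k := fun k => by positivity
  set P1 : ℝ := ∏ k, ((r k : ℝ) + 1) with hP1
  have hP1pos : 0 < P1 := Finset.prod_pos fun k _ => by positivity
  set lam : ℝ := m - tauCoeff r / P1 * (M - m) with hlam
  set A' : ((k : Fin d) → Fin (nn k)) → ((k : Fin d) → Fin (nn k)) → ℝ :=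
    fun i j => A i j - lam with hA'
  set v0 : (k : Fin d) → Fin (nn k) := fun k => ⟨0, hnn k⟩ with hv0
  set Q : Finset (Fin d) → ℝ := fun T => ∏ k ∈ Finset.univ \ T, (s k)^2 with hQ
  set R : Finset (Fin d) → ℝ := fun T => ∏ k ∈ T, s k with hR
  -- Step 1: expansion over subsets
  have step1 : ∑ i : (k : Fin d) → Fin (nn k), ∑ j : (k : Fin d) → Fin (nn k),
        A' i j * ∏ k, (b k (i k) * b k (j k) - if i k = j k then b k (i k) else 0)
      = ∑ T ∈ (Finset.univ : Finset (Fin d)).powerset, (-1)^(T.card) *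
          ∑ i : (k : Fin d) → Fin (nn k), ∑ j : (k : Fin d) → Fin (nn k), A' i j *
            ∏ k, (if k ∈ T then (if i k = j k then b k (i k) else 0) else b k (i k) * b k (j k)) := by
    have hexp : ∀ i j : (k : Fin d) → Fin (nn k),
        ∏ k, (b k (i k) * b k (j k) - if i k = j k then b k (i k) else 0)
        = ∑ T ∈ (Finset.univ : Finset (Fin d)).powerset, (-1)^(T.card) *
            ∏ k, (if k ∈ T then (if i k = j k then b k (i k) else 0) else b k (i k) * b k (j k)) := by
      intro i j
      have h0 : ∀ k : Fin d, b k (i k) * b k (j k) - (if i k = j k then b k (i k) else 0)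
          = (-(if i k = j k then b k (i k) else 0)) + b k (i k) * b k (j k) := fun k => by ring
      rw [Finset.prod_congr rfl fun k _ => h0 k, Finset.prod_add]
      refine Finset.sum_congr rfl fun T _ => ?_
      rw [prod_if_mem T (fun k => if i k = j k then b k (i k) else 0) (fun k => b k (i k) * b k (j k))]
      have hneg : ∏ k ∈ T, (-(if i k = j k then b k (i k) else 0))
          = (-1)^T.card * ∏ k ∈ T, (if i k = j k then b k (i k) else 0) := by
        rw [← Finset.prod_const (-1 : ℝ), ← Finset.prod_mul_distrib]
        exact Finset.prod_congr rfl fun k _ => by ring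
      rw [hneg]
      ring
    rw [Finset.sum_congr rfl fun i _ => Finset.sum_congr rfl fun j _ => by rw [hexp i j]]
    simp_rw [Finset.mul_sum]
    rw [Finset.sum_congr rfl fun i (_ : i ∈ Finset.univ) => Finset.sum_comm, Finset.sum_comm]
    exact Finset.sum_congr rfl fun T _ => Finset.sum_congr rfl fun i _ =>
      Finset.sum_congr rfl fun j _ => by ring
  -- Step 2: per-subset lower bound
  have hTlow : ∀ T ∈ (Finset.univ : Finset (Fin d)).powerset,
      (if Even T.card then (m - lam) * (Q T * R T) else -((M - lam) * (Q T * R T)))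
      ≤ (-1)^(T.card) *
          ∑ i : (k : Fin d) → Fin (nn k), ∑ j : (k : Fin d) → Fin (nn k), A' i j *
            ∏ k, (if k ∈ T then (if i k = j k then b k (i k) else 0) else b k (i k) * b k (j k)) := by
    intro T _
    rw [← GT_eq b v0 T A']
    have hv : ∀ v : (k : Fin d) → Fin (nn k),
        (m - lam) * Q T ≤ multiQuadForm A' (yT b T v) ∧
          multiQuadForm A' (yT b T v) ≤ (M - lam) * Q T :=
      fun v => yT_mem_and_val b hb s hspos hsum A m M lam hbound T v
    have hwnn : ∀ v : (k : Fin d) → Fin (nn k), 0 ≤ wtT b v0 T v :=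
      fun v => wtT_nonneg b hb v0 T v
    have hsw : ∑ v : (k : Fin d) → Fin (nn k), wtT b v0 T v = R T :=
      sum_wtT b v0 T s hsum
    by_cases hpar : Even T.card
    · rw [if_pos hpar, hpar.neg_one_pow, one_mul]
      calc (m - lam) * (Q T * R T) = ∑ v : (k : Fin d) → Fin (nn k),
            wtT b v0 T v * ((m - lam) * Q T) := by
            rw [← Finset.sum_mul, hsw]; ring
        _ ≤ ∑ v : (k : Fin d) → Fin (nn k), wtT b v0 T v * multiQuadForm A' (yT b T v) :=
            Finset.sum_le_sum fun v _ => mul_le_mul_of_nonneg_left (hv v).1 (hwnn v)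
    · rw [if_neg hpar, (Nat.not_even_iff_odd.1 hpar).neg_one_pow, neg_one_mul, neg_le_neg_iff]
      calc ∑ v : (k : Fin d) → Fin (nn k), wtT b v0 T v * multiQuadForm A' (yT b T v)
          ≤ ∑ v : (k : Fin d) → Fin (nn k), wtT b v0 T v * ((M - lam) * Q T) :=
            Finset.sum_le_sum fun v _ => mul_le_mul_of_nonneg_left (hv v).2 (hwnn v)
        _ = (M - lam) * (Q T * R T) := by rw [← Finset.sum_mul, hsw]; ring
  -- Step 3: the sum of the lower bounds is zero
  have hzero : ∑ T ∈ (Finset.univ : Finset (Fin d)).powerset,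
      (if Even T.card then (m - lam) * (Q T * R T) else -((M - lam) * (Q T * R T))) = 0 := by
    have hsplit : ∀ T : Finset (Fin d),
        (if Even T.card then (m - lam) * (Q T * R T) else -((M - lam) * (Q T * R T)))
        = (m - lam) * ((-1)^T.card * (Q T * R T))
          - (if Odd T.card then (M - m) * (Q T * R T) else 0) := by
      intro T
      by_cases hpar : Even T.card
      · rw [if_pos hpar, hpar.neg_one_pow, if_neg (Nat.not_odd_iff_even.2 hpar)]
        ring
      · rw [if_neg hpar, (Nat.not_even_iff_odd.1 hpar).neg_one_pow,
          if_pos (Nat.not_even_iff_odd.1 hpar)]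
        ring
    rw [Finset.sum_congr rfl fun T _ => hsplit T, Finset.sum_sub_distrib, ← Finset.mul_sum]
    have h1 : ∑ T ∈ (Finset.univ : Finset (Fin d)).powerset, (-1)^T.card * (Q T * R T)
        = (∏ k, s k) * P1 := by
      have := Finset.prod_add (fun k => -(s k)) (fun k => (s k)^2) (Finset.univ : Finset (Fin d))
      have hL : ∏ k, (-(s k) + (s k)^2) = (∏ k, s k) * P1 := by
        rw [← Finset.prod_mul_distrib]
        exact Finset.prod_congr rfl fun k _ => by simp [hsdef]; ring
      rw [← hL, this]
      refine Finset.sum_congr rfl fun T _ => ?_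
      have hneg : ∏ k ∈ T, (-(s k)) = (-1)^T.card * ∏ k ∈ T, s k := by
        rw [← Finset.prod_const (-1 : ℝ), ← Finset.prod_mul_distrib]
        exact Finset.prod_congr rfl fun k _ => by ring
      rw [hneg, hQ, hR]
      ring
    have h2 : ∑ T ∈ (Finset.univ : Finset (Fin d)).powerset,
        (if Odd T.card then (M - m) * (Q T * R T) else 0)
        = (M - m) * ((∏ k, s k) * tauCoeff r) := by
      rw [← Finset.sum_filter]
      have hQR : ∀ T : Finset (Fin d), Q T * R T = (∏ k, s k) * ∏ k ∈ Finset.univ \ T, s k := by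
        intro T
        have hsq : ∏ k ∈ Finset.univ \ T, (s k)^2
            = (∏ k ∈ Finset.univ \ T, s k) * ∏ k ∈ Finset.univ \ T, s k := by
          rw [← Finset.prod_mul_distrib]
          exact Finset.prod_congr rfl fun k _ => sq (s k)
        have hfull : (∏ k ∈ T, s k) * ∏ k ∈ Finset.univ \ T, s k = ∏ k, s k := by
          rw [← Finset.compl_eq_univ_sdiff]
          exact Finset.prod_mul_prod_compl T s
        rw [hQ, hR]
        simp only
        rw [hsq, ← hfull]
        ring
      rw [Finset.sum_congr rfl fun T _ => by rw [hQR T]]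
      rw [← Finset.mul_sum, ← Finset.mul_sum]
      congr 1
      congr 1
      unfold tauCoeff
      refine Finset.sum_nbij' (fun T => Finset.univ \ T) (fun S => Finset.univ \ S)
        ?_ ?_ ?_ ?_ ?_
      · intro T hT
        rw [Finset.mem_filter] at hT ⊢
        refine ⟨Finset.mem_powerset.2 (Finset.subset_univ _), ?_⟩
        rw [Finset.card_univ_diff, Fintype.card_fin]
        have hle : T.card ≤ d := by
          have := Finset.card_le_univ T
          simpa using this
        have : d - (d - T.card) = T.card := by omega
        rw [this]
        exact hT.2
      · intro S hS
        rw [Finset.mem_filter] at hS ⊢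
        refine ⟨Finset.mem_powerset.2 (Finset.subset_univ _), ?_⟩
        rw [Finset.card_univ_diff, Fintype.card_fin]
        exact hS.2
      · intro T _
        simp [Finset.sdiff_sdiff_self_left]
      · intro S _
        simp [Finset.sdiff_sdiff_self_left]
      · intro T _
        rfl
    rw [h1, h2, hlam]
    field_simp
    ring
  -- conclude
  have := Finset.sum_le_sum hTlow
  rw [hzero] at this
  calc (0:ℝ) ≤ _ := this
    _ = _ := step1.symm
end Grand


section Final
variable {d : ℕ} {nn : Fin d → ℕ}

lemma eval_nonneg_of_coeff_nonneg {σ : Type*} (p : MvPolynomial σ ℝ)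
    (hp : ∀ μ, 0 ≤ coeff μ p) (x : σ → ℝ) (hx : ∀ i, 0 ≤ x i) : 0 ≤ eval x p := by
  rw [eval_eq]
  exact Finset.sum_nonneg fun μ _ => mul_nonneg (hp μ)
    (Finset.prod_nonneg fun i _ => pow_nonneg (hx i) _)

lemma multiQuadForm_continuous (A : ((k : Fin d) → Fin (nn k)) → ((k : Fin d) → Fin (nn k)) → ℝ) :
    Continuous (multiQuadForm A) := by
  unfold multiQuadForm
  fun_prop

lemma stdSimplex_vertex_mem {n : ℕ} (hn : 0 < n) :
    (fun a => if a = (⟨0, hn⟩ : Fin n) then (1:ℝ) else 0) ∈ stdSimplex ℝ (Fin n) := by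
  constructor
  · intro a; dsimp only; split <;> norm_num
  · simp [Finset.sum_ite_eq']

lemma eval_multiQuadPoly (G : ((k : Fin d) → Fin (nn k)) → ((k : Fin d) → Fin (nn k)) → ℝ)
    (r : Fin d → ℕ) (x : (k : Fin d) → Fin (nn k) → ℝ) (hx : ∀ k, ∑ a, x k a = 1) :
    eval (fun p : (k : Fin d) × Fin (nn k) => x p.1 p.2) (multiQuadPoly G r)
      = multiQuadForm G x := by
  unfold multiQuadPoly multiQuadForm
  simp only [map_mul, map_sum, map_prod, map_pow, eval_C, eval_X, hx, one_pow,
    Finset.prod_const_one, mul_one]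
end Final


/-- **first half of Theorem 6.** For the standard multi-quadratic program,
`p_A^min − p_C^{(r_1,…,r_d)} ≤ τ(r_1,…,r_d;d)/∏_i(r_i+1) · (p_A^max − p_A^min)`, where
`p_C^{(r_1,…,r_d)} = sup{λ : A − λE ∈ C^{r_1,…,r_d}}`. -/
theorem multiQuad_pmin_sub_pC_bound (d : ℕ) (hd : 0 < d) (nn : Fin d → ℕ)
    (hnn : ∀ k, 0 < nn k)
    (A : ((k : Fin d) → Fin (nn k)) → ((k : Fin d) → Fin (nn k)) → ℝ)
    (hsym : ∀ (i j : (k : Fin d) → Fin (nn k)) (k : Fin d),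
      A i j = A (Function.update i k (j k)) (Function.update j k (i k)))
    (r : Fin d → ℕ) :
    sInf {v : ℝ | ∃ x : (k : Fin d) → Fin (nn k) → ℝ,
        (∀ k, x k ∈ stdSimplex ℝ (Fin (nn k))) ∧ v = multiQuadForm A x} -
      sSup {lam : ℝ | ∀ μ : ((k : Fin d) × Fin (nn k)) →₀ ℕ,
        0 ≤ (multiQuadPoly (fun i j => A i j - lam) r).coeff μ} ≤
    (tauCoeff r / ∏ k, ((r k : ℝ) + 1)) *
      (sSup {v : ℝ | ∃ x : (k : Fin d) → Fin (nn k) → ℝ,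
          (∀ k, x k ∈ stdSimplex ℝ (Fin (nn k))) ∧ v = multiQuadForm A x} -
        sInf {v : ℝ | ∃ x : (k : Fin d) → Fin (nn k) → ℝ,
          (∀ k, x k ∈ stdSimplex ℝ (Fin (nn k))) ∧ v = multiQuadForm A x}) := by
  classical
  set V : Set ℝ := {v : ℝ | ∃ x : (k : Fin d) → Fin (nn k) → ℝ,
      (∀ k, x k ∈ stdSimplex ℝ (Fin (nn k))) ∧ v = multiQuadForm A x} with hV
  set L : Set ℝ := {lam : ℝ | ∀ μ : ((k : Fin d) × Fin (nn k)) →₀ ℕ,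
      0 ≤ (multiQuadPoly (fun i j => A i j - lam) r).coeff μ} with hL
  -- compactness of the value set
  have hVeq : V = (multiQuadForm A) '' (Set.univ.pi fun k => stdSimplex ℝ (Fin (nn k))) := by
    ext v
    constructor
    · rintro ⟨x, hx, rfl⟩
      exact ⟨x, fun k _ => hx k, rfl⟩
    · rintro ⟨x, hx, rfl⟩
      exact ⟨x, fun k => hx k (Set.mem_univ k), rfl⟩
  have hVcompact : IsCompact V := by
    rw [hVeq]
    exact (isCompact_univ_pi fun k => isCompact_stdSimplex _ _).image (multiQuadForm_continuous A)
  have hx0 : ∀ k : Fin d, (fun a => if a = (⟨0, hnn k⟩ : Fin (nn k)) then (1:ℝ) else 0)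
      ∈ stdSimplex ℝ (Fin (nn k)) := fun k => stdSimplex_vertex_mem (hnn k)
  have hVne : V.Nonempty :=
    ⟨_, ⟨fun k a => if a = (⟨0, hnn k⟩ : Fin (nn k)) then (1:ℝ) else 0, hx0, rfl⟩⟩
  set m : ℝ := sInf V with hm
  set M : ℝ := sSup V with hM
  have hbound : ∀ x : (k : Fin d) → Fin (nn k) → ℝ,
      (∀ k, x k ∈ stdSimplex ℝ (Fin (nn k))) →
      m ≤ multiQuadForm A x ∧ multiQuadForm A x ≤ M := by
    intro x hx
    have hmem : multiQuadForm A x ∈ V := ⟨x, hx, rfl⟩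
    exact ⟨csInf_le hVcompact.bddBelow hmem, le_csSup hVcompact.bddAbove hmem⟩
  set lam0 : ℝ := m - tauCoeff r / (∏ k, ((r k : ℝ) + 1)) * (M - m) with hlam0
  -- membership of lam0 in L
  have hmemL : lam0 ∈ L := by
    intro μ
    by_cases hgood : ∀ k, ∑ a : Fin (nn k), μ ⟨k, a⟩ = r k + 2
    · rw [coeff_good _ r μ hgood]
      set b : (k : Fin d) → Fin (nn k) → ℝ := fun k a => (μ ⟨k, a⟩ : ℝ) with hb
      have hbnn : ∀ k a, 0 ≤ b k a := fun k a => Nat.cast_nonneg _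
      have hbsum : ∀ k, ∑ a, b k a = (r k : ℝ) + 2 := by
        intro k
        rw [hb]
        simp only
        rw [← Nat.cast_sum, hgood k]
        push_cast
        ring
      have key := key_nonneg hnn A r m M hbound b hbnn hbsum
      set F : ℝ := ∏ k, ∏ a : Fin (nn k), ((μ ⟨k, a⟩).factorial : ℝ) with hF
      have hFpos : 0 < F :=
        Finset.prod_pos fun k _ => Finset.prod_pos fun a _ =>
          Nat.cast_pos.2 (Nat.factorial_pos _)
      have hterm : ∀ i j : (k : Fin d) → Fin (nn k),
          (∏ k, (cntN (nn k) (fun a => μ ⟨k, a⟩) (i k) (j k) : ℝ)) * F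
          = (∏ k, ((r k).factorial : ℝ)) *
              ∏ k, (b k (i k) * b k (j k) - if i k = j k then b k (i k) else 0) := by
        intro i j
        rw [hF, ← Finset.prod_mul_distrib]
        have h1 : ∀ k : Fin d, (cntN (nn k) (fun a => μ ⟨k, a⟩) (i k) (j k) : ℝ) *
            ∏ a : Fin (nn k), ((μ ⟨k, a⟩).factorial : ℝ)
            = ((r k).factorial : ℝ) *
                (b k (i k) * b k (j k) - if i k = j k then b k (i k) else 0) := by
          intro k
          rw [← Nat.cast_prod,
            cntN_mul_factorial (nn k) (r k) (fun a => μ ⟨k, a⟩) (hgood k) (i k) (j k), hb]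
          by_cases hij : i k = j k
          · rw [if_pos hij, if_pos hij, hij]; ring
          · rw [if_neg hij, if_neg hij]; ring
        rw [Finset.prod_congr rfl fun k _ => h1 k, Finset.prod_mul_distrib]
      have hkey2 : (∑ i : (k : Fin d) → Fin (nn k), ∑ j : (k : Fin d) → Fin (nn k),
          (A i j - lam0) * ∏ k, (cntN (nn k) (fun a => μ ⟨k, a⟩) (i k) (j k) : ℝ)) * F
          = (∏ k, ((r k).factorial : ℝ)) *
            ∑ i : (k : Fin d) → Fin (nn k), ∑ j : (k : Fin d) → Fin (nn k),
              (A i j - lam0) *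
                ∏ k, (b k (i k) * b k (j k) - if i k = j k then b k (i k) else 0) := by
        rw [Finset.sum_mul, Finset.mul_sum]
        refine Finset.sum_congr rfl fun i _ => ?_
        rw [Finset.sum_mul, Finset.mul_sum]
        refine Finset.sum_congr rfl fun j _ => ?_
        calc (A i j - lam0) * (∏ k, (cntN (nn k) (fun a => μ ⟨k, a⟩) (i k) (j k) : ℝ)) * F
            = (A i j - lam0) * ((∏ k, (cntN (nn k) (fun a => μ ⟨k, a⟩) (i k) (j k) : ℝ)) * F) := by
              ring
          _ = _ := by rw [hterm i j]; ring
      have hrhs_nn : 0 ≤ (∏ k, ((r k).factorial : ℝ)) *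
          ∑ i : (k : Fin d) → Fin (nn k), ∑ j : (k : Fin d) → Fin (nn k),
            (A i j - lam0) *
              ∏ k, (b k (i k) * b k (j k) - if i k = j k then b k (i k) else 0) :=
        mul_nonneg (Finset.prod_nonneg fun k _ => Nat.cast_nonneg _) key
      have := (mul_nonneg_iff_of_pos_right hFpos).1 (hkey2 ▸ hrhs_nn)
      exact this
    · push_neg at hgood
      rw [coeff_bad _ r μ hgood]
  -- L is bounded above
  have hbddL : BddAbove L := by
    refine ⟨multiQuadForm A (fun k a => if a = (⟨0, hnn k⟩ : Fin (nn k)) then (1:ℝ) else 0), ?_⟩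
    rintro lam hlam
    set x : (k : Fin d) → Fin (nn k) → ℝ :=
      fun k a => if a = (⟨0, hnn k⟩ : Fin (nn k)) then (1:ℝ) else 0 with hxdef
    have hxs : ∀ k, ∑ a, x k a = 1 := fun k => (hx0 k).2
    have hxnn : ∀ p : (k : Fin d) × Fin (nn k), 0 ≤ x p.1 p.2 :=
      fun p => (hx0 p.1).1 p.2
    have h0 : 0 ≤ eval (fun p : (k : Fin d) × Fin (nn k) => x p.1 p.2)
        (multiQuadPoly (fun i j => A i j - lam) r) :=
      eval_nonneg_of_coeff_nonneg _ hlam _ hxnn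
    rw [eval_multiQuadPoly _ r x hxs, multiQuadForm_sub_const A lam x hxs] at h0
    linarith
  have hle : lam0 ≤ sSup L := le_csSup hbddL hmemL
  have : m - sSup L ≤ m - lam0 := by linarith
  calc m - sSup L ≤ m - lam0 := this
    _ = tauCoeff r / (∏ k, ((r k : ℝ) + 1)) * (M - m) := by rw [hlam0]; ring
end

section
/- Let A be a partially symmetric multi-quadratic tensor with d blocks of sizes n_1,…,n_d, and let r_1,…,r_d be nonnegative integers. Then p_Δ^{(r_1,…,r_d)} − p_A^min ≤ [τ(r_1,…,r_d;d) / ∏_{i=1}^d (r_i+2)] (p_A^max − p_A^min), where p_Δ^{(r_1,…,r_d)} = min{ p_A(x^{(1)},…,x^{(d)}) : x^{(k)} ∈ Δ_{n_k}(r_k), k = 1,…,d } and τ(r_1,…,r_d;d) = Σ_{ν ∈ {0,1}^d, d−|ν| odd} ∏_{k=1}^d (r_k+2)^{ν_k}. -/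
open Finset



lemma sum_prod_ind_ne {N n : ℕ} (x : Fin N → ℝ) (hx : ∑ i, x i = 1)
    {m m' : Fin n} (hmm : m ≠ m') (a b : Fin N) :
    ∑ t : Fin n → Fin N, (∏ l, x (t l)) *
      ((if t m = a then (1:ℝ) else 0) * (if t m' = b then 1 else 0)) = x a * x b := by
  have h1 : ∀ t : Fin n → Fin N,
      (∏ l, x (t l)) * ((if t m = a then (1:ℝ) else 0) * (if t m' = b then 1 else 0))
      = ∏ l, (x (t l) * ((if l = m then (if t l = a then (1:ℝ) else 0) else 1) *
            (if l = m' then (if t l = b then 1 else 0) else 1))) := by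
    intro t
    rw [Finset.prod_mul_distrib, Finset.prod_mul_distrib]
    have hu : (∏ l, (if l = m then (if t l = a then (1:ℝ) else 0) else 1))
        = (if t m = a then 1 else 0) := by
      rw [Finset.prod_eq_single m (fun l _ hl => if_neg hl) (by simp)]; simp
    have hv : (∏ l, (if l = m' then (if t l = b then (1:ℝ) else 0) else 1))
        = (if t m' = b then 1 else 0) := by
      rw [Finset.prod_eq_single m' (fun l _ hl => if_neg hl) (by simp)]; simp
    rw [hu, hv]
  simp_rw [h1]
  have key := Finset.prod_univ_sum (fun _ : Fin n => (univ : Finset (Fin N)))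
    (fun l i => x i * ((if l = m then (if i = a then (1:ℝ) else 0) else 1) *
      (if l = m' then (if i = b then 1 else 0) else 1)))
  rw [Fintype.piFinset_univ] at key
  rw [← key]
  have h2 : ∀ l : Fin n, (∑ i, x i * ((if l = m then (if i = a then (1:ℝ) else 0) else 1) *
      (if l = m' then (if i = b then 1 else 0) else 1)))
      = if l = m then x a else if l = m' then x b else 1 := by
    intro l
    by_cases hlm : l = m
    · subst hlm
      have : l ≠ m' := hmm
      simp only [if_pos rfl, if_neg this, mul_one, mul_ite, mul_zero, if_true]
      rw [Finset.sum_ite_eq' univ a x]; simp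
    · by_cases hlm' : l = m'
      · subst hlm'
        simp only [if_neg hlm, if_pos rfl, one_mul, mul_ite, mul_one, mul_zero, if_true]
        rw [Finset.sum_ite_eq' univ b x]; simp [hlm]
      · simp [hlm, hlm', hx]
  simp_rw [h2]
  rw [← Finset.mul_prod_erase _ _ (Finset.mem_univ m),
    ← Finset.mul_prod_erase _ _ (Finset.mem_erase.2 ⟨Ne.symm hmm, Finset.mem_univ m'⟩),
    Finset.prod_eq_one]
  · simp [hmm, Ne.symm hmm]
  · intro l hl
    have ha := Finset.ne_of_mem_erase hl
    have hb := Finset.ne_of_mem_erase (Finset.mem_of_mem_erase hl)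
    simp [ha, hb]

lemma sum_prod_ind_eq {N n : ℕ} (x : Fin N → ℝ) (hx : ∑ i, x i = 1)
    (m : Fin n) (a b : Fin N) :
    ∑ t : Fin n → Fin N, (∏ l, x (t l)) *
      ((if t m = a then (1:ℝ) else 0) * (if t m = b then 1 else 0))
      = if a = b then x a else 0 := by
  have h1 : ∀ t : Fin n → Fin N,
      (∏ l, x (t l)) * ((if t m = a then (1:ℝ) else 0) * (if t m = b then 1 else 0))
      = ∏ l, (x (t l) * (if l = m then ((if t l = a then (1:ℝ) else 0) *
          (if t l = b then 1 else 0)) else 1)) := by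
    intro t
    rw [Finset.prod_mul_distrib]
    congr 1
    rw [Finset.prod_eq_single m (fun l _ hl => if_neg hl) (by simp)]; simp
  simp_rw [h1]
  have key := Finset.prod_univ_sum (fun _ : Fin n => (univ : Finset (Fin N)))
    (fun l i => x i * (if l = m then ((if i = a then (1:ℝ) else 0) *
      (if i = b then 1 else 0)) else 1))
  rw [Fintype.piFinset_univ] at key
  rw [← key]
  have h2 : ∀ l : Fin n, (∑ i, x i * (if l = m then ((if i = a then (1:ℝ) else 0) *
      (if i = b then 1 else 0)) else 1))
      = if l = m then (if a = b then x a else 0) else 1 := by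
    intro l
    by_cases hlm : l = m
    · subst hlm
      simp only [if_pos rfl, mul_ite, mul_one, mul_zero, if_true]
      by_cases hab : a = b
      · subst hab
        simp only [if_pos rfl, if_true]
        have : ∀ i : Fin N, (if i = a then (if i = a then x i else 0) else 0)
            = if i = a then x i else 0 := by intro i; by_cases h : i = a <;> simp [h]
        rw [Finset.sum_congr rfl (fun i _ => this i), Finset.sum_ite_eq' univ a x]; simp
      · simp only [if_neg hab, if_true]
        rw [Finset.sum_eq_zero]
        intro i _
        by_cases hia : i = a
        · subst hia; simp [hab, Ne.symm hab]
        · simp [hia]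
    · simp [hlm, hx]
  simp_rw [h2]
  rw [Finset.prod_eq_single m (fun l _ hl => if_neg hl) (by simp)]; simp

lemma exp_pair {N n : ℕ} (hn : 0 < n) (x : Fin N → ℝ) (hx : ∑ i, x i = 1) (a b : Fin N) :
    ∑ t : Fin n → Fin N, (∏ l, x (t l)) *
      (((∑ m, if t m = a then (1:ℝ) else 0) / n) * ((∑ m, if t m = b then (1:ℝ) else 0) / n))
    = (1 - 1/n) * (x a * x b) + (1/n) * (if a = b then x a else 0) := by
  have hn' : (n:ℝ) ≠ 0 := Nat.cast_ne_zero.2 hn.ne'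
  have e1 : ∀ t : Fin n → Fin N, (∏ l, x (t l)) *
      (((∑ m, if t m = a then (1:ℝ) else 0) / n) * ((∑ m, if t m = b then (1:ℝ) else 0) / n))
      = (1/((n:ℝ)*n)) * ∑ m, ∑ m', (∏ l, x (t l)) *
        ((if t m = a then (1:ℝ) else 0) * (if t m' = b then 1 else 0)) := by
    intro t
    have h := Finset.sum_mul_sum (univ : Finset (Fin n)) univ
      (fun m => if t m = a then (1:ℝ) else 0) (fun m' => if t m' = b then (1:ℝ) else 0)
    calc (∏ l, x (t l)) * (((∑ m, if t m = a then (1:ℝ) else 0) / n) *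
            ((∑ m, if t m = b then (1:ℝ) else 0) / n))
        = (1/((n:ℝ)*n)) * ((∏ l, x (t l)) *
            ((∑ m, if t m = a then (1:ℝ) else 0) * (∑ m, if t m = b then (1:ℝ) else 0))) := by
          field_simp
      _ = (1/((n:ℝ)*n)) * ((∏ l, x (t l)) * ∑ m, ∑ m', (if t m = a then (1:ℝ) else 0) *
            (if t m' = b then (1:ℝ) else 0)) := by rw [h]
      _ = (1/((n:ℝ)*n)) * ∑ m, ∑ m', (∏ l, x (t l)) *
            ((if t m = a then (1:ℝ) else 0) * (if t m' = b then 1 else 0)) := by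
          congr 1
          rw [Finset.mul_sum]
          refine Finset.sum_congr rfl fun m _ => ?_
          rw [Finset.mul_sum]
  rw [Finset.sum_congr rfl (fun t _ => e1 t), ← Finset.mul_sum]
  rw [Finset.sum_comm]
  have e2 : ∀ m : Fin n, ∑ t : Fin n → Fin N, ∑ m', (∏ l, x (t l)) *
      ((if t m = a then (1:ℝ) else 0) * (if t m' = b then 1 else 0))
      = (if a = b then x a else 0) + (n-1 : ℕ) * (x a * x b) := by
    intro m
    rw [Finset.sum_comm]
    rw [← Finset.add_sum_erase _ _ (Finset.mem_univ m)]
    rw [sum_prod_ind_eq x hx m a b]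
    congr 1
    rw [Finset.sum_congr rfl (fun m' hm' => sum_prod_ind_ne x hx (Ne.symm (Finset.ne_of_mem_erase hm')) a b)]
    rw [Finset.sum_const, Finset.card_erase_of_mem (Finset.mem_univ m), Finset.card_univ,
      Fintype.card_fin]
    simp [nsmul_eq_mul]
  rw [Finset.sum_congr rfl (fun m _ => e2 m)]
  rw [Finset.sum_const, Finset.card_univ, Fintype.card_fin, nsmul_eq_mul]
  have hcast : ((n - 1 : ℕ) : ℝ) = (n:ℝ) - 1 := by
    have h1 : (1:ℕ) ≤ n := hn
    push_cast [Nat.cast_sub h1]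
    ring
  rw [hcast]
  field_simp
  ring

lemma mqf_update {d : ℕ} {nn : Fin d → ℕ}
    (A : ((k : Fin d) → Fin (nn k)) → ((k : Fin d) → Fin (nn k)) → ℝ)
    (x : (k : Fin d) → Fin (nn k) → ℝ) (k : Fin d) (z : Fin (nn k) → ℝ) :
    multiQuadForm A (Function.update x k z) =
      ∑ i : (k : Fin d) → Fin (nn k), ∑ j : (k : Fin d) → Fin (nn k),
        A i j * ((z (i k) * z (j k)) * ∏ l ∈ univ.erase k, x l (i l) * x l (j l)) := by
  unfold multiQuadForm
  refine Finset.sum_congr rfl fun i _ => Finset.sum_congr rfl fun j _ => ?_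
  congr 1
  rw [← Finset.mul_prod_erase _ _ (Finset.mem_univ k)]
  congr 1
  · rw [Function.update_self]
  · refine Finset.prod_congr rfl fun l hl => ?_
    rw [Function.update_of_ne (Finset.ne_of_mem_erase hl)]

lemma round_one_block {d : ℕ} {nn : Fin d → ℕ}
    (A : ((k : Fin d) → Fin (nn k)) → ((k : Fin d) → Fin (nn k)) → ℝ)
    (x : (k : Fin d) → Fin (nn k) → ℝ) (hx : ∀ l, x l ∈ stdSimplex ℝ (Fin (nn l)))
    (k : Fin d) (n : ℕ) (hn : 0 < n) (M m' : ℝ)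
    (hM : ∀ y : (k : Fin d) → Fin (nn k) → ℝ,
      (∀ l, y l ∈ stdSimplex ℝ (Fin (nn l))) → multiQuadForm A y ≤ M)
    (hm : ∀ y : (k : Fin d) → Fin (nn k) → ℝ,
      (∀ l, y l ∈ stdSimplex ℝ (Fin (nn l))) → m' ≤ multiQuadForm A y) :
    ∃ z : Fin (nn k) → ℝ, z ∈ stdSimplex ℝ (Fin (nn k)) ∧
      (∀ a, ∃ c : ℕ, (n:ℝ) * z a = c) ∧
      multiQuadForm A (Function.update x k z) ≤
        multiQuadForm A x + (1/n) * (M - m') := by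
  have hn' : (n:ℝ) ≠ 0 := Nat.cast_ne_zero.2 hn.ne'
  set X : Fin (nn k) → ℝ := x k with hXdef
  have hX : X ∈ stdSimplex ℝ (Fin (nn k)) := hx k
  have hX0 : ∀ a, 0 ≤ X a := hX.1
  have hX1 : ∑ a, X a = 1 := hX.2
  set y : (Fin n → Fin (nn k)) → Fin (nn k) → ℝ :=
    fun t a => (∑ m, if t m = a then (1:ℝ) else 0) / n with hydef
  set w : (Fin n → Fin (nn k)) → ℝ := fun t => ∏ l, X (t l) with hwdef
  have hw0 : ∀ t, 0 ≤ w t := fun t => Finset.prod_nonneg fun l _ => hX0 _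
  have hw1 : ∑ t, w t = 1 := by
    have key := Finset.prod_univ_sum (fun _ : Fin n => (univ : Finset (Fin (nn k))))
      (fun _ i => X i)
    rw [Fintype.piFinset_univ] at key
    rw [hwdef, ← key]
    simp [hX1]
  have hy_simplex : ∀ t, y t ∈ stdSimplex ℝ (Fin (nn k)) := by
    intro t
    constructor
    · intro a
      apply div_nonneg _ (Nat.cast_nonneg n)
      exact Finset.sum_nonneg fun m _ => by positivity
    · rw [← Finset.sum_div]
      rw [Finset.sum_comm]
      have : ∀ m : Fin n, (∑ a, if t m = a then (1:ℝ) else 0) = 1 := by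
        intro m; rw [Finset.sum_ite_eq univ (t m) (fun _ => (1:ℝ))]; simp
      rw [Finset.sum_congr rfl fun m _ => this m]
      simp [hn']
  have hy_grid : ∀ t a, ∃ c : ℕ, (n:ℝ) * y t a = c := by
    intro t a
    refine ⟨(univ.filter (fun m => t m = a)).card, ?_⟩
    rw [hydef]
    field_simp [Finset.sum_boole]
    rw [Finset.sum_boole]
  -- the unit vectors
  set e : Fin (nn k) → Fin (nn k) → ℝ := fun a b => if b = a then 1 else 0 with hedef
  have he_simplex : ∀ a, e a ∈ stdSimplex ℝ (Fin (nn k)) := by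
    intro a
    constructor
    · intro b; by_cases h : b = a <;> simp [hedef, h]
    · rw [hedef]; rw [Finset.sum_ite_eq' univ a (fun _ => (1:ℝ))]; simp
  set D : ℝ := ∑ a, X a * multiQuadForm A (Function.update x k (e a)) with hDdef
  -- key identity
  have key : ∑ t, w t * multiQuadForm A (Function.update x k (y t))
      = (1 - 1/n) * multiQuadForm A x + (1/n) * D := by
    set C : ((k : Fin d) → Fin (nn k)) → ((k : Fin d) → Fin (nn k)) → ℝ :=
      fun i j => ∏ l ∈ univ.erase k, x l (i l) * x l (j l) with hCdef
    have hC : ∀ (z : Fin (nn k) → ℝ), multiQuadForm A (Function.update x k z)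
        = ∑ i, ∑ j, A i j * ((z (i k) * z (j k)) * C i j) := fun z => mqf_update A x k z
    have step1 : ∑ t, w t * multiQuadForm A (Function.update x k (y t))
        = ∑ i, ∑ j, (A i j * C i j) * ((1 - 1/(n:ℝ)) * (X (i k) * X (j k)) +
            (1/n) * (if i k = j k then X (i k) else 0)) := by
      have e1 : ∀ t, w t * multiQuadForm A (Function.update x k (y t))
          = ∑ i, ∑ j, (A i j * C i j) * (w t * (y t (i k) * y t (j k))) := by
        intro t
        rw [hC (y t), Finset.mul_sum]
        refine Finset.sum_congr rfl fun i _ => ?_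
        rw [Finset.mul_sum]
        refine Finset.sum_congr rfl fun j _ => ?_
        ring
      rw [Finset.sum_congr rfl fun t _ => e1 t, Finset.sum_comm]
      refine Finset.sum_congr rfl fun i _ => ?_
      rw [Finset.sum_comm]
      refine Finset.sum_congr rfl fun j _ => ?_
      rw [← Finset.mul_sum]
      congr 1
      have := exp_pair hn X hX1 (i k) (j k)
      simp only [hwdef, hydef]
      exact this
    have hpx2 : multiQuadForm A x = ∑ i, ∑ j, A i j * ((X (i k) * X (j k)) * C i j) := by
      have h := hC (x k)
      rwa [Function.update_eq_self] at h
    have hD2 : D = ∑ i, ∑ j, (A i j * C i j) * (if i k = j k then X (i k) else 0) := by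
      have e2 : ∀ a, X a * multiQuadForm A (Function.update x k (e a))
          = ∑ i, ∑ j, (A i j * C i j) *
            (X a * ((if i k = a then (1:ℝ) else 0) * (if j k = a then 1 else 0))) := by
        intro a
        rw [hC (e a), Finset.mul_sum]
        refine Finset.sum_congr rfl fun i _ => ?_
        rw [Finset.mul_sum]
        refine Finset.sum_congr rfl fun j _ => ?_
        simp only [hedef]
        ring
      rw [hDdef, Finset.sum_congr rfl fun a _ => e2 a, Finset.sum_comm]
      refine Finset.sum_congr rfl fun i _ => ?_
      rw [Finset.sum_comm]
      refine Finset.sum_congr rfl fun j _ => ?_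
      rw [← Finset.mul_sum]
      congr 1
      simp only [mul_ite, mul_one, mul_zero]
      by_cases h : i k = j k
      · rw [← h, if_pos rfl]
        have : ∀ a, (if i k = a then if i k = a then X a else 0 else 0)
            = if i k = a then X a else 0 := by
          intro a; by_cases ha : i k = a <;> simp [ha]
        calc (∑ a, if i k = a then if i k = a then X a else 0 else 0)
            = ∑ a, if i k = a then X a else 0 :=
              Finset.sum_congr rfl fun a _ => this a
          _ = X (i k) := by rw [Finset.sum_ite_eq univ (i k) X]; simp
      · rw [if_neg h, Finset.sum_eq_zero]
        intro a _
        by_cases ha : i k = a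
        · rw [if_pos ha, if_neg (fun hja => h (ha.trans hja.symm))]
        · rw [if_neg ha]; simp
    rw [step1, hpx2, hD2, Finset.mul_sum, Finset.mul_sum, ← Finset.sum_add_distrib]
    refine Finset.sum_congr rfl fun i _ => ?_
    rw [Finset.mul_sum, Finset.mul_sum, ← Finset.sum_add_distrib]
    refine Finset.sum_congr rfl fun j _ => ?_
    ring
  have hDM : D ≤ M := by
    have : ∀ a ∈ (univ : Finset (Fin (nn k))), X a * multiQuadForm A (Function.update x k (e a)) ≤ X a * M := by
      intro a _
      apply mul_le_mul_of_nonneg_left _ (hX0 a)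
      apply hM
      intro l
      by_cases h : l = k
      · subst h; rw [Function.update_self]; exact he_simplex a
      · rw [Function.update_of_ne h]; exact hx l
    calc D ≤ ∑ a, X a * M := Finset.sum_le_sum this
      _ = (∑ a, X a) * M := by rw [Finset.sum_mul]
      _ = M := by rw [hX1, one_mul]
  have hsum_le : ∑ t, w t * multiQuadForm A (Function.update x k (y t))
      ≤ (1 - 1/n) * multiQuadForm A x + (1/n) * M := by
    rw [key]
    have h1n : (0:ℝ) ≤ 1/n := by positivity
    have := mul_le_mul_of_nonneg_left hDM h1n
    linarith
  have hex : ∃ t, multiQuadForm A (Function.update x k (y t)) ≤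
      (1 - 1/n) * multiQuadForm A x + (1/n) * M := by
    by_contra h
    push_neg at h
    obtain ⟨t0, _, ht0⟩ := Finset.exists_ne_zero_of_sum_ne_zero (by rw [hw1]; norm_num :
      ∑ t, w t ≠ 0)
    have hlt : ∑ t, w t * ((1 - 1/n) * multiQuadForm A x + (1/n) * M)
        < ∑ t, w t * multiQuadForm A (Function.update x k (y t)) := by
      apply Finset.sum_lt_sum
      · intro t _
        exact mul_le_mul_of_nonneg_left (le_of_lt (h t)) (hw0 t)
      · refine ⟨t0, Finset.mem_univ t0, ?_⟩
        exact mul_lt_mul_of_pos_left (h t0) (lt_of_le_of_ne (hw0 t0) (Ne.symm ht0))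
    rw [← Finset.sum_mul, hw1, one_mul] at hlt
    exact absurd (lt_of_lt_of_le hlt hsum_le) (lt_irrefl _)
  obtain ⟨t, ht⟩ := hex
  refine ⟨y t, hy_simplex t, hy_grid t, ?_⟩
  have hpx := hm x hx
  have h1n : (0:ℝ) < 1/n := by positivity
  calc multiQuadForm A (Function.update x k (y t))
      ≤ (1 - 1/n) * multiQuadForm A x + (1/n) * M := ht
    _ ≤ multiQuadForm A x + (1/n) * (M - m') := by nlinarith

lemma round_blocks {d : ℕ} {nn : Fin d → ℕ}
    (A : ((k : Fin d) → Fin (nn k)) → ((k : Fin d) → Fin (nn k)) → ℝ)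
    (r : Fin d → ℕ) (M m' : ℝ)
    (hM : ∀ y : (k : Fin d) → Fin (nn k) → ℝ,
      (∀ l, y l ∈ stdSimplex ℝ (Fin (nn l))) → multiQuadForm A y ≤ M)
    (hm : ∀ y : (k : Fin d) → Fin (nn k) → ℝ,
      (∀ l, y l ∈ stdSimplex ℝ (Fin (nn l))) → m' ≤ multiQuadForm A y)
    (S : Finset (Fin d)) :
    ∀ x : (k : Fin d) → Fin (nn k) → ℝ, (∀ l, x l ∈ stdSimplex ℝ (Fin (nn l))) →
    ∃ y : (k : Fin d) → Fin (nn k) → ℝ, (∀ l, y l ∈ stdSimplex ℝ (Fin (nn l))) ∧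
      (∀ k ∈ S, ∀ a, ∃ c : ℕ, ((r k : ℝ) + 2) * y k a = c) ∧
      multiQuadForm A y ≤ multiQuadForm A x + (∑ k ∈ S, 1/((r k:ℝ)+2)) * (M - m') := by
  induction S using Finset.induction_on with
  | empty =>
    intro x hx
    exact ⟨x, hx, by simp, by simp⟩
  | @insert k S hk ih =>
    intro x hx
    obtain ⟨y, hy, hgrid, hval⟩ := ih x hx
    obtain ⟨z, hz, hzgrid, hzval⟩ :=
      round_one_block A y hy k (r k + 2) (by omega) M m' hM hm
    refine ⟨Function.update y k z, ?_, ?_, ?_⟩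
    · intro l
      by_cases h : l = k
      · subst h; rw [Function.update_self]; exact hz
      · rw [Function.update_of_ne h]; exact hy l
    · intro l hl a
      by_cases h : l = k
      · subst h; rw [Function.update_self]
        obtain ⟨c, hc⟩ := hzgrid a
        refine ⟨c, ?_⟩
        push_cast at hc ⊢
        linarith
      · rw [Function.update_of_ne h]
        have hlS : l ∈ S := by
          rcases Finset.mem_insert.1 hl with h' | h'
          · exact absurd h' h
          · exact h'
        exact hgrid l hlS a
    · rw [Finset.sum_insert hk, add_mul]
      have hc : ((r k + 2 : ℕ) : ℝ) = (r k : ℝ) + 2 := by push_cast; ring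
      rw [hc] at hzval
      linarith

lemma tau_ratio {d : ℕ} (hd : 0 < d) (r : Fin d → ℕ) :
    (∑ k, 1/((r k:ℝ)+2)) ≤ tauCoeff r / ∏ k, ((r k : ℝ) + 2) := by
  have hP : (0:ℝ) < ∏ k, ((r k : ℝ) + 2) :=
    Finset.prod_pos fun k _ => by positivity
  rw [le_div_iff₀ hP]
  have hLHS : (∑ k, 1/((r k:ℝ)+2)) * ∏ k, ((r k : ℝ) + 2)
      = ∑ k, ∏ l ∈ univ.erase k, ((r l : ℝ) + 2) := by
    rw [Finset.sum_mul]
    refine Finset.sum_congr rfl fun k _ => ?_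
    rw [← Finset.mul_prod_erase _ _ (Finset.mem_univ k)]
    have : ((r k:ℝ)+2) ≠ 0 := by positivity
    field_simp
  rw [hLHS]
  have hinj : ∀ a ∈ (univ : Finset (Fin d)), ∀ b ∈ univ,
      univ.erase a = univ.erase b → a = b := by
    intro a _ b _ hab
    by_contra h
    have : a ∈ univ.erase b := Finset.mem_erase.2 ⟨h, Finset.mem_univ a⟩
    rw [← hab] at this
    exact (Finset.mem_erase.1 this).1 rfl
  have himg : ∑ k : Fin d, ∏ l ∈ univ.erase k, ((r l : ℝ) + 2)
      = ∑ S ∈ univ.image (fun k : Fin d => univ.erase k), ∏ l ∈ S, ((r l : ℝ) + 2) := by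
    rw [Finset.sum_image hinj]
  rw [himg]
  apply Finset.sum_le_sum_of_subset_of_nonneg
  · intro S hS
    obtain ⟨k, _, hkS⟩ := Finset.mem_image.1 hS
    rw [Finset.mem_filter]
    constructor
    · exact Finset.mem_powerset.2 (by rw [← hkS]; exact Finset.erase_subset _ _)
    · rw [← hkS, Finset.card_erase_of_mem (Finset.mem_univ k), Finset.card_univ,
        Fintype.card_fin]
      have : d - (d - 1) = 1 := by omega
      rw [this]
      exact odd_one
  · intro S _ _
    exact Finset.prod_nonneg fun l _ => by positivity

/-- **second half of Theorem 6.** For the standard multi-quadratic program,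
`p_Δ^{(r_1,…,r_d)} − p_A^min ≤ τ(r_1,…,r_d;d)/∏_i(r_i+2) · (p_A^max − p_A^min)`, where
`p_Δ^{(r_1,…,r_d)}` is the minimum of `p_A` over the grid `Δ_{n_1}(r_1) × ⋯ × Δ_{n_d}(r_d)`. -/
theorem multiQuad_grid_min_sub_pmin_bound (d : ℕ) (hd : 0 < d) (nn : Fin d → ℕ)
    (hnn : ∀ k, 0 < nn k)
    (A : ((k : Fin d) → Fin (nn k)) → ((k : Fin d) → Fin (nn k)) → ℝ)
    (hsym : ∀ (i j : (k : Fin d) → Fin (nn k)) (k : Fin d),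
      A i j = A (Function.update i k (j k)) (Function.update j k (i k)))
    (r : Fin d → ℕ) :
    sInf {v : ℝ | ∃ x : (k : Fin d) → Fin (nn k) → ℝ,
        (∀ k, x k ∈ stdSimplex ℝ (Fin (nn k))) ∧
        (∀ k a, ∃ t : ℕ, ((r k : ℝ) + 2) * x k a = t) ∧
        v = multiQuadForm A x} -
      sInf {v : ℝ | ∃ x : (k : Fin d) → Fin (nn k) → ℝ,
        (∀ k, x k ∈ stdSimplex ℝ (Fin (nn k))) ∧ v = multiQuadForm A x} ≤
    (tauCoeff r / ∏ k, ((r k : ℝ) + 2)) *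
      (sSup {v : ℝ | ∃ x : (k : Fin d) → Fin (nn k) → ℝ,
          (∀ k, x k ∈ stdSimplex ℝ (Fin (nn k))) ∧ v = multiQuadForm A x} -
        sInf {v : ℝ | ∃ x : (k : Fin d) → Fin (nn k) → ℝ,
          (∀ k, x k ∈ stdSimplex ℝ (Fin (nn k))) ∧ v = multiQuadForm A x}) := by
  classical
  set V : Set ℝ := {v : ℝ | ∃ x : (k : Fin d) → Fin (nn k) → ℝ,
      (∀ k, x k ∈ stdSimplex ℝ (Fin (nn k))) ∧ v = multiQuadForm A x} with hVdef
  set G : Set ℝ := {v : ℝ | ∃ x : (k : Fin d) → Fin (nn k) → ℝ,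
      (∀ k, x k ∈ stdSimplex ℝ (Fin (nn k))) ∧
      (∀ k a, ∃ t : ℕ, ((r k : ℝ) + 2) * x k a = t) ∧
      v = multiQuadForm A x} with hGdef
  -- base point
  set x0 : (k : Fin d) → Fin (nn k) → ℝ :=
    fun k b => if b = (⟨0, hnn k⟩ : Fin (nn k)) then 1 else 0 with hx0def
  have hx0s : ∀ k, x0 k ∈ stdSimplex ℝ (Fin (nn k)) := by
    intro k
    constructor
    · intro b; by_cases h : b = (⟨0, hnn k⟩ : Fin (nn k)) <;> simp [hx0def, h]
    · rw [hx0def]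
      rw [Finset.sum_ite_eq' univ (⟨0, hnn k⟩ : Fin (nn k)) (fun _ => (1:ℝ))]
      simp
  have hx0g : ∀ k a, ∃ t : ℕ, ((r k : ℝ) + 2) * x0 k a = t := by
    intro k a
    by_cases h : a = (⟨0, hnn k⟩ : Fin (nn k))
    · refine ⟨r k + 2, ?_⟩
      simp only [hx0def, if_pos h]
      push_cast
      ring
    · exact ⟨0, by simp [hx0def, h]⟩
  have hv0V : multiQuadForm A x0 ∈ V := ⟨x0, hx0s, rfl⟩
  have hv0G : multiQuadForm A x0 ∈ G := ⟨x0, hx0s, hx0g, rfl⟩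
  -- boundedness
  set B : ℝ := ∑ i : (k : Fin d) → Fin (nn k), ∑ j : (k : Fin d) → Fin (nn k), |A i j|
    with hBdef
  have habs : ∀ v ∈ V, |v| ≤ B := by
    rintro v ⟨x, hx, rfl⟩
    have hx01 : ∀ k a, 0 ≤ x k a ∧ x k a ≤ 1 := by
      intro k a
      refine ⟨(hx k).1 a, ?_⟩
      have := Finset.single_le_sum (f := x k) (fun i _ => (hx k).1 i) (Finset.mem_univ a)
      rw [(hx k).2] at this
      exact this
    have hprod : ∀ i j : (k : Fin d) → Fin (nn k), |∏ k, (x k (i k) * x k (j k))| ≤ 1 := by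
      intro i j
      rw [Finset.abs_prod]
      apply Finset.prod_le_one
      · intro k _; exact abs_nonneg _
      · intro k _
        rw [abs_mul, abs_of_nonneg (hx01 k (i k)).1, abs_of_nonneg (hx01 k (j k)).1]
        exact mul_le_one₀ (hx01 k (i k)).2 (hx01 k (j k)).1 (hx01 k (j k)).2
    calc |multiQuadForm A x| ≤ ∑ i : (k : Fin d) → Fin (nn k),
          |∑ j : (k : Fin d) → Fin (nn k), A i j * ∏ k, (x k (i k) * x k (j k))| :=
        Finset.abs_sum_le_sum_abs _ _
      _ ≤ ∑ i : (k : Fin d) → Fin (nn k), ∑ j : (k : Fin d) → Fin (nn k),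
          |A i j * ∏ k, (x k (i k) * x k (j k))| :=
        Finset.sum_le_sum fun i _ => Finset.abs_sum_le_sum_abs _ _
      _ ≤ B := by
        rw [hBdef]
        refine Finset.sum_le_sum fun i _ => Finset.sum_le_sum fun j _ => ?_
        rw [abs_mul]
        calc |A i j| * |∏ k, (x k (i k) * x k (j k))| ≤ |A i j| * 1 :=
            mul_le_mul_of_nonneg_left (hprod i j) (abs_nonneg _)
          _ = |A i j| := mul_one _
  have hVbb : BddBelow V := ⟨-B, fun v hv => by have := habs v hv; cases abs_le.1 this; linarith⟩
  have hVba : BddAbove V := ⟨B, fun v hv => (abs_le.1 (habs v hv)).2⟩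
  have hGsub : G ⊆ V := by rintro v ⟨x, hx, _, rfl⟩; exact ⟨x, hx, rfl⟩
  have hGbb : BddBelow G := hVbb.mono hGsub
  set m : ℝ := sInf V with hmdef
  set M : ℝ := sSup V with hMdef
  have hm' : ∀ y : (k : Fin d) → Fin (nn k) → ℝ,
      (∀ l, y l ∈ stdSimplex ℝ (Fin (nn l))) → m ≤ multiQuadForm A y :=
    fun y hy => csInf_le hVbb ⟨y, hy, rfl⟩
  have hM' : ∀ y : (k : Fin d) → Fin (nn k) → ℝ,
      (∀ l, y l ∈ stdSimplex ℝ (Fin (nn l))) → multiQuadForm A y ≤ M :=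
    fun y hy => le_csSup hVba ⟨y, hy, rfl⟩
  have hmM : m ≤ M := le_trans (hm' x0 hx0s) (hM' x0 hx0s)
  set c : ℝ := ∑ k, 1/((r k:ℝ)+2) with hcdef
  have hkey : sInf G ≤ m + c * (M - m) := by
    apply le_of_forall_pos_le_add
    intro ε hε
    obtain ⟨v, hvV, hvlt⟩ := exists_lt_of_csInf_lt ⟨_, hv0V⟩
      (show sInf V < m + ε by rw [← hmdef]; linarith)
    obtain ⟨x, hxs, hveq⟩ := hvV
    obtain ⟨y, hys, hyg, hyval⟩ := round_blocks A r M m hM' hm' univ x hxs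
    have hyG : multiQuadForm A y ∈ G := ⟨y, hys, fun k a => hyg k (Finset.mem_univ k) a, rfl⟩
    have h1 : sInf G ≤ multiQuadForm A y := csInf_le hGbb hyG
    rw [hveq] at hvlt
    calc sInf G ≤ multiQuadForm A y := h1
      _ ≤ multiQuadForm A x + c * (M - m) := hyval
      _ ≤ (m + ε) + c * (M - m) := by linarith
      _ = m + c * (M - m) + ε := by ring
  have htau := tau_ratio hd r
  have hmul : c * (M - m) ≤ (tauCoeff r / ∏ k, ((r k : ℝ) + 2)) * (M - m) :=
    mul_le_mul_of_nonneg_right htau (by linarith)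
  linarith
end
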